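/- arXiv:1311.5121 — 7 statements merged into one kernel-verified Lean document; each statement's English description precedes it below -/
import Mathlib

section
/- Let p : ℝⁿ → [1,∞) be locally log-Hölder continuous with constant C and with p⁺ := sup p < ∞. Then for every m > 0 there exists c₁ > 0 depending only on m, C and p⁺ such that for every cube Q ⊂ ℝⁿ with side length ℓ(Q) ≤ 1, every x ∈ Q, and every f ∈ L¹(Q) with ⨍_Q |f| dy ≤ max{1, |Q|^{−m}}, one has (⨍_Q |f(y)| dy)^{p(x)} ≤ c₁ ⨍_Q |f(y)|^{p(y)} dy + c₁ |Q|^m. -/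
open MeasureTheory Set
open scoped ENNReal NNReal

noncomputable section

/-- The axis-parallel cube in `ℝⁿ` with lower corner `z` and side length `ℓ`. -/
def cube (n : ℕ) (z : Fin n → ℝ) (ℓ : ℝ) : Set (Fin n → ℝ) :=
  Set.Icc z (fun i => z i + ℓ)

/-- `p` is locally log-Hölder continuous with constant `C`. -/
def LogHolder (n : ℕ) (C : ℝ) (p : (Fin n → ℝ) → ℝ) : Prop :=
  ∀ x y : Fin n → ℝ, x ≠ y →
    |p x - p y| ≤ C / Real.log (Real.exp 1 + 1 / ‖x - y‖)

lemma jensen_aux {α : Type*} [MeasurableSpace α] (μ : Measure α) (g : α → ℝ)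
    (hg : AEMeasurable g μ) (hg0 : ∀ y, 0 ≤ g y) {q : ℝ} (hq : 1 ≤ q)
    (hW : μ Set.univ ≠ 0) (hW' : μ Set.univ ≠ ⊤) :
    ((∫⁻ y, ENNReal.ofReal (g y) ∂μ) / μ Set.univ) ^ q ≤
      (∫⁻ y, ENNReal.ofReal (g y) ^ q ∂μ) / μ Set.univ := by
  have hq0 : 0 < q := lt_of_lt_of_le one_pos hq
  set W := μ Set.univ with hWdef
  set L := ∫⁻ y, ENNReal.ofReal (g y) ∂μ with hL
  set X := ∫⁻ y, ENNReal.ofReal (g y) ^ q ∂μ with hX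
  have hnn : ∀ y, (‖g y‖₊ : ℝ≥0∞) = ENNReal.ofReal (g y) := by
    intro y
    rw [← enorm_eq_nnnorm, ← ofReal_norm, Real.norm_eq_abs, abs_of_nonneg (hg0 y)]
  have h1 : eLpNorm g 1 μ = L := by
    rw [eLpNorm_one_eq_lintegral_enorm]
    exact lintegral_congr fun y => hnn y
  have hq' : (ENNReal.ofReal q) ≠ 0 := by
    simp [ENNReal.ofReal_eq_zero, not_le, hq0]
  have hqt : (ENNReal.ofReal q).toReal = q := ENNReal.toReal_ofReal hq0.le
  have h2 : eLpNorm g (ENNReal.ofReal q) μ = X ^ (1 / q) := by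
    rw [eLpNorm_eq_lintegral_rpow_enorm_toReal hq' ENNReal.ofReal_ne_top, hqt]
    congr 1
    exact lintegral_congr fun y => by rw [enorm_eq_nnnorm, hnn y]
  have hle : L ≤ X ^ (1 / q) * W ^ (1 - 1 / q) := by
    have := eLpNorm_le_eLpNorm_mul_rpow_measure_univ
      (p := 1) (q := ENNReal.ofReal q)
      (by simpa using ENNReal.one_le_ofReal.2 hq) hg.aestronglyMeasurable (μ := μ)
    rw [h1, h2, hqt] at this
    simpa using this
  have hle2 : L ^ q ≤ X * W ^ (q - 1) := by
    calc L ^ q ≤ (X ^ (1/q) * W ^ (1 - 1/q)) ^ q :=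
          ENNReal.rpow_le_rpow hle hq0.le
      _ = X * W ^ (q - 1) := by
          rw [ENNReal.mul_rpow_of_nonneg _ _ hq0.le, ← ENNReal.rpow_mul, ← ENNReal.rpow_mul,
            one_div_mul_cancel hq0.ne', sub_mul, one_div_mul_cancel hq0.ne', one_mul,
            ENNReal.rpow_one]
  calc (L / W) ^ q = L ^ q / W ^ q := ENNReal.div_rpow_of_nonneg _ _ hq0.le
    _ ≤ X * W ^ (q - 1) / W ^ q := by gcongr
    _ = X / W := by
        rw [mul_div_assoc, ← ENNReal.rpow_sub _ _ hW hW']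
        norm_num
        rw [ENNReal.rpow_neg_one, ENNReal.div_eq_inv_mul, mul_comm]

/-- The key estimate for variable exponents: if `p : ℝⁿ → [1,∞)` is locally log-Hölder
continuous with constant `C` and `p⁺ := sup p < ∞`, then for every `m > 0` there is
`c₁ = c₁(m, C, p⁺) > 0` such that for every cube `Q` with `ℓ(Q) ≤ 1`, every `x ∈ Q` and
every `f ∈ L¹(Q)` with `⨍_Q |f| ≤ max {1, |Q|^{-m}}` one has
`(⨍_Q |f|)^(p x) ≤ c₁ ⨍_Q |f(y)|^(p y) dy + c₁ |Q|^m`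
(the right-hand side average is taken as a lower Lebesgue integral in `[0,∞]`). -/
theorem key_estimate (n : ℕ) (C pplus m : ℝ) (hm : 0 < m) :
    ∃ c₁ : ℝ, 0 < c₁ ∧
      ∀ p : (Fin n → ℝ) → ℝ, Measurable p →
        (∀ x, 1 ≤ p x) → (∀ x, p x ≤ pplus) → LogHolder n C p →
        ∀ (z : Fin n → ℝ) (ℓ : ℝ), 0 < ℓ → ℓ ≤ 1 →
          ∀ f : (Fin n → ℝ) → ℝ, IntegrableOn f (cube n z ℓ) →
            (⨍ y in cube n z ℓ, |f y|) ≤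
              max 1 ((volume (cube n z ℓ)).toReal ^ (-m)) →
            ∀ x ∈ cube n z ℓ,
              ENNReal.ofReal ((⨍ y in cube n z ℓ, |f y|) ^ p x) ≤
                ENNReal.ofReal c₁ *
                  ((∫⁻ y in cube n z ℓ, ENNReal.ofReal (|f y| ^ p y)) /
                    volume (cube n z ℓ)) +
                ENNReal.ofReal c₁ *
                  ENNReal.ofReal ((volume (cube n z ℓ)).toReal ^ m) := by
  set P : ℝ := max pplus 1 with hP
  set K₁ : ℝ := Real.exp (n * m * max C 0) with hK₁
  have hK₁1 : 1 ≤ K₁ := Real.one_le_exp (by positivity)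
  refine ⟨(2 : ℝ) ^ P * (2 * K₁ + 1), by positivity, ?_⟩
  intro p hpm hp1 hpP hLH z ℓ hℓ0 hℓ1 f hf hfavg x hx
  set Q := cube n z ℓ with hQ
  have hQmeas : MeasurableSet Q := measurableSet_Icc
  have hℓn0 : (0:ℝ) < ℓ ^ n := by positivity
  have hℓn1 : ℓ ^ n ≤ 1 := pow_le_one₀ hℓ0.le hℓ1
  have hV : volume Q = ENNReal.ofReal (ℓ ^ n) := by
    rw [hQ]
    unfold cube
    rw [Real.volume_Icc_pi]
    simp [ENNReal.ofReal_pow hℓ0.le]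
  have hVtoReal : (volume Q).toReal = ℓ ^ n := by
    rw [hV, ENNReal.toReal_ofReal hℓn0.le]
  have hV0 : volume Q ≠ 0 := by
    rw [hV]; simp [ENNReal.ofReal_eq_zero, not_le, hℓn0]
  have hVtop : volume Q ≠ ⊤ := by rw [hV]; exact ENNReal.ofReal_ne_top
  have hQne : Q.Nonempty := ⟨z, le_refl z, fun i => by dsimp; linarith⟩
  set q : ℝ := sInf (p '' Q) with hq
  have hbdd : BddBelow (p '' Q) := ⟨1, by rintro _ ⟨y, _, rfl⟩; exact hp1 y⟩
  have hq1 : 1 ≤ q := le_csInf (hQne.image p) (by rintro _ ⟨y, _, rfl⟩; exact hp1 y)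
  have hqle : ∀ w ∈ Q, q ≤ p w := fun w hw => csInf_le hbdd ⟨w, hw, rfl⟩
  -- the key log-Hölder bound
  have key : ∀ w ∈ Q, ((ℓ ^ n : ℝ)) ^ (-(m * (p w - q))) ≤ K₁ := by
    intro w hw
    rcases Nat.eq_zero_or_pos n with hn | hn
    · subst hn
      have hsub : Subsingleton (Fin 0 → ℝ) := ⟨fun a b => funext fun i => absurd i.2 (by simp)⟩
      have hqw : q = p w := by
        refine le_antisymm (hqle w hw) (le_csInf (hQne.image p) ?_)
        rintro _ ⟨y, _, rfl⟩
        rw [hsub.elim w y]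
      rw [hqw]
      simp only [sub_self, mul_zero, neg_zero, Real.rpow_zero]
      exact hK₁1
    · haveI : Nonempty (Fin n) := Fin.pos_iff_nonempty.mp hn
      have hC0 : 0 ≤ C := by
        have hne : (0 : Fin n → ℝ) ≠ 1 := by
          intro h
          have := congrFun h ⟨0, hn⟩
          norm_num at this
        have h := hLH 0 1 hne
        have hnorm : ‖(0 : Fin n → ℝ) - 1‖ = 1 := by
          rw [zero_sub, norm_neg, norm_one]
        rw [hnorm] at h
        have hlog : 0 < Real.log (Real.exp 1 + 1 / 1) := by
          apply Real.log_pos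
          have := Real.exp_pos 1
          linarith
        have h0 : 0 ≤ C / Real.log (Real.exp 1 + 1 / 1) := le_trans (abs_nonneg _) h
        by_contra hC
        push_neg at hC
        have : C / Real.log (Real.exp 1 + 1 / 1) < 0 := div_neg_of_neg_of_pos hC hlog
        linarith
      set Lg : ℝ := Real.log (Real.exp 1 + 1 / ℓ) with hLg
      have hLg1 : 1 ≤ Lg := by
        have hh : Real.exp 1 ≤ Real.exp 1 + 1 / ℓ := by
          have : 0 < 1 / ℓ := by positivity
          linarith
        have h := Real.log_le_log (Real.exp_pos 1) hh
        rw [Real.log_exp] at h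
        exact le_trans (le_of_eq rfl) (by rw [hLg]; exact h)
      have hLgpos : 0 < Lg := lt_of_lt_of_le one_pos hLg1
      have hdist : ∀ a ∈ Q, ∀ b ∈ Q, ‖a - b‖ ≤ ℓ := by
        intro a ha b hb
        rw [pi_norm_le_iff_of_nonneg hℓ0.le]
        intro i
        rw [Pi.sub_apply, Real.norm_eq_abs, abs_le]
        have h1 := ha.1 i
        have h2 := ha.2 i
        have h3 := hb.1 i
        have h4 := hb.2 i
        dsimp at h2 h4
        constructor <;> linarith
      have hdelta : p w - q ≤ C / Lg := by
        have hstep : p w - C / Lg ≤ q := by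
          refine le_csInf (hQne.image p) ?_
          rintro _ ⟨y, hy, rfl⟩
          by_cases hwy : w = y
          · subst hwy
            have : 0 ≤ C / Lg := by positivity
            linarith
          · have hcalc : p w - p y ≤ C / Lg := by
              calc p w - p y ≤ |p w - p y| := le_abs_self _
                _ ≤ C / Real.log (Real.exp 1 + 1 / ‖w - y‖) := hLH w y hwy
                _ ≤ C / Lg := by
                    have hny : 0 < ‖w - y‖ := norm_pos_iff.mpr (sub_ne_zero.mpr hwy)
                    have h1 : Lg ≤ Real.log (Real.exp 1 + 1 / ‖w - y‖) := by
                      rw [hLg]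
                      apply Real.log_le_log
                      · have := Real.exp_pos 1; positivity
                      · have h2 : 1 / ℓ ≤ 1 / ‖w - y‖ :=
                          one_div_le_one_div_of_le hny (hdist w hw y hy)
                        linarith
                    gcongr
            linarith
        linarith
      have he0 : 0 ≤ p w - q := sub_nonneg.mpr (hqle w hw)
      have hlogℓ : 0 ≤ -Real.log ℓ := by
        have := Real.log_nonpos hℓ0.le hℓ1
        linarith
      have hloglog : -Real.log ℓ ≤ Lg := by
        have heq : -Real.log ℓ = Real.log (1 / ℓ) := by
          rw [Real.log_div one_ne_zero hℓ0.ne', Real.log_one]; ring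
        rw [heq, hLg]
        apply Real.log_le_log (by positivity)
        have := Real.exp_pos 1
        linarith
      have hkey : (p w - q) * (-Real.log ℓ) ≤ C := by
        calc (p w - q) * (-Real.log ℓ) ≤ (C / Lg) * (-Real.log ℓ) :=
              mul_le_mul_of_nonneg_right hdelta hlogℓ
          _ ≤ (C / Lg) * Lg :=
              mul_le_mul_of_nonneg_left hloglog (by positivity)
          _ = C := div_mul_cancel₀ C hLgpos.ne'
      rw [Real.rpow_def_of_pos hℓn0, Real.log_pow, hK₁, max_eq_left hC0, Real.exp_le_exp]
      have heq2 : (n : ℝ) * Real.log ℓ * -(m * (p w - q)) =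
          (n : ℝ) * m * ((p w - q) * (-Real.log ℓ)) := by ring
      rw [heq2]
      exact mul_le_mul_of_nonneg_left hkey (by positivity)
  -- average facts
  set A : ℝ := ⨍ y in Q, |f y| with hA
  have hA0 : 0 ≤ A := by
    rw [hA, setAverage_eq]
    have : 0 ≤ ∫ y in Q, |f y| := integral_nonneg fun y => abs_nonneg _
    positivity
  set L : ℝ≥0∞ := ∫⁻ y in Q, ENNReal.ofReal (|f y|) with hLdef
  have hAL : ENNReal.ofReal A = L / volume Q := by
    rw [hA, setAverage_eq, smul_eq_mul, measureReal_def, ENNReal.ofReal_mul (by positivity), hLdef,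
      ← ofReal_integral_eq_lintegral_ofReal hf.abs
        (Filter.Eventually.of_forall fun y => abs_nonneg _),
      ENNReal.ofReal_inv_of_pos (by rw [hVtoReal]; exact hℓn0), ENNReal.ofReal_toReal hVtop,
      ENNReal.div_eq_inv_mul]
  -- splitting of |f|
  set g₁ : (Fin n → ℝ) → ℝ := fun y => if 1 < |f y| then |f y| else 0 with hg₁def
  set g₂ : (Fin n → ℝ) → ℝ := fun y => if 1 < |f y| then 0 else |f y| with hg₂def
  have hg₁0 : ∀ y, 0 ≤ g₁ y := by
    intro y; rw [hg₁def]; dsimp only; split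
    · exact abs_nonneg _
    · exact le_refl 0
  have hg₂0 : ∀ y, 0 ≤ g₂ y := by
    intro y; rw [hg₂def]; dsimp only; split
    · exact le_refl 0
    · exact abs_nonneg _
  have hg₂1 : ∀ y, g₂ y ≤ 1 := by
    intro y; rw [hg₂def]; dsimp only; split
    · exact zero_le_one
    · next h => push_neg at h; exact h
  have hg₁f : ∀ y, g₁ y ≤ |f y| := by
    intro y; rw [hg₁def]; dsimp only; split
    · exact le_refl _
    · exact abs_nonneg _
  have hg₂f : ∀ y, g₂ y ≤ |f y| := by
    intro y; rw [hg₂def]; dsimp only; split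
    · exact abs_nonneg _
    · exact le_refl _
  have hsum : ∀ y, |f y| = g₁ y + g₂ y := by
    intro y; rw [hg₁def, hg₂def]; dsimp only; split <;> ring
  have habs : AEMeasurable (fun y => |f y|) (volume.restrict Q) :=
    continuous_abs.measurable.comp_aemeasurable hf.aestronglyMeasurable.aemeasurable
  have hφ : Measurable (fun t : ℝ => if 1 < t then t else 0) :=
    Measurable.ite (measurableSet_lt measurable_const measurable_id) measurable_id
      measurable_const
  have hψ : Measurable (fun t : ℝ => if 1 < t then 0 else t) :=
    Measurable.ite (measurableSet_lt measurable_const measurable_id) measurable_const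
      measurable_id
  have hg₁m : AEMeasurable g₁ (volume.restrict Q) := hφ.comp_aemeasurable habs
  have hg₂m : AEMeasurable g₂ (volume.restrict Q) := hψ.comp_aemeasurable habs
  set L₁ : ℝ≥0∞ := ∫⁻ y in Q, ENNReal.ofReal (g₁ y) with hL₁def
  set L₂ : ℝ≥0∞ := ∫⁻ y in Q, ENNReal.ofReal (g₂ y) with hL₂def
  have hog₁ : AEMeasurable (fun y => ENNReal.ofReal (g₁ y)) (volume.restrict Q) :=
    ENNReal.measurable_ofReal.comp_aemeasurable hg₁m
  have hLsum : L = L₁ + L₂ := by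
    rw [hLdef, hL₁def, hL₂def, ← lintegral_add_left' hog₁]
    apply lintegral_congr
    intro y
    rw [hsum y, ENNReal.ofReal_add (hg₁0 y) (hg₂0 y)]
  set I : ℝ≥0∞ := ∫⁻ y in Q, ENNReal.ofReal (|f y| ^ p y) with hIdef
  set J : ℝ≥0∞ := I / volume Q with hJdef
  have hpx1 : 1 ≤ p x := hp1 x
  have hpxq : q ≤ p x := hqle x hx
  have hpxP : p x ≤ P := le_trans (hpP x) (le_max_left _ _)
  set B : ℝ := (ℓ ^ n) ^ m with hB
  have hB0 : 0 < B := Real.rpow_pos_of_pos hℓn0 m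
  have hB1 : B ≤ 1 := Real.rpow_le_one hℓn0.le hℓn1 hm.le
  have hμuniv : (volume.restrict Q) Set.univ = volume Q := Measure.restrict_apply_univ Q
  -- Term 1
  have T1 : (L₁ / volume Q) ^ (p x) ≤ ENNReal.ofReal K₁ * J := by
    have hsplit : (L₁ / volume Q) ^ (p x) =
        (L₁ / volume Q) ^ (p x - q) * (L₁ / volume Q) ^ q := by
      rw [← ENNReal.rpow_add_of_nonneg _ _ (sub_nonneg.mpr hpxq) (le_trans zero_le_one hq1),
        sub_add_cancel]
    rw [hsplit]
    have factor1 : (L₁ / volume Q) ^ (p x - q) ≤ ENNReal.ofReal K₁ := by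
      have hbase : L₁ / volume Q ≤ ENNReal.ofReal (max 1 ((ℓ ^ n) ^ (-m))) := by
        have h1 : L₁ ≤ L := by
          rw [hL₁def, hLdef]
          exact lintegral_mono fun y => ENNReal.ofReal_le_ofReal (hg₁f y)
        calc L₁ / volume Q ≤ L / volume Q := by gcongr
          _ = ENNReal.ofReal A := hAL.symm
          _ ≤ ENNReal.ofReal (max 1 ((ℓ ^ n) ^ (-m))) := by
              apply ENNReal.ofReal_le_ofReal
              rw [← hVtoReal]
              exact hfavg
      calc (L₁ / volume Q) ^ (p x - q)
          ≤ (ENNReal.ofReal (max 1 ((ℓ ^ n) ^ (-m)))) ^ (p x - q) :=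
            ENNReal.rpow_le_rpow hbase (sub_nonneg.mpr hpxq)
        _ = ENNReal.ofReal ((max 1 ((ℓ ^ n) ^ (-m))) ^ (p x - q)) :=
            ENNReal.ofReal_rpow_of_nonneg (le_trans zero_le_one (le_max_left _ _))
              (sub_nonneg.mpr hpxq)
        _ ≤ ENNReal.ofReal K₁ := by
            apply ENNReal.ofReal_le_ofReal
            rcases max_cases (1:ℝ) ((ℓ ^ n) ^ (-m)) with ⟨hmax, _⟩ | ⟨hmax, _⟩ <;> rw [hmax]
            · rw [Real.one_rpow]; exact hK₁1
            · rw [← Real.rpow_mul hℓn0.le]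
              have heq : -m * (p x - q) = -(m * (p x - q)) := by ring
              rw [heq]
              exact key x hx
    have factor2 : (L₁ / volume Q) ^ q ≤ J := by
      have hjen := jensen_aux (volume.restrict Q) g₁ hg₁m hg₁0 hq1
        (by rw [hμuniv]; exact hV0) (by rw [hμuniv]; exact hVtop)
      rw [hμuniv] at hjen
      refine le_trans hjen ?_
      rw [hJdef]
      refine ENNReal.div_le_div_right (lintegral_mono_ae ?_) _
      filter_upwards [ae_restrict_mem hQmeas] with y hy
      rw [ENNReal.ofReal_rpow_of_nonneg (hg₁0 y) (le_trans zero_le_one hq1)]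
      apply ENNReal.ofReal_le_ofReal
      rw [hg₁def]; dsimp only
      split
      · next h => exact Real.rpow_le_rpow_of_exponent_le h.le (hqle y hy)
      · rw [Real.zero_rpow (by positivity : q ≠ 0)]
        exact Real.rpow_nonneg (abs_nonneg _) _
    exact mul_le_mul' factor1 factor2
  -- Term 2
  have T2 : (L₂ / volume Q) ^ (p x) ≤ ENNReal.ofReal K₁ * J + ENNReal.ofReal B := by
    have hbase2 : L₂ / volume Q ≤ 1 := by
      rw [ENNReal.div_le_iff hV0 hVtop, one_mul, hL₂def]
      calc ∫⁻ y in Q, ENNReal.ofReal (g₂ y)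
          ≤ ∫⁻ _ in Q, 1 :=
            lintegral_mono fun y => ENNReal.ofReal_le_one.mpr (hg₂1 y)
        _ = volume Q := by rw [setLIntegral_one]
    have step1 : (L₂ / volume Q) ^ (p x) ≤ (L₂ / volume Q) ^ q :=
      ENNReal.rpow_le_rpow_of_exponent_ge hbase2 hpxq
    have hjen := jensen_aux (volume.restrict Q) g₂ hg₂m hg₂0 hq1
      (by rw [hμuniv]; exact hV0) (by rw [hμuniv]; exact hVtop)
    rw [hμuniv] at hjen
    refine le_trans step1 (le_trans hjen ?_)
    have hptw : ∀ y ∈ Q, ENNReal.ofReal (g₂ y) ^ q ≤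
        ENNReal.ofReal K₁ * ENNReal.ofReal (|f y| ^ p y) + ENNReal.ofReal B := by
      intro y hy
      rw [ENNReal.ofReal_rpow_of_nonneg (hg₂0 y) (le_trans zero_le_one hq1),
        ← ENNReal.ofReal_mul (le_trans zero_le_one hK₁1),
        ← ENNReal.ofReal_add (by positivity) hB0.le]
      apply ENNReal.ofReal_le_ofReal
      set t := g₂ y with ht
      by_cases hcase : t ≤ B
      · have h1 : t ^ q ≤ B ^ q :=
          Real.rpow_le_rpow (hg₂0 y) hcase (le_trans zero_le_one hq1)
        have h2 : B ^ q ≤ B ^ (1:ℝ) := Real.rpow_le_rpow_of_exponent_ge hB0 hB1 hq1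
        rw [Real.rpow_one] at h2
        have h3 : 0 ≤ K₁ * |f y| ^ p y := by positivity
        linarith
      · push_neg at hcase
        have ht0 : 0 < t := lt_trans hB0 hcase
        have h1 : t ^ q = t ^ (p y) * t ^ (q - p y) := by
          rw [← Real.rpow_add ht0]
          congr 1
          ring
        have h2 : t ^ (q - p y) ≤ B ^ (q - p y) :=
          Real.rpow_le_rpow_of_nonpos hB0 hcase.le (sub_nonpos.mpr (hqle y hy))
        have h3 : B ^ (q - p y) ≤ K₁ := by
          rw [hB, ← Real.rpow_mul hℓn0.le]
          have heq : m * (q - p y) = -(m * (p y - q)) := by ring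
          rw [heq]
          exact key y hy
        have h4 : t ^ (p y) ≤ |f y| ^ (p y) :=
          Real.rpow_le_rpow (hg₂0 y) (hg₂f y) (by linarith [hp1 y])
        have h5 : 0 ≤ t ^ (p y) := Real.rpow_nonneg (hg₂0 y) _
        have h6 : t ^ q ≤ K₁ * t ^ (p y) := by
          rw [h1]
          calc t ^ (p y) * t ^ (q - p y) ≤ t ^ (p y) * K₁ :=
              mul_le_mul_of_nonneg_left (le_trans h2 h3) h5
            _ = K₁ * t ^ (p y) := mul_comm _ _
        have h7 : K₁ * t ^ (p y) ≤ K₁ * |f y| ^ (p y) :=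
          mul_le_mul_of_nonneg_left h4 (by linarith)
        linarith [hB0.le]
    calc (∫⁻ y, ENNReal.ofReal (g₂ y) ^ q ∂(volume.restrict Q)) / volume Q
        ≤ (∫⁻ y, (ENNReal.ofReal K₁ * ENNReal.ofReal (|f y| ^ p y) + ENNReal.ofReal B)
            ∂(volume.restrict Q)) / volume Q := by
          refine ENNReal.div_le_div_right (lintegral_mono_ae ?_) _
          filter_upwards [ae_restrict_mem hQmeas] with y hy
          exact hptw y hy
      _ = (ENNReal.ofReal K₁ * I + ENNReal.ofReal B * volume Q) / volume Q := by
          congr 1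
          rw [lintegral_add_right' _ aemeasurable_const,
            lintegral_const_mul' _ _ ENNReal.ofReal_ne_top, lintegral_const, hμuniv, hIdef]
      _ = ENNReal.ofReal K₁ * J + ENNReal.ofReal B := by
          rw [ENNReal.add_div, hJdef, mul_div_assoc, mul_div_assoc,
            ENNReal.div_self hV0 hVtop, mul_one]
  -- final assembly
  have main : ENNReal.ofReal (A ^ p x) ≤
      (2:ℝ≥0∞) ^ P * (ENNReal.ofReal K₁ * J + (ENNReal.ofReal K₁ * J + ENNReal.ofReal B)) := by
    rw [← ENNReal.ofReal_rpow_of_nonneg hA0 (by linarith), hAL, hLsum, ENNReal.add_div]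
    have hmax : L₁ / volume Q + L₂ / volume Q ≤
        2 * max (L₁ / volume Q) (L₂ / volume Q) := by
      rw [two_mul]
      exact add_le_add (le_max_left _ _) (le_max_right _ _)
    calc (L₁ / volume Q + L₂ / volume Q) ^ p x
        ≤ (2 * max (L₁ / volume Q) (L₂ / volume Q)) ^ p x :=
          ENNReal.rpow_le_rpow hmax (by linarith)
      _ = 2 ^ p x * (max (L₁ / volume Q) (L₂ / volume Q)) ^ p x :=
          ENNReal.mul_rpow_of_nonneg _ _ (by linarith)
      _ ≤ 2 ^ P * ((L₁ / volume Q) ^ p x + (L₂ / volume Q) ^ p x) := by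
          apply mul_le_mul'
          · exact ENNReal.rpow_le_rpow_of_exponent_le one_le_two hpxP
          · rcases max_cases (L₁ / volume Q) (L₂ / volume Q) with ⟨hm', _⟩ | ⟨hm', _⟩ <;>
              rw [hm']
            · exact le_add_of_nonneg_right zero_le
            · exact le_add_of_nonneg_left zero_le
      _ ≤ 2 ^ P * (ENNReal.ofReal K₁ * J + (ENNReal.ofReal K₁ * J + ENNReal.ofReal B)) :=
          mul_le_mul' (le_refl _) (add_le_add T1 T2)
  refine le_trans main ?_
  rw [hVtoReal, ← hB]
  have h2P : (2:ℝ≥0∞) ^ P = ENNReal.ofReal ((2:ℝ) ^ P) := by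
    rw [show ((2:ℝ≥0∞)) = ENNReal.ofReal (2:ℝ) by simp, ← ENNReal.ofReal_rpow_of_pos two_pos]
  have hsum2 : ENNReal.ofReal K₁ * J + (ENNReal.ofReal K₁ * J + ENNReal.ofReal B) ≤
      ENNReal.ofReal (2 * K₁ + 1) * (J + ENNReal.ofReal B) := by
    have e1 : ENNReal.ofReal (2 * K₁ + 1) = 2 * ENNReal.ofReal K₁ + 1 := by
      rw [ENNReal.ofReal_add (by linarith) zero_le_one, ENNReal.ofReal_mul two_pos.le,
        ENNReal.ofReal_ofNat, ENNReal.ofReal_one]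
    rw [e1]
    calc ENNReal.ofReal K₁ * J + (ENNReal.ofReal K₁ * J + ENNReal.ofReal B)
        = (2 * ENNReal.ofReal K₁) * J + ENNReal.ofReal B := by ring
      _ ≤ (2 * ENNReal.ofReal K₁ + 1) * J + (2 * ENNReal.ofReal K₁ + 1) * ENNReal.ofReal B := by
          gcongr
          · exact le_add_of_nonneg_right zero_le
          · exact le_mul_of_one_le_left zero_le (le_add_of_nonneg_left zero_le)
      _ = (2 * ENNReal.ofReal K₁ + 1) * (J + ENNReal.ofReal B) := by ring
  calc (2:ℝ≥0∞) ^ P * (ENNReal.ofReal K₁ * J + (ENNReal.ofReal K₁ * J + ENNReal.ofReal B))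
      ≤ (2:ℝ≥0∞) ^ P * (ENNReal.ofReal (2 * K₁ + 1) * (J + ENNReal.ofReal B)) := by gcongr
    _ = ENNReal.ofReal ((2:ℝ) ^ P * (2 * K₁ + 1)) * J +
        ENNReal.ofReal ((2:ℝ) ^ P * (2 * K₁ + 1)) * ENNReal.ofReal B := by
        rw [h2P, ← mul_assoc, ← ENNReal.ofReal_mul (Real.rpow_nonneg two_pos.le _), mul_add]
end
end

section
/- Let p : ℝⁿ → [1,∞) be locally log-Hölder continuous with constant C and with p⁺ := sup p < ∞. Then for every m > 0 there exists c > 0 depending only on m, C and p⁺ such that for every cube Q ⊂ ℝⁿ with side length ℓ(Q) ≤ 1, every a ≥ 0, every x ∈ Q, and every f ∈ L¹(Q) satisfying a + ⨍_Q |f| dy ≤ max{1, |Q|^{−m}}, one has φ_a(x, ⨍_Q |f| dy) ≤ c ⨍_Q φ_a(y, |f(y)|) dy + c |Q|^m. -/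
open MeasureTheory Set

noncomputable section

/-- The shifted function `φ_a(x,t) = ∫₀ᵗ p(x) (a+τ)^(p(x)-2) τ dτ` associated to
`φ(x,t) = t^(p x)`. -/
def phiShift (n : ℕ) (p : (Fin n → ℝ) → ℝ) (a : ℝ) (x : Fin n → ℝ) (t : ℝ) : ℝ :=
  ∫ τ in (0:ℝ)..t, p x * (a + τ) ^ (p x - 2) * τ


namespace ShiftedKeyAux

/-- The shifted integrand primitive with fixed exponent `r`. -/
def F (a r t : ℝ) : ℝ := ∫ τ in (0:ℝ)..t, r * (a + τ) ^ (r - 2) * τ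

lemma integrand_nonneg {a r : ℝ} (ha : 0 ≤ a) (hr : 0 ≤ r) {τ : ℝ} (hτ : 0 ≤ τ) :
    0 ≤ r * (a + τ) ^ (r - 2) * τ :=
  mul_nonneg (mul_nonneg hr (Real.rpow_nonneg (by linarith) _)) hτ

lemma integrand_le {a r t : ℝ} (ha : 0 ≤ a) (hr : 1 ≤ r) {τ : ℝ} (hτ : 0 ≤ τ) (hτt : τ ≤ t) :
    r * (a + τ) ^ (r - 2) * τ ≤ r * (a + t) ^ (r - 1) := by
  rcases eq_or_lt_of_le (show (0:ℝ) ≤ a + τ by linarith) with h0 | h0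
  · have hτ0 : τ = 0 := by linarith
    rw [hτ0, mul_zero]
    exact mul_nonneg (by linarith) (Real.rpow_nonneg (by linarith) _)
  · have h1 : (a+τ)^(r-1) = (a+τ)^(r-2) * (a+τ) := by
      rw [show r - 1 = (r-2) + 1 by ring, Real.rpow_add_one h0.ne']
    calc r * (a+τ)^(r-2) * τ = r * ((a+τ)^(r-2) * τ) := by ring
      _ ≤ r * (a+τ)^(r-1) := by
          rw [h1]
          exact mul_le_mul_of_nonneg_left
            (mul_le_mul_of_nonneg_left (by linarith) (Real.rpow_nonneg h0.le _)) (by linarith)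
      _ ≤ r * (a+t)^(r-1) :=
          mul_le_mul_of_nonneg_left
            (Real.rpow_le_rpow (by linarith) (by linarith) (by linarith)) (by linarith)

lemma intInt {a r t : ℝ} (ha : 0 ≤ a) (hr : 1 ≤ r) (ht : 0 ≤ t) :
    IntervalIntegrable (fun τ => r * (a + τ) ^ (r - 2) * τ) volume 0 t := by
  rw [intervalIntegrable_iff_integrableOn_Ioc_of_le ht]
  refine ⟨?_, ?_⟩
  · apply ContinuousOn.aestronglyMeasurable _ measurableSet_Ioc
    apply ContinuousOn.mul _ continuous_id.continuousOn
    apply ContinuousOn.mul continuousOn_const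
    apply ContinuousOn.rpow_const (continuous_const.add continuous_id).continuousOn
    intro τ hτ
    exact Or.inl (by have := hτ.1; simp only [Pi.add_apply, id_eq]; intro h; linarith)
  · apply HasFiniteIntegral.restrict_of_bounded (C := r * (a+t)^(r-1)) measure_Ioc_lt_top
    filter_upwards [ae_restrict_mem measurableSet_Ioc] with τ hτ
    rw [Real.norm_eq_abs, abs_of_nonneg (integrand_nonneg ha (by linarith) hτ.1.le)]
    exact integrand_le ha hr hτ.1.le hτ.2

lemma intInt' {a r s t : ℝ} (ha : 0 ≤ a) (hr : 1 ≤ r) (h0 : 0 ≤ s) (hst : s ≤ t) :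
    IntervalIntegrable (fun τ => r * (a + τ) ^ (r - 2) * τ) volume s t :=
  (intInt ha hr (h0.trans hst)).mono_set
    (by rw [Set.uIcc_of_le hst, Set.uIcc_of_le (h0.trans hst)]; exact Set.Icc_subset_Icc h0 le_rfl)

lemma F_nonneg {a r t : ℝ} (ha : 0 ≤ a) (hr : 0 ≤ r) (ht : 0 ≤ t) : 0 ≤ F a r t :=
  intervalIntegral.integral_nonneg ht fun _ hτ => integrand_nonneg ha hr hτ.1

lemma integrand_mono {a r : ℝ} (ha : 0 ≤ a) (hr : 1 ≤ r) :
    MonotoneOn (fun τ => r * (a + τ) ^ (r - 2) * τ) (Ici 0) := by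
  intro τ₁ h1 τ₂ h2 h12
  simp only [mem_Ici] at h1 h2
  simp only
  rcases eq_or_lt_of_le h1 with h0 | h0
  · rw [← h0, mul_zero]
    exact integrand_nonneg ha (by linarith) h2
  have k1 : 0 < a + τ₁ := by linarith
  have k2 : 0 < a + τ₂ := by linarith
  have e : ∀ τ : ℝ, 0 < a + τ → r * (a+τ)^(r-2) * τ = r * ((a+τ)^(r-1) * (τ / (a+τ))) := by
    intro τ hτ
    rw [show r-2 = (r-1) + (-1) by ring, Real.rpow_add hτ, Real.rpow_neg_one]
    field_simp
  rw [e τ₁ k1, e τ₂ k2]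
  apply mul_le_mul_of_nonneg_left _ (by linarith : (0:ℝ) ≤ r)
  apply mul_le_mul (Real.rpow_le_rpow k1.le (by linarith) (by linarith))
  · rw [div_le_div_iff₀ k1 k2]; nlinarith
  · positivity
  · exact Real.rpow_nonneg k2.le _

lemma F_adj {a r s t : ℝ} (ha : 0 ≤ a) (hr : 1 ≤ r) (h0 : 0 ≤ s) (hst : s ≤ t) :
    F a r t = F a r s + ∫ τ in s..t, r * (a + τ) ^ (r - 2) * τ := by
  rw [F, F, ← intervalIntegral.integral_add_adjacent_intervals (intInt ha hr h0) (intInt' ha hr h0 hst)]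

lemma F_mono {a r t₁ t₂ : ℝ} (ha : 0 ≤ a) (hr : 1 ≤ r) (h0 : 0 ≤ t₁) (h : t₁ ≤ t₂) :
    F a r t₁ ≤ F a r t₂ := by
  rw [F_adj ha hr h0 h]
  have : 0 ≤ ∫ τ in t₁..t₂, r * (a + τ) ^ (r - 2) * τ :=
    intervalIntegral.integral_nonneg h fun τ hτ => integrand_nonneg ha (by linarith) (h0.trans hτ.1)
  linarith

lemma support_line {a r tb s : ℝ} (ha : 0 ≤ a) (hr : 1 ≤ r) (htb : 0 ≤ tb) (hs : 0 ≤ s) :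
    F a r tb + (r * (a + tb) ^ (r - 2) * tb) * (s - tb) ≤ F a r s := by
  rcases le_total tb s with hc | hc
  · rw [F_adj ha hr htb hc]
    have hlow : (r * (a + tb) ^ (r - 2) * tb) * (s - tb) ≤
        ∫ τ in tb..s, r * (a + τ) ^ (r - 2) * τ := by
      have h := intervalIntegral.integral_mono_on hc intervalIntegrable_const
        (intInt' ha hr htb hc)
        (fun τ hτ => integrand_mono ha hr (mem_Ici.2 htb) (mem_Ici.2 (htb.trans hτ.1)) hτ.1)
      calc (r * (a + tb) ^ (r - 2) * tb) * (s - tb)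
          = r * (a + tb) ^ (r - 2) * ((s - tb) * tb) := by ring
        _ ≤ ∫ τ in tb..s, r * (a + τ) ^ (r - 2) * τ := by
            simpa [intervalIntegral.integral_const, smul_eq_mul] using h
    linarith
  · rw [F_adj ha hr hs hc]
    have hup : (∫ τ in s..tb, r * (a + τ) ^ (r - 2) * τ) ≤
        (r * (a + tb) ^ (r - 2) * tb) * (tb - s) := by
      have h := intervalIntegral.integral_mono_on hc (intInt' ha hr hs hc)
        intervalIntegrable_const
        (fun τ hτ => integrand_mono ha hr (mem_Ici.2 (hs.trans hτ.1)) (mem_Ici.2 htb) hτ.2)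
      calc (∫ τ in s..tb, r * (a + τ) ^ (r - 2) * τ)
          ≤ r * (a + tb) ^ (r - 2) * ((tb - s) * tb) := by
            simpa [intervalIntegral.integral_const, smul_eq_mul] using h
        _ = (r * (a + tb) ^ (r - 2) * tb) * (tb - s) := by ring
    nlinarith [hup]

lemma ptwise {a q r P E τ : ℝ} (hq : 1 ≤ q) (hr : 1 ≤ r) (hqP : q ≤ P) (hE : 0 ≤ E)
    (hτ : 0 ≤ τ) (hpos : 0 < a + τ) (hbd : (a + τ) ^ (q - r) ≤ E) :
    q * (a + τ) ^ (q - 2) * τ ≤ P * E * (r * (a + τ) ^ (r - 2) * τ) := by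
  have hP0 : (0:ℝ) ≤ P := le_trans (by linarith) hqP
  have hX : 0 ≤ (a + τ) ^ (r - 2) * τ := mul_nonneg (Real.rpow_nonneg hpos.le _) hτ
  have split : (a+τ)^(q-2) = (a+τ)^(q-r) * (a+τ)^(r-2) := by
    rw [← Real.rpow_add hpos]; congr 1; ring
  have h1 : q * (a+τ)^(q-2) * τ = q * ((a+τ)^(q-r) * ((a+τ)^(r-2) * τ)) := by rw [split]; ring
  rw [h1]
  have h2 : (a+τ)^(q-r) * ((a+τ)^(r-2)*τ) ≤ E * ((a+τ)^(r-2)*τ) :=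
    mul_le_mul_of_nonneg_right hbd hX
  calc q * ((a+τ)^(q-r) * ((a+τ)^(r-2)*τ)) ≤ P * (E * ((a+τ)^(r-2)*τ)) :=
        mul_le_mul hqP h2 (mul_nonneg (Real.rpow_nonneg hpos.le _) hX) hP0
    _ ≤ P*E*(r * (a+τ)^(r-2)*τ) := by nlinarith [mul_nonneg (mul_nonneg hP0 hE) hX]

lemma F_cmp {a r₁ r₂ P K t : ℝ} (ha : 0 ≤ a) (hr₁ : 1 ≤ r₁) (hr₂ : 1 ≤ r₂)
    (hP : r₁ ≤ P) (hK : 0 ≤ K) (ht : 0 ≤ t)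
    (hbd : ∀ τ, 0 < τ → τ ≤ t → (a + τ) ^ (r₁ - r₂) ≤ K) :
    F a r₁ t ≤ P * K * F a r₂ t := by
  rw [F, F, ← intervalIntegral.integral_const_mul]
  apply intervalIntegral.integral_mono_on ht (intInt ha hr₁ ht) ((intInt ha hr₂ ht).const_mul _)
  intro τ hτ
  rcases eq_or_lt_of_le hτ.1 with h0 | h0
  · rw [← h0]; simp
  · exact ptwise hr₁ hr₂ hP hK h0.le (by linarith) (hbd τ h0 hτ.2)

lemma F_split {a q r P E b s : ℝ} (ha : 0 ≤ a) (hq : 1 ≤ q) (hqP : q ≤ P)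
    (hr : 1 ≤ r) (hs : 0 ≤ s) (hb0 : 0 < b) (hb1 : b ≤ 1) (hE : 0 ≤ E)
    (hbd : ∀ τ, 0 < τ → b ≤ a + τ → (a + τ) ^ (q - r) ≤ E) :
    F a q s ≤ P * E * F a r s + P * b := by
  have hP0 : (0:ℝ) ≤ P := le_trans (by linarith) hqP
  set θ := min s (max (b - a) 0) with hθdef
  have hθ0 : 0 ≤ θ := le_min hs (le_max_right _ _)
  have hθs : θ ≤ s := min_le_left _ _
  have hθb : θ ≤ b := le_trans (min_le_right _ _) (max_le (by linarith) hb0.le)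
  rw [F_adj ha hq hθ0 hθs]
  have part1 : F a q θ ≤ P * b := by
    have hpt : ∀ τ ∈ Icc (0:ℝ) θ, q * (a + τ) ^ (q - 2) * τ ≤ P := by
      intro τ hτ
      rcases eq_or_lt_of_le hτ.1 with h0 | h0
      · rw [← h0, mul_zero]; exact hP0
      · have hτθ : τ ≤ max (b - a) 0 := hτ.2.trans (min_le_right _ _)
        have hba : τ ≤ b - a := by
          rcases max_cases (b - a) (0:ℝ) with ⟨he, _⟩ | ⟨he, hle⟩
          · rwa [he] at hτθ
          · rw [he] at hτθ; linarith
        have hab1 : a + τ ≤ 1 := by linarith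
        calc q * (a + τ) ^ (q - 2) * τ ≤ q * (a + τ) ^ (q - 1) :=
              integrand_le ha hq h0.le le_rfl
          _ ≤ q * 1 := mul_le_mul_of_nonneg_left
              (Real.rpow_le_one (by linarith) hab1 (by linarith)) (by linarith)
          _ ≤ P := by linarith
    have := intervalIntegral.integral_mono_on hθ0 (intInt ha hq hθ0)
      intervalIntegrable_const hpt
    rw [intervalIntegral.integral_const, smul_eq_mul, sub_zero] at this
    calc F a q θ ≤ θ * P := this
      _ ≤ P * b := by nlinarith
  have part2 : (∫ τ in θ..s, q * (a + τ) ^ (q - 2) * τ) ≤ P * E * F a r s := by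
    rcases eq_or_lt_of_le hθs with he | hlt
    · rw [he, intervalIntegral.integral_same]
      exact mul_nonneg (mul_nonneg hP0 hE) (F_nonneg ha (by linarith) hs)
    · have hθeq : θ = max (b - a) 0 := by
        rcases min_cases s (max (b - a) 0) with ⟨he, hle⟩ | ⟨he, _⟩
        · exfalso; rw [hθdef] at hlt; rw [he] at hlt; exact lt_irrefl _ hlt
        · exact he
      have haθ : b ≤ a + θ := by
        rw [hθeq]; rcases le_total (b - a) 0 with h | h
        · rw [max_eq_right h]; linarith
        · rw [max_eq_left h]; linarith
      have step : (∫ τ in θ..s, q * (a + τ) ^ (q - 2) * τ) ≤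
          ∫ τ in θ..s, P * E * (r * (a + τ) ^ (r - 2) * τ) := by
        apply intervalIntegral.integral_mono_on hθs (intInt' ha hq hθ0 hθs)
          ((intInt' ha hr hθ0 hθs).const_mul _)
        intro τ hτ
        rcases eq_or_lt_of_le (hθ0.trans hτ.1) with h0 | h0
        · rw [← h0]; simp
        · have hbτ : b ≤ a + τ := by linarith [hτ.1]
          exact ptwise hq hr hqP hE h0.le (by linarith) (hbd τ h0 hbτ)
      rw [intervalIntegral.integral_const_mul] at step
      have tail : (∫ τ in θ..s, r * (a + τ) ^ (r - 2) * τ) ≤ F a r s := by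
        rw [F_adj ha hr hθ0 hθs]
        have : 0 ≤ F a r θ := F_nonneg ha (by linarith) hθ0
        linarith
      calc (∫ τ in θ..s, q * (a + τ) ^ (q - 2) * τ)
          ≤ P * E * ∫ τ in θ..s, r * (a + τ) ^ (r - 2) * τ := step
        _ ≤ P * E * F a r s := mul_le_mul_of_nonneg_left tail (mul_nonneg hP0 hE)
  linarith

end ShiftedKeyAux

theorem shifted_key_estimate (n : ℕ) (C pplus m : ℝ) (hm : 0 < m) :
    ∃ c : ℝ, 0 < c ∧
      ∀ p : (Fin n → ℝ) → ℝ, Measurable p →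
        (∀ x, 1 ≤ p x) → (∀ x, p x ≤ pplus) → LogHolder n C p →
        ∀ (z : Fin n → ℝ) (ℓ : ℝ), 0 < ℓ → ℓ ≤ 1 →
          ∀ a : ℝ, 0 ≤ a →
          ∀ f : (Fin n → ℝ) → ℝ, IntegrableOn f (cube n z ℓ) →
            a + (⨍ y in cube n z ℓ, |f y|) ≤
              max 1 ((volume (cube n z ℓ)).toReal ^ (-m)) →
            ∀ x ∈ cube n z ℓ,
              ENNReal.ofReal (phiShift n p a x (⨍ y in cube n z ℓ, |f y|)) ≤
                ENNReal.ofReal c *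
                  ((∫⁻ y in cube n z ℓ, ENNReal.ofReal (phiShift n p a y |f y|)) /
                    volume (cube n z ℓ)) +
                ENNReal.ofReal c *
                  ENNReal.ofReal ((volume (cube n z ℓ)).toReal ^ m) := by
  classical
  set C' := max C 0 with hC'def
  set P := max pplus 1 with hPdef
  set E := Real.exp (2 * n * m * C') with hEdef
  have hC'0 : 0 ≤ C' := le_max_right _ _
  have hP1 : (1:ℝ) ≤ P := le_max_right _ _
  have hE1 : (1:ℝ) ≤ E := Real.one_le_exp
    (mul_nonneg (mul_nonneg (mul_nonneg (by norm_num) (Nat.cast_nonneg n)) hm.le) hC'0)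
  have hPE0 : (0:ℝ) < P * E := by nlinarith
  refine ⟨(P * E) ^ 2, pow_pos hPE0 2, ?_⟩
  intro p hp h1p hpP hLH z ℓ hℓ0 hℓ1 a ha f hf hsmall x hx
  set Q := cube n z ℓ with hQdef
  have hQmeas : MeasurableSet Q := measurableSet_Icc
  have hvol : volume Q = (ENNReal.ofReal ℓ) ^ n := by
    rw [hQdef, cube, Real.volume_Icc_pi]
    simp
  have hμ0 : volume Q ≠ 0 := by
    rw [hvol]
    exact pow_ne_zero _ (by simp only [ne_eq, ENNReal.ofReal_eq_zero, not_le]; linarith)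
  have hμtop : volume Q ≠ ⊤ := by rw [hvol]; exact ENNReal.pow_ne_top ENNReal.ofReal_ne_top
  set v := (volume Q).toReal with hvdef
  have hv : v = ℓ ^ n := by rw [hvdef, hvol, ENNReal.toReal_pow, ENNReal.toReal_ofReal hℓ0.le]
  have hv0 : 0 < v := by rw [hv]; positivity
  have hv1 : v ≤ 1 := by rw [hv]; exact pow_le_one₀ hℓ0.le hℓ1
  -- log-Hölder quantities
  set D := Real.log (Real.exp 1 + 1/ℓ) with hDdef
  have hD1 : 1 ≤ D := by
    rw [hDdef, Real.le_log_iff_exp_le (by positivity)]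
    have h1 : (0:ℝ) < 1/ℓ := by positivity
    linarith
  have hD0 : 0 < D := lt_of_lt_of_le one_pos hD1
  set ε := C' / D with hεdef
  have hε0 : 0 ≤ ε := div_nonneg hC'0 hD0.le
  set L := -Real.log ℓ with hLdef
  have hL0 : 0 ≤ L := by
    rw [hLdef]; linarith [Real.log_nonpos hℓ0.le hℓ1]
  have hεL : ε * L ≤ C' := by
    have hlog1 : L ≤ D := by
      rw [hLdef, hDdef]
      rcases le_or_gt (-Real.log ℓ) 0 with h | h
      · linarith
      · have he : -Real.log ℓ = Real.log (1/ℓ) := by rw [one_div, Real.log_inv]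
        rw [he]
        apply Real.log_le_log (by positivity)
        linarith [Real.exp_pos 1]
    calc ε * L ≤ ε * D := mul_le_mul_of_nonneg_left hlog1 hε0
      _ = C' := by rw [hεdef]; field_simp
  have hvm1 : v ^ m ≤ 1 := Real.rpow_le_one hv0.le hv1 hm.le
  have hvm0 : 0 < v ^ m := Real.rpow_pos_of_pos hv0 m
  have key : ∀ δ : ℝ, 0 ≤ δ → δ ≤ 2 * ε → (v ^ m) ^ (-δ) ≤ E := by
    intro δ hδ0 hδ2
    rw [Real.rpow_def_of_pos hvm0, hEdef]
    apply Real.exp_le_exp.mpr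
    rw [Real.log_rpow hv0, hv, Real.log_pow]
    have hstep : δ * L ≤ 2 * C' := by
      have h1 : δ * L ≤ 2 * (ε * L) := by nlinarith
      linarith
    have hn0 : (0:ℝ) ≤ (n:ℝ) := Nat.cast_nonneg n
    have hgoal : m * ((n:ℝ) * Real.log ℓ) * -δ = (m * (n:ℝ)) * (δ * L) := by
      rw [hLdef]; ring
    rw [hgoal]
    calc (m * (n:ℝ)) * (δ * L) ≤ (m * (n:ℝ)) * (2 * C') :=
          mul_le_mul_of_nonneg_left hstep (by positivity)
      _ = 2 * (n:ℝ) * m * C' := by ring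
  -- diameter bound
  have hdiam : ∀ y ∈ Q, |p x - p y| ≤ ε := by
    intro y hy
    rcases eq_or_ne x y with rfl | hne
    · simpa using hε0
    · have hxy0 : 0 < ‖x - y‖ := by
        rw [norm_pos_iff]
        exact sub_ne_zero.mpr hne
      have hxyℓ : ‖x - y‖ ≤ ℓ := by
        rw [pi_norm_le_iff_of_nonneg hℓ0.le]
        intro i
        have h1 : z i ≤ x i := hx.1 i
        have h2 : x i ≤ z i + ℓ := hx.2 i
        have h3 : z i ≤ y i := hy.1 i
        have h4 : y i ≤ z i + ℓ := hy.2 i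
        simp only [Pi.sub_apply, Real.norm_eq_abs]
        rw [abs_le]
        constructor <;> linarith
      have hlogpos : 0 < Real.log (Real.exp 1 + 1/‖x - y‖) := by
        apply Real.log_pos
        have h2 : (0:ℝ) < 1/‖x - y‖ := by positivity
        linarith [Real.add_one_le_exp (1:ℝ)]
      have step1 : |p x - p y| ≤ C' / Real.log (Real.exp 1 + 1/‖x - y‖) := by
        refine le_trans (hLH x y hne) ?_
        exact (div_le_div_iff_of_pos_right hlogpos).mpr (le_max_left C 0)
      have step2 : C' / Real.log (Real.exp 1 + 1/‖x - y‖) ≤ ε := by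
        rw [hεdef, hDdef]
        apply div_le_div_of_nonneg_left hC'0 hD0
        apply Real.log_le_log (by positivity)
        have := one_div_le_one_div_of_le hxy0 hxyℓ
        linarith
      exact step1.trans step2
  -- exponent q
  set q := max 1 (p x - ε) with hqdef
  have hq1 : 1 ≤ q := le_max_left _ _
  have hqpx : q ≤ p x := max_le (h1p x) (by linarith)
  have hpxP : p x ≤ P := (hpP x).trans (le_max_left _ _)
  have hqP : q ≤ P := hqpx.trans hpxP
  have hδε : p x - q ≤ ε := by
    have h := le_max_right 1 (p x - ε)
    rw [← hqdef] at h
    linarith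
  have hqy : ∀ y ∈ Q, q ≤ p y ∧ p y - q ≤ 2 * ε := by
    intro y hy
    have habs := hdiam y hy
    rw [abs_le] at habs
    have h := le_max_right 1 (p x - ε)
    rw [← hqdef] at h
    constructor
    · exact max_le (h1p y) (by linarith [habs.2])
    · linarith [habs.1]
  -- smallness
  have hMeq : max 1 (v ^ (-m)) = v ^ (-m) :=
    max_eq_right (Real.one_le_rpow_of_pos_of_le_one_of_nonpos hv0 hv1 (by linarith))
  set tb := ⨍ y in Q, |f y| with htbdef
  have haM : a + tb ≤ v ^ (-m) := by rw [← hMeq]; exact hsmall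
  have htb0 : 0 ≤ tb := by
    rw [htbdef, setAverage_eq]
    apply smul_nonneg (inv_nonneg.mpr ENNReal.toReal_nonneg)
    exact setIntegral_nonneg hQmeas fun y _ => abs_nonneg _
  have hfabs_int : IntegrableOn (fun y => |f y|) Q := hf.abs
  have hint_abs : ∫ y in Q, |f y| = tb * v := by
    rw [htbdef, setAverage_eq, smul_eq_mul, measureReal_def, ← hvdef]
    field_simp
  -- comparison at x
  have hbd1 : ∀ τ : ℝ, 0 < τ → τ ≤ tb → (a + τ) ^ (p x - q) ≤ E := by
    intro τ hτ0 hτtb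
    rcases le_or_gt (a + τ) 1 with hcase | hcase
    · exact le_trans (Real.rpow_le_one (by linarith) hcase (by linarith)) hE1
    · have step1 : (a+τ) ^ (p x - q) ≤ (a+τ) ^ ε := Real.rpow_le_rpow_of_exponent_le hcase.le hδε
      have step2 : (a+τ) ^ ε ≤ (v ^ (-m)) ^ ε := Real.rpow_le_rpow (by linarith) (by linarith) hε0
      have step3 : (v ^ (-m)) ^ ε = (v ^ m) ^ (-ε) := by
        rw [← Real.rpow_mul hv0.le, ← Real.rpow_mul hv0.le]
        congr 1; ring
      calc (a+τ) ^ (p x - q) ≤ (v ^ (-m)) ^ ε := step1.trans step2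
        _ = (v ^ m) ^ (-ε) := step3
        _ ≤ E := key ε hε0 (by linarith)
  have hmain1 : ShiftedKeyAux.F a (p x) tb ≤ P * E * ShiftedKeyAux.F a q tb :=
    ShiftedKeyAux.F_cmp ha (h1p x) hq1 hpxP (by linarith) htb0 hbd1
  -- split case on I
  set I := ∫⁻ y in Q, ENNReal.ofReal (phiShift n p a y |f y|) with hIdef
  have hc0 : (0:ℝ) < (P * E) ^ 2 := by positivity
  by_cases hItop : I = ⊤
  · have htop : ENNReal.ofReal ((P*E)^2) * (I / volume Q) = ⊤ := by
      rw [hItop, ENNReal.top_div_of_ne_top hμtop, ENNReal.mul_top]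
      simp only [ne_eq, ENNReal.ofReal_eq_zero, not_le]
      exact hc0
    rw [htop, top_add]
    exact le_top
  -- pointwise split bound
  have hbd3 : ∀ y ∈ Q, ∀ τ : ℝ, 0 < τ → v ^ m ≤ a + τ → (a+τ) ^ (q - p y) ≤ E := by
    intro y hy τ hτ0 hbτ
    obtain ⟨hqy1, hqy2⟩ := hqy y hy
    rcases le_or_gt 1 (a+τ) with hcase | hcase
    · exact le_trans (Real.rpow_le_one_of_one_le_of_nonpos hcase (by linarith)) hE1
    · have hpos : (0:ℝ) < a + τ := lt_of_lt_of_le hvm0 hbτ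
      have e1 : (a+τ) ^ (q - p y) = ((a+τ) ^ (p y - q))⁻¹ := by
        rw [← Real.rpow_neg hpos.le]; congr 1; ring
      have mono : (v^m) ^ (p y - q) ≤ (a+τ) ^ (p y - q) :=
        Real.rpow_le_rpow hvm0.le hbτ (by linarith)
      have pos2 : 0 < (v^m) ^ (p y - q) := Real.rpow_pos_of_pos hvm0 _
      rw [e1]
      calc ((a+τ) ^ (p y - q))⁻¹ ≤ ((v^m) ^ (p y - q))⁻¹ := inv_anti₀ pos2 mono
        _ = (v^m) ^ (-(p y - q)) := (Real.rpow_neg hvm0.le _).symm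
        _ ≤ E := key _ (by linarith) (by linarith)
  have hptsplit : ∀ y ∈ Q,
      ShiftedKeyAux.F a q |f y| ≤ P * E * phiShift n p a y |f y| + P * (v^m) := by
    intro y hy
    exact ShiftedKeyAux.F_split ha hq1 hqP (h1p y) (abs_nonneg _) hvm0 hvm1
      (by linarith) (hbd3 y hy)
  -- measurability of Gf
  set Gf := fun y => ShiftedKeyAux.F a q |f y| with hGfdef
  have hGf0 : ∀ y, 0 ≤ Gf y := fun y => ShiftedKeyAux.F_nonneg ha (by linarith) (abs_nonneg _)
  have hΦmono : Monotone (fun t : ℝ => ShiftedKeyAux.F a q (max t 0)) := by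
    intro t₁ t₂ hle
    exact ShiftedKeyAux.F_mono ha hq1 (le_max_right _ _) (max_le_max hle le_rfl)
  have hfae : AEMeasurable f (volume.restrict Q) := hf.aemeasurable
  have hGfae : AEMeasurable Gf (volume.restrict Q) := by
    have habs : AEMeasurable (fun y => |f y|) (volume.restrict Q) :=
      continuous_abs.measurable.comp_aemeasurable hfae
    have h := hΦmono.measurable.comp_aemeasurable habs
    refine h.congr (Filter.Eventually.of_forall fun y => ?_)
    simp only [Function.comp_apply, hGfdef, max_eq_left (abs_nonneg (f y))]
  -- lintegral bound for J
  set J := ∫⁻ y in Q, ENNReal.ofReal (Gf y) with hJdef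
  have hJle : J ≤ ENNReal.ofReal (P*E) * I + ENNReal.ofReal (P*(v^m)) * volume Q := by
    have mono1 : J ≤ ∫⁻ y in Q,
        (ENNReal.ofReal (P*E) * ENNReal.ofReal (phiShift n p a y |f y|)
          + ENNReal.ofReal (P*(v^m))) := by
      rw [hJdef]
      apply lintegral_mono_ae
      filter_upwards [ae_restrict_mem hQmeas] with y hy
      calc ENNReal.ofReal (Gf y)
          ≤ ENNReal.ofReal (P*E*phiShift n p a y |f y| + P*(v^m)) :=
            ENNReal.ofReal_le_ofReal (hptsplit y hy)
        _ ≤ ENNReal.ofReal (P*E*phiShift n p a y |f y|) + ENNReal.ofReal (P*(v^m)) :=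
            ENNReal.ofReal_add_le
        _ = ENNReal.ofReal (P*E) * ENNReal.ofReal (phiShift n p a y |f y|)
              + ENNReal.ofReal (P*(v^m)) := by
            rw [ENNReal.ofReal_mul (by positivity)]
    calc J ≤ _ := mono1
      _ = (∫⁻ y in Q, ENNReal.ofReal (P*E) * ENNReal.ofReal (phiShift n p a y |f y|))
            + ENNReal.ofReal (P*(v^m)) * volume Q := by
          rw [lintegral_add_right _ measurable_const, lintegral_const,
            Measure.restrict_apply_univ]
      _ = ENNReal.ofReal (P*E) * I + ENNReal.ofReal (P*(v^m)) * volume Q := by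
          rw [lintegral_const_mul' _ _ ENNReal.ofReal_ne_top, hIdef]
  have hJtop : J ≠ ⊤ := by
    apply ne_top_of_le_ne_top _ hJle
    exact ENNReal.add_ne_top.mpr
      ⟨ENNReal.mul_ne_top ENNReal.ofReal_ne_top hItop,
       ENNReal.mul_ne_top ENNReal.ofReal_ne_top hμtop⟩
  have hGfint : IntegrableOn Gf Q := by
    refine ⟨hGfae.aestronglyMeasurable, ?_⟩
    rw [hasFiniteIntegral_iff_ofReal (Filter.Eventually.of_forall hGf0)]
    exact lt_top_iff_ne_top.mpr (by rw [← hJdef] at *; exact hJtop)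
  -- Jensen via supporting line
  set k := q * (a + tb) ^ (q - 2) * tb with hkdef
  have hptJ : ∀ y, ShiftedKeyAux.F a q tb + k * (|f y| - tb) ≤ Gf y := fun y =>
    ShiftedKeyAux.support_line ha hq1 htb0 (abs_nonneg _)
  have hconst_int : IntegrableOn (fun _ : (Fin n → ℝ) => tb) Q :=
    (integrableOn_const_iff enorm_ne_top).mpr (Or.inr (lt_top_iff_ne_top.mpr hμtop))
  have hsub : Integrable (fun y => k * (|f y| - tb)) (volume.restrict Q) := by
    have h2 := (hfabs_int.sub hconst_int).const_mul k
    simpa [Pi.sub_apply] using h2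
  have hlin : Integrable (fun y => ShiftedKeyAux.F a q tb + k * (|f y| - tb))
      (volume.restrict Q) := by
    apply Integrable.add
    · exact (integrableOn_const_iff enorm_ne_top).mpr (Or.inr (lt_top_iff_ne_top.mpr hμtop))
    · exact hsub
  have hmono2 := integral_mono hlin hGfint hptJ
  have hLHScalc : ∫ y in Q, (ShiftedKeyAux.F a q tb + k * (|f y| - tb)) =
      ShiftedKeyAux.F a q tb * v := by
    rw [integral_add ((integrableOn_const_iff (C := ShiftedKeyAux.F a q tb) enorm_ne_top).mpr (Or.inr (lt_top_iff_ne_top.mpr hμtop))) hsub]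
    rw [integral_const, integral_const_mul, integral_sub hfabs_int hconst_int,
      integral_const, hint_abs, measureReal_def, Measure.restrict_apply_univ, ← hvdef]
    simp only [smul_eq_mul]
    ring
  rw [hLHScalc] at hmono2
  have hJen : ShiftedKeyAux.F a q tb ≤ (∫ y in Q, Gf y) / v := by
    rw [le_div_iff₀ hv0]
    exact hmono2
  have hGfJ : ∫ y in Q, Gf y = J.toReal := by
    rw [hJdef]
    exact integral_eq_lintegral_of_nonneg_ae (Filter.Eventually.of_forall hGf0)
      hGfae.aestronglyMeasurable
  -- final assembly
  have hreal : phiShift n p a x tb ≤ P * E * (J.toReal / v) := by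
    have : ShiftedKeyAux.F a q tb ≤ J.toReal / v := by rw [← hGfJ]; exact hJen
    calc phiShift n p a x tb = ShiftedKeyAux.F a (p x) tb := rfl
      _ ≤ P * E * ShiftedKeyAux.F a q tb := hmain1
      _ ≤ P * E * (J.toReal / v) := mul_le_mul_of_nonneg_left this hPE0.le
  calc ENNReal.ofReal (phiShift n p a x tb)
      ≤ ENNReal.ofReal (P * E * (J.toReal / v)) := ENNReal.ofReal_le_ofReal hreal
    _ = ENNReal.ofReal (P*E) * (J / volume Q) := by
        rw [ENNReal.ofReal_mul hPE0.le]
        congr 1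
        rw [div_eq_mul_inv, ENNReal.ofReal_mul ENNReal.toReal_nonneg,
          ENNReal.ofReal_inv_of_pos hv0, ENNReal.ofReal_toReal hJtop, hvdef,
          ENNReal.ofReal_toReal hμtop, div_eq_mul_inv]
    _ ≤ ENNReal.ofReal (P*E) *
          ((ENNReal.ofReal (P*E) * I + ENNReal.ofReal (P*(v^m)) * volume Q) / volume Q) := by
        exact mul_le_mul_right (ENNReal.div_le_div_right hJle _) _
    _ ≤ ENNReal.ofReal ((P*E)^2) * (I / volume Q)
          + ENNReal.ofReal ((P*E)^2) * ENNReal.ofReal (v^m) := by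
        rw [ENNReal.add_div, mul_add]
        apply add_le_add
        · apply le_of_eq
          rw [mul_div_assoc, ← mul_assoc, ← ENNReal.ofReal_mul hPE0.le, ← pow_two]
        · rw [mul_div_assoc, ENNReal.div_self hμ0 hμtop, mul_one,
            ← ENNReal.ofReal_mul hPE0.le,
            ← ENNReal.ofReal_mul (by positivity : (0:ℝ) ≤ (P*E)^2)]
          apply ENNReal.ofReal_le_ofReal
          have h1' : (0:ℝ) ≤ P*P*E := mul_nonneg (mul_nonneg (by linarith) (by linarith))
            (by linarith)
          calc P*E*(P*(v^m)) = (P*P*E)*(v^m) := by ring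
            _ ≤ ((P*P*E)*E)*(v^m) :=
                mul_le_mul_of_nonneg_right (le_mul_of_one_le_right h1' hE1) hvm0.le
            _ = (P*E)^2*(v^m) := by ring
end
end

section
/- Let p : ℝⁿ → [1,∞) be locally log-Hölder continuous with constant C and with p⁺ := sup p < ∞, and let m > 0. Then there exists c > 0 depending only on m, C and p⁺ such that for every cube Q ⊂ ℝⁿ with side length ℓ(Q) ≤ 1, every a with |Q|^m ≤ a ≤ |Q|^{−m}, every point y ∈ Q at which p attains its infimum over Q (i.e. p(y) = inf_Q p), every x ∈ Q, and every t ≥ 0, one has φ_a(y, t) ≤ c φ_a(x, t). -/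
open MeasureTheory Set

noncomputable section

/-- If `p : ℝⁿ → [1,∞)` is locally log-Hölder continuous with constant `C` and bounded by
`p⁺`, and `m > 0`, then there is `c = c(m, C, p⁺) > 0` such that for every cube `Q` with
`ℓ(Q) ≤ 1`, every `a` with `|Q|^m ≤ a ≤ |Q|^{-m}`, every `y ∈ Q` at which `p` attains its
infimum over `Q`, every `x ∈ Q` and every `t ≥ 0` one has `φ_a(y,t) ≤ c φ_a(x,t)`. -/
theorem phiShift_at_min_le (n : ℕ) (C pplus m : ℝ) (hm : 0 < m) :
    ∃ c : ℝ, 0 < c ∧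
      ∀ p : (Fin n → ℝ) → ℝ,
        (∀ x, 1 ≤ p x) → (∀ x, p x ≤ pplus) → LogHolder n C p →
        ∀ (z : Fin n → ℝ) (ℓ : ℝ), 0 < ℓ → ℓ ≤ 1 →
          ∀ a : ℝ, (volume (cube n z ℓ)).toReal ^ m ≤ a →
            a ≤ (volume (cube n z ℓ)).toReal ^ (-m) →
            ∀ y ∈ cube n z ℓ, (∀ x' ∈ cube n z ℓ, p y ≤ p x') →
              ∀ x ∈ cube n z ℓ, ∀ t : ℝ, 0 ≤ t →
                phiShift n p a y t ≤ c * phiShift n p a x t := by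
  refine ⟨Real.exp (n * m * |C|), Real.exp_pos _, ?_⟩
  intro p hp1 hpP hlog z ℓ hℓ0 hℓ1 a ha1 ha2 y hy hymin x hx t ht
  set E := Real.exp (↑n * m * |C|) with hE
  have hvol : (volume (cube n z ℓ)).toReal = ℓ ^ n := by
    rw [cube, Real.volume_Icc_pi_toReal (fun i =>
      (by linarith : z i ≤ z i + ℓ) : z ≤ fun i => z i + ℓ)]
    simp [Finset.prod_const]
  rw [hvol] at ha1
  have hpow0 : (0:ℝ) < (ℓ ^ n) ^ m := Real.rpow_pos_of_pos (pow_pos hℓ0 n) m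
  have ha0 : 0 < a := lt_of_lt_of_le hpow0 ha1
  have hxy : p y ≤ p x := hymin x hx
  have hδ0 : (0:ℝ) ≤ p x - p y := by linarith
  have hnm0 : (0:ℝ) ≤ ↑n * m * |C| := by positivity
  -- the key log-Hölder estimate
  have hdl : (p x - p y) * (-Real.log ℓ) ≤ |C| := by
    by_cases hxyeq : x = y
    · simp [hxyeq, abs_nonneg]
    · have hn0 : 0 < ‖x - y‖ := norm_sub_pos_iff.mpr hxyeq
      have hnorm : ‖x - y‖ ≤ ℓ := by
        rw [pi_norm_le_iff_of_nonneg hℓ0.le]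
        intro i
        rw [Pi.sub_apply, Real.norm_eq_abs, abs_le]
        have h1x : z i ≤ x i := hx.1 i
        have h2x : x i ≤ z i + ℓ := hx.2 i
        have h1y : z i ≤ y i := hy.1 i
        have h2y : y i ≤ z i + ℓ := hy.2 i
        exact ⟨by linarith, by linarith⟩
      set L := Real.log (Real.exp 1 + 1 / ‖x - y‖) with hLdef
      have hL1 : (1:ℝ) ≤ L := by
        rw [hLdef]
        calc (1:ℝ) = Real.log (Real.exp 1) := (Real.log_exp 1).symm
          _ ≤ Real.log (Real.exp 1 + 1 / ‖x - y‖) :=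
            Real.log_le_log (Real.exp_pos 1)
              (le_add_of_nonneg_right (by positivity))
      have hLl : -Real.log ℓ ≤ L := by
        rw [← Real.log_inv]
        refine Real.log_le_log (inv_pos.mpr hℓ0) ?_
        have h1 : ℓ⁻¹ ≤ ‖x - y‖⁻¹ := inv_anti₀ hn0 hnorm
        have : (0:ℝ) < Real.exp 1 := Real.exp_pos 1
        calc ℓ⁻¹ ≤ ‖x - y‖⁻¹ := h1
          _ ≤ Real.exp 1 + 1 / ‖x - y‖ := by rw [one_div]; linarith
      have hδle : p x - p y ≤ |C| / L := by
        have h := hlog x y hxyeq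
        have hLpos : (0:ℝ) < L := by linarith
        have hCL : C / L ≤ |C| / L := div_le_div_of_nonneg_right (le_abs_self C) hLpos.le
        calc p x - p y ≤ |p x - p y| := le_abs_self _
          _ ≤ C / L := h
          _ ≤ |C| / L := hCL
      have hlog0 : 0 ≤ -Real.log ℓ := by
        have := Real.log_nonpos hℓ0.le hℓ1
        linarith
      calc (p x - p y) * (-Real.log ℓ) ≤ (|C| / L) * (-Real.log ℓ) :=
            mul_le_mul_of_nonneg_right hδle hlog0
        _ ≤ (|C| / L) * L := by
            apply mul_le_mul_of_nonneg_left hLl (div_nonneg (abs_nonneg C) (by linarith))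
        _ = |C| := div_mul_cancel₀ _ (by linarith)
  -- logs of a
  have hal : ↑n * m * Real.log ℓ ≤ Real.log a := by
    have h := Real.log_le_log hpow0 ha1
    rw [Real.log_rpow (pow_pos hℓ0 n), Real.log_pow] at h
    linarith
  -- pointwise comparison of integrands
  have key : ∀ τ ∈ Set.Icc (0:ℝ) t,
      p y * (a + τ) ^ (p y - 2) * τ ≤ E * (p x * (a + τ) ^ (p x - 2) * τ) := by
    intro τ hτ
    have hs : 0 < a + τ := by linarith [hτ.1]
    have h2 : (a + τ) ^ (p y - p x) ≤ E := by
      rw [Real.rpow_def_of_pos hs, hE]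
      apply Real.exp_le_exp.mpr
      rcases le_or_gt 0 (Real.log (a + τ)) with hls | hls
      · nlinarith
      · have hla : Real.log a ≤ Real.log (a + τ) := Real.log_le_log ha0 (by linarith [hτ.1])
        calc Real.log (a + τ) * (p y - p x)
            = (p x - p y) * (-Real.log (a + τ)) := by ring
          _ ≤ (p x - p y) * (-Real.log a) := mul_le_mul_of_nonneg_left (by linarith) hδ0
          _ ≤ (p x - p y) * (↑n * m * (-Real.log ℓ)) :=
              mul_le_mul_of_nonneg_left (by linarith) hδ0
          _ = (↑n * m) * ((p x - p y) * (-Real.log ℓ)) := by ring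
          _ ≤ (↑n * m) * |C| := mul_le_mul_of_nonneg_left hdl (by positivity)
          _ = ↑n * m * |C| := by ring
    have hrpow : (a + τ) ^ (p y - 2) ≤ E * (a + τ) ^ (p x - 2) := by
      have heq : (a + τ) ^ (p y - 2) = (a + τ) ^ (p y - p x) * (a + τ) ^ (p x - 2) := by
        rw [← Real.rpow_add hs]; ring_nf
      rw [heq]
      exact mul_le_mul_of_nonneg_right h2 (Real.rpow_nonneg hs.le _)
    calc p y * (a + τ) ^ (p y - 2) * τ
        ≤ (p x * (E * (a + τ) ^ (p x - 2))) * τ :=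
          mul_le_mul_of_nonneg_right
            (mul_le_mul hxy hrpow (Real.rpow_nonneg hs.le _) (by linarith [hp1 x])) hτ.1
      _ = E * (p x * (a + τ) ^ (p x - 2) * τ) := by ring
  -- integrability
  have hcont : ∀ q : ℝ, ContinuousOn (fun τ : ℝ => q * (a + τ) ^ (q - 2) * τ)
      (Set.uIcc 0 t) := by
    intro q
    apply ContinuousOn.mul _ continuousOn_id
    apply ContinuousOn.mul continuousOn_const
    apply ContinuousOn.rpow_const (continuous_const.add continuous_id).continuousOn
    intro τ hτ
    rw [Set.uIcc_of_le ht] at hτ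
    exact Or.inl (ne_of_gt (by show (0:ℝ) < a + τ; linarith [hτ.1]))
  have hf : IntervalIntegrable (fun τ => p y * (a + τ) ^ (p y - 2) * τ) volume 0 t :=
    (hcont (p y)).intervalIntegrable
  have hgx : IntervalIntegrable (fun τ => p x * (a + τ) ^ (p x - 2) * τ) volume 0 t :=
    (hcont (p x)).intervalIntegrable
  have hg : IntervalIntegrable (fun τ => E * (p x * (a + τ) ^ (p x - 2) * τ)) volume 0 t :=
    hgx.const_mul E
  have hmono := intervalIntegral.integral_mono_on ht hf hg key
  rw [phiShift, phiShift]
  calc (∫ τ in (0:ℝ)..t, p y * (a + τ) ^ (p y - 2) * τ)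
      ≤ ∫ τ in (0:ℝ)..t, E * (p x * (a + τ) ^ (p x - 2) * τ) := hmono
    _ = E * ∫ τ in (0:ℝ)..t, p x * (a + τ) ^ (p x - 2) * τ :=
        intervalIntegral.integral_const_mul E _
end
end

section
/- There is a universal constant c > 0 such that for every κ ∈ [0,1], every matrix Q ∈ ℝ^{N×n} with κ + |Q| > 0, and all real exponents p(x), p(y), one has |F(x,Q) − F(y,Q)| ≤ c |p(x) − p(y)| · |ln(κ + |Q|)| · ((κ + |Q|)^{(p(x)−2)/2} + (κ + |Q|)^{(p(y)−2)/2}) · |Q|, where F(z,ξ) := (κ+|ξ|)^{(p(z)−2)/2} ξ. -/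
open Set

noncomputable section

lemma rpow_diff_le (a : ℝ) (ha : 0 < a) (s t : ℝ) :
    |a ^ s - a ^ t| ≤ |s - t| * |Real.log a| * (a ^ s + a ^ t) := by
  wlog h : a ^ t ≤ a ^ s with H
  · have := H a ha t s (le_of_not_ge h)
    simpa [abs_sub_comm, add_comm] using this
  rw [abs_of_nonneg (sub_nonneg.2 h)]
  set L := Real.log a with hL
  have hs : a ^ s = Real.exp (s * L) := by rw [Real.rpow_def_of_pos ha s, mul_comm]
  have ht : a ^ t = Real.exp (t * L) := by rw [Real.rpow_def_of_pos ha t, mul_comm]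
  have hle : t * L ≤ s * L := by
    have := h; rw [hs, ht] at this; exact Real.exp_le_exp.1 this
  have h1 : -((s - t) * L) + 1 ≤ Real.exp (-((s - t) * L)) := Real.add_one_le_exp _
  have h2 : Real.exp (t * L) = Real.exp (s * L) * Real.exp (-((s - t) * L)) := by
    rw [← Real.exp_add]; ring_nf
  have key : a ^ s - a ^ t ≤ (s - t) * L * a ^ s := by
    rw [hs, ht, h2]
    nlinarith [Real.exp_pos (s * L)]
  have habs : (s - t) * L ≤ |s - t| * |L| := by
    calc (s - t) * L ≤ |(s - t) * L| := le_abs_self _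
    _ = |s - t| * |L| := abs_mul _ _
  have hpos_t : 0 < a ^ t := Real.rpow_pos_of_pos ha t
  have hpos_s : 0 < a ^ s := Real.rpow_pos_of_pos ha s
  have hnn : 0 ≤ (s - t) * L := by linarith
  nlinarith [abs_nonneg (s - t), abs_nonneg L]

/-- There is a universal constant `c > 0` such that for every `κ ∈ [0,1]`, every matrix
`Q ∈ ℝ^{N×n}` (with the Frobenius norm) with `κ + |Q| > 0`, and all real exponents
`px, py`, with `F(z,ξ) := (κ+|ξ|)^((p z - 2)/2) ξ`, one has
`|F(x,Q) - F(y,Q)| ≤ c |px - py| |ln(κ+|Q|)| ((κ+|Q|)^((px-2)/2) + (κ+|Q|)^((py-2)/2)) |Q|`. -/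
theorem F_exponent_difference :
    ∃ c : ℝ, 0 < c ∧
      ∀ (N n : ℕ), ∀ κ ∈ Icc (0 : ℝ) 1,
        ∀ Q : EuclideanSpace ℝ (Fin N × Fin n), 0 < κ + ‖Q‖ →
          ∀ px py : ℝ,
            ‖((κ + ‖Q‖) ^ ((px - 2) / 2)) • Q - ((κ + ‖Q‖) ^ ((py - 2) / 2)) • Q‖ ≤
              c * |px - py| * |Real.log (κ + ‖Q‖)| *
                ((κ + ‖Q‖) ^ ((px - 2) / 2) + (κ + ‖Q‖) ^ ((py - 2) / 2)) * ‖Q‖ := by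
  refine ⟨1, one_pos, fun N n κ hκ Q ha px py => ?_⟩
  set a := κ + ‖Q‖ with haa
  set s := (px - 2) / 2 with hss
  set t := (py - 2) / 2 with htt
  have hnorm : ‖(a ^ s) • Q - (a ^ t) • Q‖ = |a ^ s - a ^ t| * ‖Q‖ := by
    rw [← sub_smul, norm_smul, Real.norm_eq_abs]
  rw [hnorm]
  have key := rpow_diff_le a ha s t
  have hst : |s - t| ≤ |px - py| := by
    have : s - t = (px - py) / 2 := by rw [hss, htt]; ring
    rw [this, abs_div]
    have : |(2:ℝ)| = 2 := by norm_num
    rw [this]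
    linarith [abs_nonneg (px - py)]
  have hQ : 0 ≤ ‖Q‖ := norm_nonneg _
  have hsum : 0 ≤ a ^ s + a ^ t :=
    add_nonneg (Real.rpow_pos_of_pos ha s).le (Real.rpow_pos_of_pos ha t).le
  have hlog : 0 ≤ |Real.log a| := abs_nonneg _
  calc |a ^ s - a ^ t| * ‖Q‖ ≤ |s - t| * |Real.log a| * (a ^ s + a ^ t) * ‖Q‖ := by
        exact mul_le_mul_of_nonneg_right key hQ
    _ ≤ 1 * |px - py| * |Real.log a| * (a ^ s + a ^ t) * ‖Q‖ := by
        rw [one_mul]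
        exact mul_le_mul_of_nonneg_right
          (mul_le_mul_of_nonneg_right (mul_le_mul_of_nonneg_right hst hlog) hsum) hQ
end
end

section
/- Let S ⊂ ℝⁿ be measurable with 0 < |S| < ∞, let κ ∈ [0,1], and let p : S → ℝ be measurable with 1 < p⁻ ≤ p(x) ≤ p⁺ < ∞ for all x ∈ S. Then the map λ : ℝ^{N×n} → ℝ^{N×n} defined by λ(Q) := (⨍_S (κ + |Q|)^{(p(x)−2)/2} dx) · Q (with λ(0) := 0) is surjective. -/
open MeasureTheory Set

noncomputable section

/-- Let `S ⊂ ℝⁿ` be measurable with `0 < |S| < ∞`, `κ ∈ [0,1]`, and `p : S → ℝ` measurable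
with `1 < p⁻ ≤ p(x) ≤ p⁺ < ∞` on `S`. Then the map
`λ(Q) := (⨍_S (κ + |Q|)^((p(x)-2)/2) dx) • Q` on `N × n` matrices (Frobenius norm) is
surjective. -/
theorem lambda_surjective (d N n : ℕ) (S : Set (Fin d → ℝ)) (hS : MeasurableSet S)
    (hS0 : 0 < volume S) (hSfin : volume S < ⊤) (κ : ℝ) (hκ : κ ∈ Icc (0 : ℝ) 1)
    (p : (Fin d → ℝ) → ℝ) (hp : Measurable p) (pminus pplus : ℝ) (hpm : 1 < pminus)
    (hbd : ∀ x ∈ S, pminus ≤ p x ∧ p x ≤ pplus) :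
    Function.Surjective
      (fun Q : EuclideanSpace ℝ (Fin N × Fin n) =>
        (⨍ x in S, (κ + ‖Q‖) ^ ((p x - 2) / 2)) • Q) := by
  obtain ⟨hκ0, hκ1⟩ := hκ
  intro R
  rcases eq_or_ne R 0 with hR | hR
  · exact ⟨0, by simp [hR]⟩
  set r : ℝ := ‖R‖ with hr
  have hr0 : 0 < r := norm_pos_iff.2 hR
  -- abbreviations
  set β : (Fin d → ℝ) → ℝ := fun x => (p x - 2) / 2 with hβ
  set F : ℝ → (Fin d → ℝ) → ℝ := fun s x => s * (κ + s) ^ (β x) with hF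
  set β' : ℝ := min ((pminus - 2) / 2) 0 with hβ'
  have hβ'le : β' ≤ 0 := min_le_right _ _
  have he : (0:ℝ) < 1 + β' := by
    rcases min_cases ((pminus - 2) / 2) 0 with ⟨h1, _⟩ | ⟨h1, _⟩ <;> rw [hβ', h1] <;> linarith
  -- choose T ≥ 1 with r ≤ 2^β' * T^(1+β')
  obtain ⟨T, hTr, hT1⟩ :
      ∃ T : ℝ, r ≤ (2:ℝ) ^ β' * T ^ (1 + β') ∧ (1:ℝ) ≤ T := by
    have h2 : (0:ℝ) < (2:ℝ) ^ β' := Real.rpow_pos_of_pos two_pos _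
    have := Filter.Tendsto.const_mul_atTop h2 (tendsto_rpow_atTop he)
    exact ((this.eventually_ge_atTop r).and (Filter.eventually_ge_atTop 1)).exists
  have hT0 : (0:ℝ) < T := lt_of_lt_of_le one_pos hT1
  -- measurability of the integrand
  have hmeas : ∀ s : ℝ, Measurable fun x => (κ + s) ^ (β x) := fun s =>
    measurable_const.pow ((hp.sub measurable_const).div_const 2)
  have hFmeas : ∀ s : ℝ, AEStronglyMeasurable (F s) (volume.restrict S) := fun s =>
    ((measurable_const.mul (hmeas s))).aestronglyMeasurable
  -- uniform bound for s ∈ Icc 0 T, x ∈ S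
  set C : ℝ := (1 + T) ^ (pplus / 2) with hC
  have hbound : ∀ s ∈ Icc (0:ℝ) T, ∀ x ∈ S, ‖F s x‖ ≤ C := by
    intro s hs x hx
    obtain ⟨hs0, hsT⟩ := hs
    have hFnn : 0 ≤ F s x := mul_nonneg hs0 (Real.rpow_nonneg (by linarith) _)
    rw [Real.norm_eq_abs, abs_of_nonneg hFnn]
    rcases eq_or_lt_of_le (by linarith : (0:ℝ) ≤ κ + s) with h0 | h0
    · have : s = 0 := by linarith
      simp only [hF, this, zero_mul]
      exact Real.rpow_nonneg (by linarith) _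
    · have h1 : F s x ≤ (κ + s) ^ (1 + β x) := by
        rw [Real.rpow_add h0, Real.rpow_one]
        exact mul_le_mul_of_nonneg_right (by linarith) (Real.rpow_nonneg h0.le _)
      have hpx : pminus ≤ p x ∧ p x ≤ pplus := hbd x hx
      have h2 : (κ + s) ^ (1 + β x) ≤ (1 + T) ^ (1 + β x) := by
        apply Real.rpow_le_rpow h0.le (by linarith)
        have : 1 + β x = p x / 2 := by rw [hβ]; ring
        rw [this]; linarith [hpx.1]
      have h3 : (1 + T) ^ (1 + β x) ≤ C := by
        apply Real.rpow_le_rpow_of_exponent_le (by linarith)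
        have : 1 + β x = p x / 2 := by rw [hβ]; ring
        rw [this]; linarith [hpx.2]
      linarith
  have hbdd_int : Integrable (fun _ => C) (volume.restrict S) := by
    rw [integrable_const_iff]
    right
    exact ⟨by simpa [Measure.restrict_apply_univ] using hSfin⟩
  -- integrability of F s on S, for s ∈ Icc 0 T
  have hFint : ∀ s ∈ Icc (0:ℝ) T, IntegrableOn (F s) S := by
    intro s hs
    refine Integrable.mono' hbdd_int (hFmeas s) ?_
    filter_upwards [ae_restrict_mem hS] with x hx
    exact hbound s hs x hx
  -- G is continuous on Icc 0 T
  set G : ℝ → ℝ := fun s => ∫ x in S, F s x with hG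
  have hGcont : ContinuousOn G (Icc 0 T) := by
    intro s₀ hs₀
    apply continuousWithinAt_of_dominated
      (bound := fun _ => C)
    · exact Filter.Eventually.of_forall fun s => hFmeas s
    · filter_upwards [self_mem_nhdsWithin] with s hs
      filter_upwards [ae_restrict_mem hS] with x hx
      exact hbound s hs x hx
    · exact hbdd_int
    · filter_upwards [ae_restrict_mem hS] with x hx
      have hpx := hbd x hx
      rcases eq_or_lt_of_le (by linarith [hs₀.1] : (0:ℝ) ≤ κ + s₀) with h0 | h0
      · -- κ = 0 and s₀ = 0
        have hκz : κ = 0 := by linarith [hs₀.1]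
        have hsz : s₀ = 0 := by linarith [hs₀.1]
        have key : ∀ s ∈ Icc (0:ℝ) T, F s x = s ^ (1 + β x) := by
          intro s hs
          rcases eq_or_lt_of_le hs.1 with h | h
          · have h1βx : 1 + β x ≠ 0 := by
              have hb : 1 + β x = p x / 2 := by rw [hβ]; ring
              rw [hb]; exact ne_of_gt (by linarith [hpx.1])
            simp [hF, ← h, hκz, Real.zero_rpow h1βx]
          · simp only [hF, hκz, zero_add]
            rw [Real.rpow_add h, Real.rpow_one]
        apply ContinuousWithinAt.congr _ key (key s₀ hs₀)
        apply ContinuousAt.continuousWithinAt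
        apply Real.continuousAt_rpow_const _ _ (Or.inr _)
        have hb : 1 + β x = p x / 2 := by rw [hβ]; ring
        rw [hb]; linarith [hpx.1]
      · apply ContinuousAt.continuousWithinAt
        exact continuousAt_id.mul
          ((continuousAt_const.add continuousAt_id).rpow_const (Or.inl h0.ne'))
  -- values of G
  have hvol0 : 0 < (volume S).toReal := ENNReal.toReal_pos hS0.ne' hSfin.ne
  have hG0 : G 0 = 0 := by simp [hG, hF]
  have hGT : r * (volume S).toReal ≤ G T := by
    have hmono : ∀ x ∈ S, r ≤ F T x := by
      intro x hx
      have hpx := hbd x hx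
      have step1 : (2:ℝ) ^ β' * T ^ (1 + β') = T * (2 * T) ^ β' := by
        rw [Real.rpow_add hT0, Real.rpow_one, Real.mul_rpow (by norm_num) hT0.le]
        ring
      have step2 : (2 * T) ^ β' ≤ (κ + T) ^ β' :=
        Real.rpow_le_rpow_of_nonpos (by linarith) (by linarith) hβ'le
      have step3 : (κ + T) ^ β' ≤ (κ + T) ^ (β x) := by
        apply Real.rpow_le_rpow_of_exponent_le (by linarith)
        calc β' ≤ (pminus - 2) / 2 := min_le_left _ _
          _ ≤ β x := by rw [hβ]; dsimp only; linarith [hpx.1]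
      calc r ≤ (2:ℝ) ^ β' * T ^ (1 + β') := hTr
        _ = T * (2 * T) ^ β' := step1
        _ ≤ T * (κ + T) ^ β' := by nlinarith
        _ ≤ T * (κ + T) ^ (β x) := by nlinarith [Real.rpow_nonneg (by linarith : (0:ℝ) ≤ κ + T) (β x)]
    have : ∫ _x in S, r ≤ ∫ x in S, F T x :=
      setIntegral_mono_on (integrableOn_const hSfin.ne)
        (hFint T ⟨hT0.le, le_refl T⟩) hS hmono
    calc r * (volume S).toReal = ∫ _x in S, r := by
          rw [setIntegral_const, smul_eq_mul, mul_comm]; rfl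
      _ ≤ G T := this
  -- intermediate value theorem
  have hmem : r * (volume S).toReal ∈ Icc (G 0) (G T) := by
    constructor
    · rw [hG0]; positivity
    · exact hGT
  obtain ⟨s, hsIcc, hGs⟩ := intermediate_value_Icc hT0.le hGcont hmem
  -- construct Q
  refine ⟨(s / r) • R, ?_⟩
  have hs0 : 0 ≤ s := hsIcc.1
  have hnormQ : ‖(s / r) • R‖ = s := by
    rw [norm_smul, Real.norm_eq_abs, abs_of_nonneg (by positivity), ← hr,
      div_mul_cancel₀ _ hr0.ne']
  dsimp only
  rw [hnormQ, setAverage_eq, smul_smul]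
  have hGs' : s * ∫ x in S, (κ + s) ^ ((p x - 2) / 2) = r * (volume S).toReal := by
    rw [← hGs]
    simp only [hG, hF, hβ]
    exact (integral_const_mul s _).symm
  have hcoef : (volume S).toReal⁻¹ • (∫ x in S, (κ + s) ^ ((p x - 2) / 2)) * (s / r) = 1 := by
    rw [smul_eq_mul]
    field_simp
    nlinarith [hGs']
  rw [show volume.real S = (volume S).toReal from rfl, hcoef, one_smul]
end
end

section
/- Let ρ be an elliptic N-function. Then there exists c ≥ 1, depending only on the characteristics of ρ, such that for all a > 0 and all 0 ≤ t ≤ a one has c⁻¹ ρ''(a) t² ≤ ρ_a(t) ≤ c ρ''(a) t², and for all a ≥ 0 and all t ≥ a one has c⁻¹ ρ(t) ≤ ρ_a(t) ≤ c ρ(t). -/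
open MeasureTheory Set Filter

noncomputable section

/-- An elliptic N-function `ρ` with (given) first and second derivatives `ρ'`, `ρ''` on
`[0,∞)` resp. `(0,∞)`, and characteristics `γ₁ ≤ γ₂`:  `ρ` is continuous, strictly
increasing and convex on `[0,∞)` with `ρ(0) = 0`, `ρ(t)/t → 0` as `t → 0⁺`,
`t/ρ(t) → 0` as `t → ∞`, `ρ` is `C¹` on `[0,∞)` and `C²` on `(0,∞)`, and
`γ₁ ρ'(t) ≤ t ρ''(t) ≤ γ₂ ρ'(t)` for all `t > 0`. -/
structure IsEllipticNFun (ρ ρ' ρ'' : ℝ → ℝ) (γ₁ γ₂ : ℝ) : Prop where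
  continuousOn : ContinuousOn ρ (Set.Ici 0)
  strictMonoOn : StrictMonoOn ρ (Set.Ici 0)
  convexOn : ConvexOn ℝ (Set.Ici 0) ρ
  map_zero : ρ 0 = 0
  tendsto_zero : Filter.Tendsto (fun t => ρ t / t) (nhdsWithin 0 (Set.Ioi 0)) (nhds 0)
  tendsto_atTop : Filter.Tendsto (fun t => t / ρ t) Filter.atTop (nhds 0)
  hasDerivAt : ∀ t ∈ Set.Ici (0:ℝ), HasDerivWithinAt ρ (ρ' t) (Set.Ici 0) t
  derivContinuousOn : ContinuousOn ρ' (Set.Ici 0)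
  hasDeriv2At : ∀ t ∈ Set.Ioi (0:ℝ), HasDerivAt ρ' (ρ'' t) t
  deriv2ContinuousOn : ContinuousOn ρ'' (Set.Ioi 0)
  gamma_pos : 0 < γ₁
  gamma_le : γ₁ ≤ γ₂
  elliptic : ∀ t ∈ Set.Ioi (0:ℝ), γ₁ * ρ' t ≤ t * ρ'' t ∧ t * ρ'' t ≤ γ₂ * ρ' t

/-- The shift of a function with derivative `g`: `shift g a t = ∫₀ᵗ (g(a+τ)/(a+τ)) τ dτ`.
For `g = ρ'` this is the shifted N-function `ρ_a`. -/
def shift (g : ℝ → ℝ) (a t : ℝ) : ℝ :=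
  ∫ τ in (0:ℝ)..t, (g (a + τ) / (a + τ)) * τ

/-- The derivative of the shifted function: `(ρ_a)'(t) = (ρ'(a+t)/(a+t)) t` for `g = ρ'`. -/
def shiftD (g : ℝ → ℝ) (a t : ℝ) : ℝ :=
  (g (a + t) / (a + t)) * t

/-- The conjugate (Legendre transform) `f*(t) = sup_{s ≥ 0} (s t - f(s))`. -/
def conj (f : ℝ → ℝ) (t : ℝ) : ℝ :=
  sSup ((fun s => s * t - f s) '' Set.Ici 0)

section helpers
variable {ρ ρ' ρ'' : ℝ → ℝ} {γ₁ γ₂ : ℝ}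

lemma en_slope_le (h : IsEllipticNFun ρ ρ' ρ'' γ₁ γ₂) {x y : ℝ} (hx : 0 ≤ x) (hxy : x < y) :
    ρ' x * (y - x) ≤ ρ y - ρ x := by
  have hy : (0:ℝ) ≤ y := le_trans hx hxy.le
  have h1 := h.convexOn.le_slope_of_hasDerivWithinAt hx hy hxy (h.hasDerivAt x hx)
  rw [slope_def_field] at h1
  exact (le_div_iff₀ (sub_pos.2 hxy)).mp h1

lemma en_le_slope (h : IsEllipticNFun ρ ρ' ρ'' γ₁ γ₂) {x y : ℝ} (hx : 0 ≤ x) (hxy : x < y) :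
    ρ y - ρ x ≤ ρ' y * (y - x) := by
  have hy : (0:ℝ) ≤ y := le_trans hx hxy.le
  have h1 := h.convexOn.slope_le_of_hasDerivWithinAt hx hy hxy (h.hasDerivAt y hy)
  rw [slope_def_field, div_le_iff₀ (sub_pos.2 hxy)] at h1
  linarith


lemma en_mono (h : IsEllipticNFun ρ ρ' ρ'' γ₁ γ₂) : MonotoneOn ρ' (Set.Ici 0) := by
  intro x hx y hy hxy
  rcases eq_or_lt_of_le hxy with rfl | hlt
  · exact le_rfl
  have h1 := h.convexOn.le_slope_of_hasDerivWithinAt hx hy hlt (h.hasDerivAt x hx)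
  have h2 := h.convexOn.slope_le_of_hasDerivWithinAt hx hy hlt (h.hasDerivAt y hy)
  exact h1.trans h2

lemma en_deriv_pos (h : IsEllipticNFun ρ ρ' ρ'' γ₁ γ₂) {s : ℝ} (hs : 0 < s) : 0 < ρ' s := by
  have h1 := en_le_slope h (le_refl 0) hs
  have h2 : 0 < ρ s := by
    have := h.strictMonoOn (Set.self_mem_Ici) (Set.mem_Ici.2 hs.le) hs
    rwa [h.map_zero] at this
  rw [h.map_zero] at h1
  nlinarith

lemma en_rho_nonneg (h : IsEllipticNFun ρ ρ' ρ'' γ₁ γ₂) {s : ℝ} (hs : 0 ≤ s) : 0 ≤ ρ s := by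
  rcases eq_or_lt_of_le hs with rfl | hs
  · rw [h.map_zero]
  · rw [← h.map_zero]
    exact (h.strictMonoOn (le_refl (0:ℝ)) hs.le hs).le


lemma en_doubling (h : IsEllipticNFun ρ ρ' ρ'' γ₁ γ₂) {s : ℝ} (hs : 0 < s) :
    ρ' (2*s) ≤ 2 ^ γ₂ * ρ' s := by
  set g : ℝ → ℝ := fun u => ρ' u * u ^ (-γ₂) with hg
  have hderiv : ∀ u ∈ Set.Ioo s (2*s),
      HasDerivAt g (ρ'' u * u ^ (-γ₂) + ρ' u * (-γ₂ * u ^ (-γ₂ - 1))) u := by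
    intro u hu
    have hu0 : 0 < u := hs.trans hu.1
    exact (h.hasDeriv2At u hu0).mul (Real.hasDerivAt_rpow_const (Or.inl hu0.ne'))
  have hsub : Set.Icc s (2*s) ⊆ Set.Ici 0 := fun u hu => le_trans hs.le hu.1
  have hcont : ContinuousOn g (Set.Icc s (2*s)) := by
    refine (h.derivContinuousOn.mono hsub).mul (fun u hu => ?_)
    exact (Real.continuousAt_rpow_const u (-γ₂)
      (Or.inl (ne_of_gt (lt_of_lt_of_le hs hu.1)))).continuousWithinAt
  have hanti : AntitoneOn g (Set.Icc s (2*s)) := by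
    refine antitoneOn_of_deriv_nonpos (convex_Icc _ _) hcont (fun u hu => ?_) (fun u hu => ?_)
    · rw [interior_Icc] at hu
      exact (hderiv u hu).differentiableAt.differentiableWithinAt
    · rw [interior_Icc] at hu
      rw [(hderiv u hu).deriv]
      have hu0 : 0 < u := hs.trans hu.1
      have hrw : u ^ (-γ₂) = u ^ (-γ₂ - 1) * u := by
        rw [← Real.rpow_add_one hu0.ne']
        ring_nf
      rw [hrw]
      have hell := (h.elliptic u hu0).2
      have hrp : (0:ℝ) ≤ u ^ (-γ₂ - 1) := (Real.rpow_pos_of_pos hu0 _).le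
      nlinarith [mul_nonneg hrp (sub_nonneg.2 hell)]
  have h2s : 0 < 2*s := by linarith
  have hmem1 : s ∈ Set.Icc s (2*s) := ⟨le_rfl, by linarith⟩
  have hmem2 : 2*s ∈ Set.Icc s (2*s) := ⟨by linarith, le_rfl⟩
  have h2 : ρ' (2*s) * ((2:ℝ) ^ (-γ₂) * s ^ (-γ₂)) ≤ ρ' s * s ^ (-γ₂) := by
    have := hanti hmem1 hmem2 (by linarith)
    simpa [hg, Real.mul_rpow (by norm_num : (0:ℝ) ≤ 2) hs.le] using this
  have hposs : (0:ℝ) < s ^ (-γ₂) := Real.rpow_pos_of_pos hs _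
  have hpos2 : (0:ℝ) < (2:ℝ) ^ γ₂ := Real.rpow_pos_of_pos two_pos _
  have h3 : ρ' (2*s) * (2:ℝ) ^ (-γ₂) ≤ ρ' s :=
    le_of_mul_le_mul_right (by rw [mul_assoc]; exact h2) hposs
  rw [Real.rpow_neg (by norm_num : (0:ℝ) ≤ 2)] at h3
  rw [mul_inv_le_iff₀ hpos2] at h3
  linarith


lemma en_ftc (h : IsEllipticNFun ρ ρ' ρ'' γ₁ γ₂) {t : ℝ} (ht : 0 ≤ t) :
    ∫ τ in (0:ℝ)..t, ρ' τ = ρ t := by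
  rcases eq_or_lt_of_le ht with rfl | ht
  · simp [h.map_zero]
  · have hIcc : Set.Icc (0:ℝ) t ⊆ Set.Ici 0 := Set.Icc_subset_Ici_self
    have := intervalIntegral.integral_eq_sub_of_hasDeriv_right_of_le ht.le
      (h.continuousOn.mono hIcc)
      (fun x hx => ((h.hasDerivAt x hx.1.le).hasDerivAt
        (Ici_mem_nhds hx.1)).hasDerivWithinAt)
      ((h.derivContinuousOn.mono (by rw [Set.uIcc_of_le ht.le]; exact hIcc)).intervalIntegrable)
    rw [this, h.map_zero, sub_zero]

lemma en_shift_zero (h : IsEllipticNFun ρ ρ' ρ'' γ₁ γ₂) {t : ℝ} (ht : 0 ≤ t) :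
    shift ρ' 0 t = ρ t := by
  have h0 : ∀ᵐ (τ:ℝ), τ ≠ (0:ℝ) := by
    refine MeasureTheory.ae_iff.2 ?_
    simp
  have hae : ∀ᵐ (τ : ℝ), τ ∈ Set.uIoc (0:ℝ) t → (ρ' (0 + τ) / (0 + τ)) * τ = ρ' τ := by
    filter_upwards [h0] with τ hτ _
    rw [zero_add, div_mul_cancel₀ _ hτ]
  rw [shift, intervalIntegral.integral_congr_ae hae, en_ftc h ht]

lemma en_intble (h : IsEllipticNFun ρ ρ' ρ'' γ₁ γ₂) {a u v : ℝ} (ha : 0 < a) (hu : 0 ≤ u)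
    (huv : u ≤ v) :
    IntervalIntegrable (fun τ => (ρ' (a + τ) / (a + τ)) * τ) MeasureTheory.volume u v := by
  refine ContinuousOn.intervalIntegrable ?_
  rw [Set.uIcc_of_le huv]
  have hmaps : ∀ τ ∈ Set.Icc u v, a + τ ∈ Set.Ici (0:ℝ) :=
    fun τ hτ => Set.mem_Ici.2 (by linarith [hτ.1])
  have hc1 : ContinuousOn (fun τ => ρ' (a + τ)) (Set.Icc u v) :=
    h.derivContinuousOn.comp ((continuous_const.add continuous_id).continuousOn) hmaps
  have hc2 : ContinuousOn (fun τ => a + τ) (Set.Icc u v) :=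
    (continuous_const.add continuous_id).continuousOn
  exact (hc1.div hc2 (fun τ hτ => ne_of_gt (by linarith [hτ.1]))).mul continuousOn_id


lemma en_part1 (h : IsEllipticNFun ρ ρ' ρ'' γ₁ γ₂) {c : ℝ} (hcpos : 0 < c)
    (hc1 : 4*γ₂ ≤ c) (hc2 : (2:ℝ)^γ₂ * γ₁⁻¹ ≤ c) {a t : ℝ}
    (ha : 0 < a) (ht0 : 0 ≤ t) (hta : t ≤ a) :
    c⁻¹ * (ρ'' a * t^2) ≤ shift ρ' a t ∧ shift ρ' a t ≤ c * (ρ'' a * t^2) := by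
  have hγ₁ := h.gamma_pos
  have hγ₂ : 0 < γ₂ := lt_of_lt_of_le hγ₁ h.gamma_le
  have hE1 : (1:ℝ) ≤ (2:ℝ)^γ₂ := by
    have := Real.rpow_le_rpow_of_exponent_le one_le_two hγ₂.le
    simpa using this
  have hell := h.elliptic a ha
  have hra : 0 ≤ ρ' a := (en_deriv_pos h ha).le
  have hra2 : 0 ≤ ρ'' a := by nlinarith [hell.1]
  have hnn : 0 ≤ ρ'' a * t^2 := by positivity
  -- pointwise bounds on the integrand
  have hlow : ∀ τ ∈ Set.Icc (0:ℝ) t, ρ' a / (2*a) * τ ≤ (ρ' (a+τ) / (a+τ)) * τ := by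
    intro τ hτ
    refine mul_le_mul_of_nonneg_right ?_ hτ.1
    refine div_le_div₀ ((en_deriv_pos h (by linarith [hτ.1] : (0:ℝ) < a + τ)).le)
      (en_mono h (Set.mem_Ici.2 ha.le) (Set.mem_Ici.2 (by linarith [hτ.1])) (by linarith [hτ.1]))
      (by linarith [hτ.1]) (by linarith [hτ.2])
  have hhigh : ∀ τ ∈ Set.Icc (0:ℝ) t,
      (ρ' (a+τ) / (a+τ)) * τ ≤ ((2:ℝ)^γ₂ * ρ' a) / a * τ := by
    intro τ hτ
    refine mul_le_mul_of_nonneg_right ?_ hτ.1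
    have hm : ρ' (a+τ) ≤ (2:ℝ)^γ₂ * ρ' a := by
      have h1 : ρ' (a+τ) ≤ ρ' (2*a) :=
        en_mono h (Set.mem_Ici.2 (by linarith [hτ.1])) (Set.mem_Ici.2 (by linarith))
          (by linarith [hτ.2])
      exact h1.trans (en_doubling h ha)
    refine div_le_div₀ (by positivity) hm (by linarith [hτ.1]) (by linarith [hτ.1])
  have hintf := en_intble h ha (le_refl (0:ℝ)) ht0
  have hintl : IntervalIntegrable (fun τ => ρ' a / (2*a) * τ) MeasureTheory.volume 0 t :=
    (continuous_const.mul continuous_id).intervalIntegrable 0 t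
  have hinth : IntervalIntegrable (fun τ => ((2:ℝ)^γ₂ * ρ' a) / a * τ) MeasureTheory.volume 0 t :=
    (continuous_const.mul continuous_id).intervalIntegrable 0 t
  have hIl : ρ' a / (2*a) * ((t^2 - 0^2)/2) ≤ shift ρ' a t := by
    rw [shift]
    calc ρ' a / (2*a) * ((t^2 - 0^2)/2)
        = ∫ τ in (0:ℝ)..t, ρ' a / (2*a) * τ := by
          rw [intervalIntegral.integral_const_mul, integral_id]
      _ ≤ _ := intervalIntegral.integral_mono_on ht0 hintl hintf hlow
  have hIh : shift ρ' a t ≤ ((2:ℝ)^γ₂ * ρ' a) / a * ((t^2 - 0^2)/2) := by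
    rw [shift]
    calc (∫ τ in (0:ℝ)..t, (ρ' (a+τ) / (a+τ)) * τ)
        ≤ ∫ τ in (0:ℝ)..t, ((2:ℝ)^γ₂ * ρ' a) / a * τ :=
          intervalIntegral.integral_mono_on ht0 hintf hinth hhigh
      _ = ((2:ℝ)^γ₂ * ρ' a) / a * ((t^2 - 0^2)/2) := by
          rw [intervalIntegral.integral_const_mul, integral_id]
  constructor
  · have hcinv : c⁻¹ ≤ (4*γ₂)⁻¹ := inv_anti₀ (by positivity) hc1
    have k1 : ρ'' a / γ₂ ≤ ρ' a / a := by
      rw [div_le_div_iff₀ hγ₂ ha]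
      linarith [hell.2]
    calc c⁻¹ * (ρ'' a * t^2) ≤ (4*γ₂)⁻¹ * (ρ'' a * t^2) :=
          mul_le_mul_of_nonneg_right hcinv hnn
      _ = (ρ'' a / γ₂) * (t^2/4) := by ring
      _ ≤ (ρ' a / a) * (t^2/4) := mul_le_mul_of_nonneg_right k1 (by positivity)
      _ = ρ' a / (2*a) * ((t^2 - 0^2)/2) := by ring
      _ ≤ shift ρ' a t := hIl
  · have k2 : ρ' a / a ≤ ρ'' a / γ₁ := by
      rw [div_le_div_iff₀ ha hγ₁]
      linarith [hell.1]
    calc shift ρ' a t ≤ ((2:ℝ)^γ₂ * ρ' a) / a * ((t^2 - 0^2)/2) := hIh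
      _ = (ρ' a / a) * ((2:ℝ)^γ₂ * t^2 / 2) := by ring
      _ ≤ (ρ'' a / γ₁) * ((2:ℝ)^γ₂ * t^2 / 2) :=
          mul_le_mul_of_nonneg_right k2 (by positivity)
      _ = ((2:ℝ)^γ₂ * γ₁⁻¹ / 2) * (ρ'' a * t^2) := by ring
      _ ≤ c * (ρ'' a * t^2) := by
          refine mul_le_mul_of_nonneg_right ?_ hnn
          have : (0:ℝ) < (2:ℝ)^γ₂ * γ₁⁻¹ := by positivity
          linarith

lemma en_part2 (h : IsEllipticNFun ρ ρ' ρ'' γ₁ γ₂) {c : ℝ}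
    (hc3 : 8*(2:ℝ)^γ₂ ≤ c) (hc4 : 2*(2:ℝ)^γ₂*(2:ℝ)^γ₂ ≤ c) {a t : ℝ}
    (ha : 0 < a) (hat : a ≤ t) :
    c⁻¹ * ρ t ≤ shift ρ' a t ∧ shift ρ' a t ≤ c * ρ t := by
  have hγ₁ := h.gamma_pos
  have hγ₂ : 0 < γ₂ := lt_of_lt_of_le hγ₁ h.gamma_le
  set E : ℝ := (2:ℝ)^γ₂ with hE
  have hEpos : 0 < E := Real.rpow_pos_of_pos two_pos _
  have hE1 : (1:ℝ) ≤ E := by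
    have := Real.rpow_le_rpow_of_exponent_le one_le_two hγ₂.le
    simpa [hE] using this
  have ht : 0 < t := lt_of_lt_of_le ha hat
  have hrt : 0 ≤ ρ t := en_rho_nonneg h ht.le
  -- ρ t ≤ t * ρ' t and t * ρ' t ≤ 2 * E * ρ t
  have hup : ρ t ≤ t * ρ' t := by
    have := en_le_slope h (le_refl (0:ℝ)) ht
    rw [h.map_zero] at this
    nlinarith
  have hdt : ρ' t ≤ E * ρ' (t/2) := by
    have := en_doubling h (by linarith : (0:ℝ) < t/2)
    rw [show 2*(t/2) = t by ring] at this
    exact this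
  have hlowrho : (t/2) * ρ' (t/2) ≤ ρ t := by
    have h1 := en_slope_le h (by linarith : (0:ℝ) ≤ t/2) (by linarith : t/2 < t)
    have h2 : 0 ≤ ρ (t/2) := en_rho_nonneg h (by linarith)
    nlinarith
  have hrt2 : 0 ≤ ρ' (t/2) := (en_deriv_pos h (by linarith)).le
  have hrtd : 0 ≤ ρ' t := (en_deriv_pos h ht).le
  -- upper bound
  have hhigh : ∀ τ ∈ Set.Icc (0:ℝ) t, (ρ' (a+τ) / (a+τ)) * τ ≤ ρ' (a+t) := by
    intro τ hτ
    have hτ0 := hτ.1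
    have haτ : 0 < a + τ := by linarith
    have h1 : ρ' (a+τ) ≤ ρ' (a+t) :=
      en_mono h (Set.mem_Ici.2 haτ.le) (Set.mem_Ici.2 (by linarith)) (by linarith [hτ.2])
    have h2 : τ / (a+τ) ≤ 1 := (div_le_one haτ).2 (by linarith)
    have h3 : 0 ≤ τ / (a+τ) := by positivity
    calc (ρ' (a+τ) / (a+τ)) * τ = ρ' (a+τ) * (τ / (a+τ)) := by ring
      _ ≤ ρ' (a+t) * 1 := mul_le_mul h1 h2 h3 (by
          exact (en_deriv_pos h (by linarith : (0:ℝ) < a + t)).le)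
      _ = ρ' (a+t) := mul_one _
  have hintf := en_intble h ha (le_refl (0:ℝ)) ht.le
  have hIh : shift ρ' a t ≤ t * ρ' (a+t) := by
    rw [shift]
    calc (∫ τ in (0:ℝ)..t, (ρ' (a+τ) / (a+τ)) * τ)
        ≤ ∫ _τ in (0:ℝ)..t, ρ' (a+t) :=
          intervalIntegral.integral_mono_on ht.le hintf
            (intervalIntegrable_const) hhigh
      _ = t * ρ' (a+t) := by simp [mul_comm]
  have hat2 : ρ' (a+t) ≤ E * ρ' t := by
    have h1 : ρ' (a+t) ≤ ρ' (2*t) :=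
      en_mono h (Set.mem_Ici.2 (by linarith)) (Set.mem_Ici.2 (by linarith)) (by linarith)
    exact h1.trans (en_doubling h ht)
  -- lower bound
  have hsplit : shift ρ' a t =
      (∫ τ in (0:ℝ)..(t/2), (ρ' (a+τ) / (a+τ)) * τ) +
      ∫ τ in (t/2)..t, (ρ' (a+τ) / (a+τ)) * τ := by
    rw [shift]
    exact (intervalIntegral.integral_add_adjacent_intervals
      (en_intble h ha (le_refl (0:ℝ)) (by linarith))
      (en_intble h ha (by linarith : (0:ℝ) ≤ t/2) (by linarith))).symm
  have hpos1 : 0 ≤ ∫ τ in (0:ℝ)..(t/2), (ρ' (a+τ) / (a+τ)) * τ := by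
    refine intervalIntegral.integral_nonneg (by linarith) (fun τ hτ => ?_)
    have hτ0 := hτ.1
    have : 0 ≤ ρ' (a+τ) := (en_deriv_pos h (by linarith)).le
    positivity
  have hlow : ∀ τ ∈ Set.Icc (t/2) t, ρ' (t/2) / 4 ≤ (ρ' (a+τ) / (a+τ)) * τ := by
    intro τ hτ
    have hτ1 := hτ.1
    have hτ2 := hτ.2
    have haτ : 0 < a + τ := by linarith
    have h1 : ρ' (t/2) ≤ ρ' (a+τ) :=
      en_mono h (Set.mem_Ici.2 (by linarith)) (Set.mem_Ici.2 haτ.le) (by linarith)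
    have h2 : (1:ℝ)/4 ≤ τ / (a+τ) := by
      have := div_le_div₀ (by linarith : (0:ℝ) ≤ τ) (by linarith : t/2 ≤ τ) haτ
        (by linarith : a + τ ≤ 2*t)
      calc (1:ℝ)/4 = (t/2)/(2*t) := by field_simp; ring
        _ ≤ τ / (a+τ) := this
    calc ρ' (t/2) / 4 = ρ' (t/2) * (1/4) := by ring
      _ ≤ ρ' (a+τ) * (τ / (a+τ)) := mul_le_mul h1 h2 (by norm_num) ((en_deriv_pos h (by linarith)).le)
      _ = (ρ' (a+τ) / (a+τ)) * τ := by ring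
  have hIl : (t/2) * (ρ' (t/2) / 4) ≤ ∫ τ in (t/2)..t, (ρ' (a+τ) / (a+τ)) * τ := by
    calc (t/2) * (ρ' (t/2) / 4) = ∫ _τ in (t/2)..t, ρ' (t/2) / 4 := by
          simp; ring
      _ ≤ _ := intervalIntegral.integral_mono_on (by linarith)
          intervalIntegrable_const (en_intble h ha (by linarith) (by linarith)) hlow
  have hlower : t * ρ' (t/2) / 8 ≤ shift ρ' a t := by
    rw [hsplit]
    have : (t/2) * (ρ' (t/2) / 4) = t * ρ' (t/2) / 8 := by ring
    linarith [hIl, hpos1]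
  constructor
  · -- c⁻¹ ρ t ≤ shift
    have h1 : ρ t ≤ (8*E) * (t * ρ' (t/2) / 8) := by
      calc ρ t ≤ t * ρ' t := hup
        _ ≤ t * (E * ρ' (t/2)) := by nlinarith
        _ = (8*E) * (t * ρ' (t/2) / 8) := by ring
    have hcpos : 0 < c := lt_of_lt_of_le (by positivity) hc3
    rw [inv_mul_le_iff₀ hcpos]
    calc ρ t ≤ (8*E) * (t * ρ' (t/2) / 8) := h1
      _ ≤ c * (t * ρ' (t/2) / 8) := by
          refine mul_le_mul_of_nonneg_right hc3 ?_
          positivity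
      _ ≤ c * shift ρ' a t := by
          refine mul_le_mul_of_nonneg_left hlower hcpos.le
  · -- shift ≤ c ρ t
    calc shift ρ' a t ≤ t * ρ' (a+t) := hIh
      _ ≤ t * (E * ρ' t) := by nlinarith
      _ = E * (t * ρ' t) := by ring
      _ ≤ E * (2 * E * ρ t) := by
          refine mul_le_mul_of_nonneg_left ?_ hEpos.le
          nlinarith
      _ = (2*E*E) * ρ t := by ring
      _ ≤ c * ρ t := mul_le_mul_of_nonneg_right hc4 hrt

end helpers

/-- For an elliptic N-function `ρ` there is `c ≥ 1`, depending only on the characteristics,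
with `ρ_a(t) ∼ ρ''(a) t²` for `0 ≤ t ≤ a` (`a > 0`) and `ρ_a(t) ∼ ρ(t)` for `t ≥ a ≥ 0`. -/


theorem shift_equiv (γ₁ γ₂ : ℝ) (hγ₁ : 0 < γ₁) (hγ : γ₁ ≤ γ₂) :
    ∃ c : ℝ, 1 ≤ c ∧
      ∀ ρ ρ' ρ'' : ℝ → ℝ, IsEllipticNFun ρ ρ' ρ'' γ₁ γ₂ →
        (∀ a : ℝ, 0 < a → ∀ t : ℝ, 0 ≤ t → t ≤ a →
          c⁻¹ * (ρ'' a * t ^ 2) ≤ shift ρ' a t ∧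
            shift ρ' a t ≤ c * (ρ'' a * t ^ 2)) ∧
        (∀ a : ℝ, 0 ≤ a → ∀ t : ℝ, a ≤ t →
          c⁻¹ * ρ t ≤ shift ρ' a t ∧ shift ρ' a t ≤ c * ρ t) := by
  have hγ₂ : 0 < γ₂ := lt_of_lt_of_le hγ₁ hγ
  set E : ℝ := (2:ℝ)^γ₂ with hE
  have hEpos : 0 < E := Real.rpow_pos_of_pos two_pos _
  have hE1 : (1:ℝ) ≤ E := by
    have := Real.rpow_le_rpow_of_exponent_le one_le_two hγ₂.le
    simpa [hE] using this
  set Q : ℝ := γ₂ + γ₁⁻¹ + 1 with hQdef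
  have hinv : 0 < γ₁⁻¹ := by positivity
  have hQ1 : 1 ≤ Q := by rw [hQdef]; linarith
  have hQγ : γ₂ ≤ Q := by rw [hQdef]; linarith
  have hQi : γ₁⁻¹ ≤ Q := by rw [hQdef]; linarith
  have hQ0 : 0 < Q := by linarith
  set P : ℝ := (2:ℝ)^(2*γ₂+3) with hPdef
  have h8 : (8:ℝ) = (2:ℝ) ^ ((3:ℕ):ℝ) := by rw [Real.rpow_natCast]; norm_num
  have hP : P = E*E*8 := by
    rw [hPdef, hE, h8, ← Real.rpow_add two_pos, ← Real.rpow_add two_pos]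
    congr 1
    push_cast
    ring
  have hP8 : 8 ≤ P := by nlinarith
  have hP8E : 8*E ≤ P := by nlinarith
  have hP2EE : 2*E*E ≤ P := by nlinarith
  have hPE : E ≤ P := by nlinarith
  have hPpos : 0 < P := by nlinarith
  have hcpos : 0 < P*Q := by positivity
  have hc1 : 1 ≤ P*Q := by nlinarith
  refine ⟨P*Q, hc1, fun ρ ρ' ρ'' h => ⟨?_, ?_⟩⟩
  · intro a ha t ht0 hta
    refine en_part1 h hcpos ?_ ?_ ha ht0 hta
    · calc 4*γ₂ ≤ 8*Q := by nlinarith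
        _ ≤ P*Q := mul_le_mul_of_nonneg_right hP8 hQ0.le
    · calc E * γ₁⁻¹ ≤ E * Q := mul_le_mul_of_nonneg_left hQi hEpos.le
        _ ≤ P*Q := mul_le_mul_of_nonneg_right hPE hQ0.le
  · intro a ha0 t hat
    rcases eq_or_lt_of_le ha0 with rfl|ha
    · rw [en_shift_zero h (by linarith)]
      have hrt : 0 ≤ ρ t := en_rho_nonneg h (by linarith)
      have h2 : (P*Q)⁻¹ ≤ 1 := by
        rw [inv_le_one₀ hcpos]
        exact hc1
      constructor
      · calc (P*Q)⁻¹ * ρ t ≤ 1 * ρ t := mul_le_mul_of_nonneg_right h2 hrt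
          _ = ρ t := one_mul _
      · exact le_mul_of_one_le_left hrt hc1
    · refine en_part2 h ?_ ?_ ha hat
      · calc 8*E ≤ P := hP8E
          _ ≤ P*Q := le_mul_of_one_le_right hPpos.le hQ1
      · calc 2*E*E ≤ P := hP2EE
          _ ≤ P*Q := le_mul_of_one_le_right hPpos.le hQ1
end
end

section
/- Let ρ be an elliptic N-function. Then there exists c ≥ 1, depending only on the characteristics of ρ, such that for all P, Q ∈ ℝ^{N×n} the three quantities (A^ρ(P) − A^ρ(Q)) : (P − Q), |F^ρ(P) − F^ρ(Q)|², and ρ_{|P|}(|P − Q|) are pairwise comparable with constant c (each is at most c times each other), and moreover, whenever |P| + |Q| > 0, each of them is comparable with constant c to ρ''(|P| + |Q|) |P − Q|². -/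
open MeasureTheory Set Filter

noncomputable section

open scoped RealInnerProductSpace

/-- `A^ρ(ξ) := (ρ'(|ξ|)/|ξ|) ξ` on `N × n` matrices with the Frobenius norm
(realized as the Euclidean norm on `ℝ^{N×n}`), with `A^ρ(0) = 0`. -/
def Arho (N n : ℕ) (ρ' : ℝ → ℝ) (ξ : EuclideanSpace ℝ (Fin N × Fin n)) :
    EuclideanSpace ℝ (Fin N × Fin n) :=
  (ρ' ‖ξ‖ / ‖ξ‖) • ξ

/-- `F^ρ(ξ) := (ρ'(|ξ|)/|ξ|)^{1/2} ξ`, with `F^ρ(0) = 0`. -/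
def Frho (N n : ℕ) (ρ' : ℝ → ℝ) (ξ : EuclideanSpace ℝ (Fin N × Fin n)) :
    EuclideanSpace ℝ (Fin N × Fin n) :=
  Real.sqrt (ρ' ‖ξ‖ / ‖ξ‖) • ξ

/-- Two nonnegative quantities are comparable with constant `c`. -/
def Cmp (c x y : ℝ) : Prop := x ≤ c * y ∧ y ≤ c * x
section Basic

variable {ρ ρ' ρ'' : ℝ → ℝ} {γ₁ γ₂ : ℝ}

lemma rho'_nonneg (h : IsEllipticNFun ρ ρ' ρ'' γ₁ γ₂) {t : ℝ} (ht : 0 ≤ t) : 0 ≤ ρ' t := by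
  have hd : HasDerivWithinAt ρ (ρ' t) (Set.Ioi t) t :=
    (h.hasDerivAt t (Set.mem_Ici.2 ht)).mono (fun x hx => le_trans ht (le_of_lt hx))
  rw [hasDerivWithinAt_iff_tendsto_slope' (s := Set.Ioi t) (by simp)] at hd
  refine ge_of_tendsto hd ?_
  filter_upwards [self_mem_nhdsWithin] with y hy
  have h1 : ρ t < ρ y := h.strictMonoOn ht (le_trans ht (le_of_lt hy)) hy
  rw [slope_def_field]
  apply div_nonneg (by linarith) (by simp at hy; linarith)

lemma rho'_zero (h : IsEllipticNFun ρ ρ' ρ'' γ₁ γ₂) : ρ' 0 = 0 := by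
  have hd : HasDerivWithinAt ρ (ρ' 0) (Set.Ioi 0) 0 :=
    (h.hasDerivAt 0 (Set.mem_Ici.2 le_rfl)).mono (fun x hx => Set.mem_Ici.2 (le_of_lt (Set.mem_Ioi.1 hx)))
  rw [hasDerivWithinAt_iff_tendsto_slope' (s := Set.Ioi 0) (by simp)] at hd
  have h2 : Filter.Tendsto (slope ρ 0) (nhdsWithin 0 (Set.Ioi 0)) (nhds 0) := by
    refine h.tendsto_zero.congr' ?_
    filter_upwards [self_mem_nhdsWithin] with y _
    rw [slope_def_field, h.map_zero]
    ring_nf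
  exact tendsto_nhds_unique hd h2

lemma pow_upper (h : IsEllipticNFun ρ ρ' ρ'' γ₁ γ₂) {s t : ℝ} (hs : 0 < s) (hst : s ≤ t) :
    ρ' t * s ^ γ₂ ≤ ρ' s * t ^ γ₂ := by
  have hγ₂ : 0 < γ₂ := lt_of_lt_of_le h.gamma_pos h.gamma_le
  have key : AntitoneOn (fun x => ρ' x * x ^ (-γ₂)) (Set.Ici s) := by
    apply antitoneOn_of_deriv_nonpos (convex_Ici s)
    · have h1 : ContinuousOn ρ' (Set.Ici s) :=
        h.derivContinuousOn.mono (fun x hx => le_trans hs.le hx)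
      exact h1.mul (fun x hx => (Real.continuousAt_rpow_const x _
        (Or.inl (ne_of_gt (lt_of_lt_of_le hs hx)))).continuousWithinAt)
    · rw [interior_Ici]
      intro x hx
      have hx0 : (0:ℝ) < x := lt_trans hs hx
      exact ((h.hasDeriv2At x hx0).mul
        (Real.hasDerivAt_rpow_const (Or.inl hx0.ne'))).differentiableAt.differentiableWithinAt
    · rw [interior_Ici]
      intro x hx
      have hx0 : (0:ℝ) < x := lt_trans hs hx
      have hder : HasDerivAt (fun x => ρ' x * x ^ (-γ₂))
          (ρ'' x * x ^ (-γ₂) + ρ' x * (-γ₂ * x ^ (-γ₂ - 1))) x :=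
        (h.hasDeriv2At x hx0).mul (Real.hasDerivAt_rpow_const (Or.inl hx0.ne'))
      rw [hder.deriv]
      have hpow : x ^ (-γ₂) = x ^ (-γ₂ - 1) * x := by
        rw [← Real.rpow_add_one hx0.ne' (-γ₂ - 1)]; ring_nf
      have hE := (h.elliptic x hx0).2
      have hp : (0:ℝ) ≤ x ^ (-γ₂ - 1) := Real.rpow_nonneg hx0.le _
      calc ρ'' x * x ^ (-γ₂) + ρ' x * (-γ₂ * x ^ (-γ₂ - 1))
          = x ^ (-γ₂ - 1) * (x * ρ'' x - γ₂ * ρ' x) := by rw [hpow]; ring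
        _ ≤ 0 := mul_nonpos_of_nonneg_of_nonpos hp (by linarith)
  have h2 := key (Set.mem_Ici.2 le_rfl) (Set.mem_Ici.2 hst) hst
  simp only [Real.rpow_neg hs.le, Real.rpow_neg (le_trans hs.le hst),
    ← div_eq_mul_inv] at h2
  rw [div_le_div_iff₀ (Real.rpow_pos_of_pos (lt_of_lt_of_le hs hst) _)
    (Real.rpow_pos_of_pos hs _)] at h2
  linarith

lemma pow_lower (h : IsEllipticNFun ρ ρ' ρ'' γ₁ γ₂) {s t : ℝ} (hs : 0 < s) (hst : s ≤ t) :
    ρ' s * t ^ γ₁ ≤ ρ' t * s ^ γ₁ := by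
  have key : MonotoneOn (fun x => ρ' x * x ^ (-γ₁)) (Set.Ici s) := by
    apply monotoneOn_of_deriv_nonneg (convex_Ici s)
    · have h1 : ContinuousOn ρ' (Set.Ici s) :=
        h.derivContinuousOn.mono (fun x hx => le_trans hs.le hx)
      exact h1.mul (fun x hx => (Real.continuousAt_rpow_const x _
        (Or.inl (ne_of_gt (lt_of_lt_of_le hs hx)))).continuousWithinAt)
    · rw [interior_Ici]
      intro x hx
      have hx0 : (0:ℝ) < x := lt_trans hs hx
      exact ((h.hasDeriv2At x hx0).mul
        (Real.hasDerivAt_rpow_const (Or.inl hx0.ne'))).differentiableAt.differentiableWithinAt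
    · rw [interior_Ici]
      intro x hx
      have hx0 : (0:ℝ) < x := lt_trans hs hx
      have hder : HasDerivAt (fun x => ρ' x * x ^ (-γ₁))
          (ρ'' x * x ^ (-γ₁) + ρ' x * (-γ₁ * x ^ (-γ₁ - 1))) x :=
        (h.hasDeriv2At x hx0).mul (Real.hasDerivAt_rpow_const (Or.inl hx0.ne'))
      rw [hder.deriv]
      have hpow : x ^ (-γ₁) = x ^ (-γ₁ - 1) * x := by
        rw [← Real.rpow_add_one hx0.ne' (-γ₁ - 1)]; ring_nf
      have hE := (h.elliptic x hx0).1
      have hp : (0:ℝ) ≤ x ^ (-γ₁ - 1) := Real.rpow_nonneg hx0.le _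
      calc (0:ℝ) ≤ x ^ (-γ₁ - 1) * (x * ρ'' x - γ₁ * ρ' x) :=
            mul_nonneg hp (by linarith)
        _ = ρ'' x * x ^ (-γ₁) + ρ' x * (-γ₁ * x ^ (-γ₁ - 1)) := by rw [hpow]; ring
  have h2 := key (Set.mem_Ici.2 le_rfl) (Set.mem_Ici.2 hst) hst
  simp only [Real.rpow_neg hs.le, Real.rpow_neg (le_trans hs.le hst),
    ← div_eq_mul_inv] at h2
  rw [div_le_div_iff₀ (Real.rpow_pos_of_pos hs _)
    (Real.rpow_pos_of_pos (lt_of_lt_of_le hs hst) _)] at h2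
  linarith

lemma rho'_mono (h : IsEllipticNFun ρ ρ' ρ'' γ₁ γ₂) {s t : ℝ} (hs : 0 ≤ s) (hst : s ≤ t) :
    ρ' s ≤ ρ' t := by
  have key : MonotoneOn ρ' (Set.Ici 0) := by
    apply monotoneOn_of_deriv_nonneg (convex_Ici 0) h.derivContinuousOn
    · rw [interior_Ici]
      exact fun x hx => (h.hasDeriv2At x hx).differentiableAt.differentiableWithinAt
    · rw [interior_Ici]
      intro x hx
      rw [(h.hasDeriv2At x hx).deriv]
      have hE := (h.elliptic x hx).1
      have := rho'_nonneg h (le_of_lt hx)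
      have hx0 : (0:ℝ) < x := hx
      nlinarith [h.gamma_pos]
  exact key (Set.mem_Ici.2 hs) (Set.mem_Ici.2 (le_trans hs hst)) hst

lemma rho'_pos (h : IsEllipticNFun ρ ρ' ρ'' γ₁ γ₂) {t : ℝ} (ht : 0 < t) : 0 < ρ' t := by
  rcases lt_or_ge 0 (ρ' t) with h1 | h1
  · exact h1
  exfalso
  have ht0 : ρ' t = 0 := le_antisymm h1 (rho'_nonneg h ht.le)
  have hzero : ∀ x ∈ Set.Ico (0:ℝ) t, ρ' x = 0 := by
    intro x hx
    rcases eq_or_lt_of_le hx.1 with h2 | h2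
    · rw [← h2]; exact rho'_zero h
    · have := pow_lower h h2 hx.2.le
      rw [ht0] at this
      have hp : (0:ℝ) < t ^ γ₁ := Real.rpow_pos_of_pos ht _
      nlinarith [rho'_nonneg h h2.le]
  have hconst := constant_of_has_deriv_right_zero
    (f := ρ) (a := 0) (b := t)
    (h.continuousOn.mono (fun x hx => hx.1))
    (fun x hx => by
      have hd := (h.hasDerivAt x (Set.mem_Ici.2 hx.1)).mono
        (fun y hy => le_trans hx.1 hy : Set.Ici x ⊆ Set.Ici 0)
      rw [hzero x hx] at hd
      exact hd)
  have := hconst t (Set.mem_Icc.2 ⟨ht.le, le_rfl⟩)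
  have h3 := h.strictMonoOn (Set.mem_Ici.2 le_rfl) (Set.mem_Ici.2 ht.le) ht
  linarith

lemma V_le (h : IsEllipticNFun ρ ρ' ρ'' γ₁ γ₂) {s t K : ℝ} (hs : 0 < s) (hst : s ≤ t)
    (htK : t ≤ K * s) (hK : 1 ≤ K) :
    ρ' t / t ≤ K ^ γ₂ * (ρ' s / s) ∧ ρ' s / s ≤ K * (ρ' t / t) := by
  have ht : 0 < t := lt_of_lt_of_le hs hst
  have hγ₂ : 0 < γ₂ := lt_of_lt_of_le h.gamma_pos h.gamma_le
  have hnum : ρ' t ≤ K ^ γ₂ * ρ' s := by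
    have h1 := pow_upper h hs hst
    have h2 : t ^ γ₂ ≤ (K * s) ^ γ₂ := Real.rpow_le_rpow ht.le htK hγ₂.le
    rw [Real.mul_rpow (by linarith) hs.le] at h2
    have hsp : (0:ℝ) < s ^ γ₂ := Real.rpow_pos_of_pos hs _
    have h3 : ρ' t * s ^ γ₂ ≤ K ^ γ₂ * ρ' s * s ^ γ₂ := by
      nlinarith [rho'_nonneg h hs.le]
    exact le_of_mul_le_mul_right h3 hsp
  constructor
  · rw [div_le_iff₀ ht]
    calc ρ' t ≤ K ^ γ₂ * ρ' s := hnum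
      _ = K ^ γ₂ * (ρ' s / s) * s := by field_simp
      _ ≤ K ^ γ₂ * (ρ' s / s) * t := by
          apply mul_le_mul_of_nonneg_left hst
          exact mul_nonneg (Real.rpow_nonneg (by linarith) _)
            (div_nonneg (rho'_nonneg h hs.le) hs.le)
  · rw [div_le_iff₀ hs]
    calc ρ' s ≤ ρ' t := rho'_mono h hs.le hst
      _ = (ρ' t / t) * t := by field_simp
      _ ≤ (ρ' t / t) * (K * s) :=
          mul_le_mul_of_nonneg_left htK (div_nonneg (rho'_nonneg h ht.le) ht.le)
      _ = K * (ρ' t / t) * s := by ring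

lemma ratio_upper {γ₂ : ℝ} (hγ₂ : 0 < γ₂) {r : ℝ} (h1 : 1 ≤ r) (h3 : r ≤ 3) :
    r ^ γ₂ - 1 ≤ γ₂ * 3 ^ γ₂ * (r - 1) := by
  have key : MonotoneOn (fun r : ℝ => γ₂ * 3 ^ γ₂ * (r - 1) - r ^ γ₂ + 1) (Set.Icc 1 3) := by
    apply monotoneOn_of_deriv_nonneg (convex_Icc 1 3)
    · apply ContinuousOn.add _ continuousOn_const
      apply ContinuousOn.sub (by fun_prop)
      exact fun x hx => (Real.continuousAt_rpow_const x _ (Or.inr hγ₂.le)).continuousWithinAt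
    · rw [interior_Icc]
      intro x hx
      have hx0 : (0:ℝ) < x := by linarith [hx.1]
      have hd0 := ((((hasDerivAt_id x).sub_const 1).const_mul (γ₂ * 3 ^ γ₂)).sub
        (Real.hasDerivAt_rpow_const (p := γ₂) (Or.inl hx0.ne'))).add_const 1
      exact (show DifferentiableAt ℝ (fun r : ℝ => γ₂ * 3 ^ γ₂ * (r - 1) - r ^ γ₂ + 1) x by
        simpa using hd0.differentiableAt).differentiableWithinAt
    · rw [interior_Icc]
      intro x hx
      have hx0 : (0:ℝ) < x := by linarith [hx.1]
      have hd0 := ((((hasDerivAt_id x).sub_const 1).const_mul (γ₂ * 3 ^ γ₂)).sub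
        (Real.hasDerivAt_rpow_const (p := γ₂) (Or.inl hx0.ne'))).add_const 1
      have hd : HasDerivAt (fun r : ℝ => γ₂ * 3 ^ γ₂ * (r - 1) - r ^ γ₂ + 1)
          (γ₂ * 3 ^ γ₂ - γ₂ * x ^ (γ₂ - 1)) x := by
        simpa using hd0
      rw [hd.deriv]
      have hb : x ^ (γ₂ - 1) ≤ 3 ^ γ₂ := by
        rcases le_total 1 γ₂ with hc | hc
        · calc x ^ (γ₂ - 1) ≤ 3 ^ (γ₂ - 1) :=
              Real.rpow_le_rpow (by linarith [hx.1]) (by linarith [hx.2]) (by linarith)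
            _ ≤ 3 ^ γ₂ := Real.rpow_le_rpow_of_exponent_le (by norm_num) (by linarith)
        · calc x ^ (γ₂ - 1) ≤ 1 := Real.rpow_le_one_of_one_le_of_nonpos hx.1.le (by linarith)
            _ ≤ 3 ^ γ₂ := Real.one_le_rpow (by norm_num) hγ₂.le
      nlinarith
  have h0 := key (Set.mem_Icc.2 ⟨le_rfl, by norm_num⟩) (Set.mem_Icc.2 ⟨h1, h3⟩) h1
  simp only [Real.one_rpow] at h0
  nlinarith

lemma ratio_lower {γ₁ : ℝ} (hγ₁ : 0 < γ₁) {r : ℝ} (h1 : 1 ≤ r) (h3 : r ≤ 3) :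
    γ₁ * min 1 ((3:ℝ) ^ (γ₁ - 1)) * (r - 1) ≤ r ^ γ₁ - 1 := by
  set c₀ := γ₁ * min 1 ((3:ℝ) ^ (γ₁ - 1)) with hc₀
  have key : MonotoneOn (fun r : ℝ => r ^ γ₁ - 1 - c₀ * (r - 1)) (Set.Icc 1 3) := by
    apply monotoneOn_of_deriv_nonneg (convex_Icc 1 3)
    · apply ContinuousOn.sub
      · apply ContinuousOn.sub _ continuousOn_const
        exact fun x hx => (Real.continuousAt_rpow_const x _ (Or.inr hγ₁.le)).continuousWithinAt
      · fun_prop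
    · rw [interior_Icc]
      intro x hx
      have hx0 : (0:ℝ) < x := by linarith [hx.1]
      have hd0 := (((Real.hasDerivAt_rpow_const (p := γ₁) (Or.inl hx0.ne')).sub_const 1).sub
        (((hasDerivAt_id x).sub_const 1).const_mul c₀))
      exact (show DifferentiableAt ℝ (fun r : ℝ => r ^ γ₁ - 1 - c₀ * (r - 1)) x by
        simpa [Pi.sub_def] using hd0.differentiableAt).differentiableWithinAt
    · rw [interior_Icc]
      intro x hx
      have hx0 : (0:ℝ) < x := by linarith [hx.1]
      have hd0 := (((Real.hasDerivAt_rpow_const (p := γ₁) (Or.inl hx0.ne')).sub_const 1).sub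
        (((hasDerivAt_id x).sub_const 1).const_mul c₀))
      have hd : HasDerivAt (fun r : ℝ => r ^ γ₁ - 1 - c₀ * (r - 1))
          (γ₁ * x ^ (γ₁ - 1) - c₀) x := by simpa [Pi.sub_def] using hd0
      rw [hd.deriv]
      have hb : min 1 ((3:ℝ) ^ (γ₁ - 1)) ≤ x ^ (γ₁ - 1) := by
        rcases le_total 1 γ₁ with hc | hc
        · exact le_trans (min_le_left _ _) (Real.one_le_rpow hx.1.le (by linarith))
        · exact le_trans (min_le_right _ _)
            (Real.rpow_le_rpow_of_nonpos (by linarith [hx.1]) (by linarith [hx.2]) (by linarith))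
      nlinarith
  have h0 := key (Set.mem_Icc.2 ⟨le_rfl, by norm_num⟩) (Set.mem_Icc.2 ⟨h1, h3⟩) h1
  simp only [Real.one_rpow] at h0
  nlinarith

lemma shift_integrand_contOn (h : IsEllipticNFun ρ ρ' ρ'' γ₁ γ₂) {a : ℝ} (ha : 0 ≤ a)
    {u v : ℝ} (hu : 0 ≤ u) :
    ContinuousOn (fun τ => ρ' (a + τ) / (a + τ) * τ) (Set.Icc u v) := by
  rcases eq_or_lt_of_le ha with ha0 | ha0
  · -- a = 0
    have heq : Set.EqOn (fun τ => ρ' (a + τ) / (a + τ) * τ) ρ' (Set.Icc u v) := by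
      intro x hx
      rcases eq_or_lt_of_le (le_trans hu hx.1) with hx0 | hx0
      · simp only [← ha0, ← hx0, zero_add, div_zero, zero_mul, mul_zero]
        rw [rho'_zero h]
      · have : a + x > 0 := by linarith
        subst ha0
        simp only [zero_add]
        field_simp [hx0.ne']
    exact ContinuousOn.congr (h.derivContinuousOn.mono
      (fun x hx => le_trans hu hx.1)) heq
  · apply ContinuousOn.mul _ continuousOn_id
    apply ContinuousOn.div
    · apply h.derivContinuousOn.comp (by fun_prop)
      intro x hx
      exact Set.mem_Ici.2 (by have := le_trans hu hx.1; linarith)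
    · fun_prop
    · intro x hx
      have := le_trans hu hx.1
      positivity

lemma shift_upper (h : IsEllipticNFun ρ ρ' ρ'' γ₁ γ₂) {a d : ℝ} (ha : 0 ≤ a) (hd : 0 ≤ d) :
    shift ρ' a d ≤ ρ' (a + d) / (a + d) * d ^ 2 := by
  rcases eq_or_lt_of_le hd with hd0 | hd0
  · simp [shift, ← hd0]
  have had : 0 < a + d := by linarith
  have hV : 0 ≤ ρ' (a + d) / (a + d) := div_nonneg (rho'_nonneg h had.le) had.le
  have hint : IntervalIntegrable (fun τ => ρ' (a + τ) / (a + τ) * τ) MeasureTheory.volume 0 d := by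
    apply ContinuousOn.intervalIntegrable
    rw [Set.uIcc_of_le hd]
    exact shift_integrand_contOn h ha le_rfl
  have hb : ∀ x ∈ Set.Icc (0:ℝ) d, ρ' (a + x) / (a + x) * x ≤ ρ' (a + d) / (a + d) * d := by
    intro x hx
    rcases eq_or_lt_of_le hx.1 with hx0 | hx0
    · rw [← hx0]
      simpa using mul_nonneg hV hd
    have hax : 0 < a + x := by linarith
    rw [div_mul_eq_mul_div, div_mul_eq_mul_div, div_le_div_iff₀ hax had]
    have h1 : ρ' (a + x) ≤ ρ' (a + d) := rho'_mono h hax.le (by linarith [hx.2])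
    have h2 : ρ' (a + x) ≥ 0 := rho'_nonneg h hax.le
    have h3 : (0:ℝ) ≤ ρ' (a + d) := rho'_nonneg h had.le
    have e1 := mul_le_mul_of_nonneg_right h1 (mul_nonneg hx.1 had.le)
    have e2 : ρ' (a + d) * (x * (a + d)) ≤ ρ' (a + d) * (d * (a + x)) := by
      apply mul_le_mul_of_nonneg_left _ h3
      nlinarith [hx.2, mul_le_mul_of_nonneg_right hx.2 ha]
    nlinarith
  have := intervalIntegral.integral_mono_on hd hint intervalIntegrable_const hb
  rw [intervalIntegral.integral_const] at this
  calc shift ρ' a d ≤ (d - 0) • (ρ' (a + d) / (a + d) * d) := this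
    _ = ρ' (a + d) / (a + d) * d ^ 2 := by simp; ring

lemma shift_lower (h : IsEllipticNFun ρ ρ' ρ'' γ₁ γ₂) {a d : ℝ} (ha : 0 ≤ a) (hd : 0 ≤ d) :
    ρ' (a + d) / (a + d) * d ^ 2 ≤ (2:ℝ) ^ γ₂ * 4 * shift ρ' a d := by
  rcases eq_or_lt_of_le hd with hd0 | hd0
  · simp [shift, ← hd0]
  have had : 0 < a + d := by linarith
  have had2 : 0 < a + d / 2 := by linarith
  set f := fun τ => ρ' (a + τ) / (a + τ) * τ with hf
  have hint1 : IntervalIntegrable f MeasureTheory.volume 0 (d/2) := by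
    apply ContinuousOn.intervalIntegrable
    rw [Set.uIcc_of_le (by linarith)]
    exact shift_integrand_contOn h ha le_rfl
  have hint2 : IntervalIntegrable f MeasureTheory.volume (d/2) d := by
    apply ContinuousOn.intervalIntegrable
    rw [Set.uIcc_of_le (by linarith)]
    exact shift_integrand_contOn h ha (by linarith)
  have hsplit : (∫ τ in (0:ℝ)..(d/2), f τ) + (∫ τ in (d/2)..d, f τ) = shift ρ' a d :=
    intervalIntegral.integral_add_adjacent_intervals hint1 hint2
  have h1 : 0 ≤ ∫ τ in (0:ℝ)..(d/2), f τ := by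
    apply intervalIntegral.integral_nonneg (by linarith)
    intro x hx
    have hax : 0 ≤ a + x := by linarith [hx.1]
    exact mul_nonneg (div_nonneg (rho'_nonneg h hax) hax) hx.1
  have hb : ∀ x ∈ Set.Icc (d/2) d, ρ' (a + d/2) / (a + d/2) * (d/2) ≤ f x := by
    intro x hx
    have hax : 0 < a + x := by linarith [hx.1]
    rw [hf]
    simp only
    rw [div_mul_eq_mul_div, div_mul_eq_mul_div, div_le_div_iff₀ had2 hax]
    have h1 : ρ' (a + d/2) ≤ ρ' (a + x) := rho'_mono h had2.le (by linarith [hx.1])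
    have h2 : 0 ≤ ρ' (a + d/2) := rho'_nonneg h had2.le
    have e0 : (d/2) * (a + x) ≤ x * (a + d/2) := by
      nlinarith [mul_nonneg (sub_nonneg.2 hx.1) ha]
    have e1 : ρ' (a + d/2) * (d/2) * (a + x) ≤ ρ' (a + d/2) * (x * (a + d/2)) := by
      calc ρ' (a + d/2) * (d/2) * (a + x) = ρ' (a + d/2) * ((d/2) * (a + x)) := by ring
        _ ≤ ρ' (a + d/2) * (x * (a + d/2)) := mul_le_mul_of_nonneg_left e0 h2
    have e2 : ρ' (a + d/2) * (x * (a + d/2)) ≤ ρ' (a + x) * (x * (a + d/2)) := by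
      apply mul_le_mul_of_nonneg_right h1
      have : 0 ≤ x := by linarith [hx.1]
      positivity
    nlinarith
  have h2 := intervalIntegral.integral_mono_on (by linarith : d/2 ≤ d)
    intervalIntegrable_const hint2 hb
  rw [intervalIntegral.integral_const] at h2
  have h3 : ρ' (a + d/2) / (a + d/2) * (d^2/4) ≤ shift ρ' a d := by
    have : (d - d/2) • (ρ' (a + d/2) / (a + d/2) * (d/2)) =
        ρ' (a + d/2) / (a + d/2) * (d^2/4) := by
      simp only [smul_eq_mul]; ring
    rw [this] at h2
    linarith
  have hVle := (V_le h (s := a + d/2) (t := a + d) (K := 2) had2 (by linarith) (by linarith) (by norm_num)).1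
  have hp : (0:ℝ) ≤ 2 ^ γ₂ := Real.rpow_nonneg (by norm_num) _
  have hd2 : 0 ≤ d^2/4 := by positivity
  calc ρ' (a + d) / (a + d) * d ^ 2
      ≤ (2:ℝ) ^ γ₂ * (ρ' (a + d/2) / (a + d/2)) * d ^ 2 := by
        apply mul_le_mul_of_nonneg_right hVle (by positivity)
    _ = (2:ℝ) ^ γ₂ * 4 * (ρ' (a + d/2) / (a + d/2) * (d^2/4)) := by ring
    _ ≤ (2:ℝ) ^ γ₂ * 4 * shift ρ' a d := by
        apply mul_le_mul_of_nonneg_left h3 (by positivity)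

lemma rpow_div_ratio (h : IsEllipticNFun ρ ρ' ρ'' γ₁ γ₂) {a b : ℝ} (hb : 0 < b) (hba : b ≤ a) :
    ρ' b * (a/b) ^ γ₁ ≤ ρ' a ∧ ρ' a ≤ ρ' b * (a/b) ^ γ₂ := by
  have ha : 0 < a := lt_of_lt_of_le hb hba
  have h1 := pow_lower h hb hba
  have h2 := pow_upper h hb hba
  have hbp : (0:ℝ) < b ^ γ₁ := Real.rpow_pos_of_pos hb _
  have hbp2 : (0:ℝ) < b ^ γ₂ := Real.rpow_pos_of_pos hb _
  constructor
  · rw [Real.div_rpow ha.le hb.le]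
    calc ρ' b * (a ^ γ₁ / b ^ γ₁) = ρ' b * a ^ γ₁ / b ^ γ₁ := by ring
      _ ≤ ρ' a := by rw [div_le_iff₀ hbp]; linarith
  · rw [Real.div_rpow ha.le hb.le]
    rw [← sub_nonneg]
    have : ρ' b * (a ^ γ₂ / b ^ γ₂) - ρ' a = (ρ' b * a ^ γ₂ - ρ' a * b ^ γ₂) / b ^ γ₂ := by
      field_simp
    rw [this]
    apply div_nonneg _ hbp2.le
    linarith

lemma diff_upper (h : IsEllipticNFun ρ ρ' ρ'' γ₁ γ₂) {a b : ℝ} (hb : 0 < b) (hba : b ≤ a)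
    (h3 : a ≤ 3 * b) :
    ρ' a - ρ' b ≤ (γ₂ * 3 ^ γ₂) * ((ρ' b / b) * (a - b)) := by
  have hγ₂ : 0 < γ₂ := lt_of_lt_of_le h.gamma_pos h.gamma_le
  have hr1 : 1 ≤ a / b := (one_le_div hb).2 hba
  have hr3 : a / b ≤ 3 := (div_le_iff₀ hb).2 (by linarith)
  have h1 := (rpow_div_ratio h hb hba).2
  have h2 := ratio_upper hγ₂ hr1 hr3
  have h4 := mul_le_mul_of_nonneg_left h2 (rho'_nonneg h hb.le)
  have h5 : ρ' b * (γ₂ * 3 ^ γ₂ * (a / b - 1)) = (γ₂ * 3 ^ γ₂) * ((ρ' b / b) * (a - b)) := by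
    field_simp
  nlinarith

lemma diff_lower (h : IsEllipticNFun ρ ρ' ρ'' γ₁ γ₂) {a b : ℝ} (hb : 0 < b) (hba : b ≤ a)
    (h3 : a ≤ 3 * b) :
    (γ₁ * min 1 ((3:ℝ) ^ (γ₁ - 1))) * ((ρ' b / b) * (a - b)) ≤ ρ' a - ρ' b := by
  have hr1 : 1 ≤ a / b := (one_le_div hb).2 hba
  have hr3 : a / b ≤ 3 := (div_le_iff₀ hb).2 (by linarith)
  have h1 := (rpow_div_ratio h hb hba).1
  have h2 := ratio_lower h.gamma_pos hr1 hr3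
  have h4 := mul_le_mul_of_nonneg_left h2 (rho'_nonneg h hb.le)
  have h5 : ρ' b * (γ₁ * min 1 ((3:ℝ) ^ (γ₁ - 1)) * (a / b - 1)) =
      (γ₁ * min 1 ((3:ℝ) ^ (γ₁ - 1))) * ((ρ' b / b) * (a - b)) := by
    field_simp
  nlinarith

lemma far_bound (h : IsEllipticNFun ρ ρ' ρ'' γ₁ γ₂) {a b : ℝ} (hb : 0 ≤ b) (ha : 0 < a)
    (h3 : 3 * b ≤ a) : ρ' b ≤ (3:ℝ) ^ (-γ₁) * ρ' a := by
  have ha3 : 0 < a / 3 := by linarith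
  have h1 := pow_lower h ha3 (by linarith : a / 3 ≤ a)
  have hpa : (0:ℝ) < a ^ γ₁ := Real.rpow_pos_of_pos ha _
  have h2 : ρ' (a/3) ≤ (3:ℝ) ^ (-γ₁) * ρ' a := by
    have hd : (a/3) ^ γ₁ = (3:ℝ) ^ (-γ₁) * a ^ γ₁ := by
      rw [Real.div_rpow ha.le (by norm_num), Real.rpow_neg (by norm_num)]
      ring
    rw [hd] at h1
    nlinarith
  calc ρ' b ≤ ρ' (a/3) := rho'_mono h hb (by linarith)
    _ ≤ (3:ℝ) ^ (-γ₁) * ρ' a := h2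

def CI (γ₁ γ₂ : ℝ) : ℝ :=
  4 * (γ₂ * 3 ^ γ₂) + 3 + (4:ℝ) ^ γ₂ / (γ₁ * min 1 ((3:ℝ) ^ (γ₁ - 1))) + 2 * (2:ℝ) ^ γ₂ +
    45 / 2 + 8 * (2:ℝ) ^ γ₂ / (1 - (3:ℝ) ^ (-γ₁))

lemma c0_pos {γ₁ : ℝ} (hγ₁ : 0 < γ₁) : 0 < γ₁ * min 1 ((3:ℝ) ^ (γ₁ - 1)) :=
  mul_pos hγ₁ (lt_min one_pos (Real.rpow_pos_of_pos (by norm_num) _))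

lemma theta_lt_one {γ₁ : ℝ} (hγ₁ : 0 < γ₁) : (3:ℝ) ^ (-γ₁) < 1 :=
  Real.rpow_lt_one_of_one_lt_of_neg (by norm_num) (by linarith)

lemma CI_pieces {γ₁ γ₂ : ℝ} (hγ₁ : 0 < γ₁) (hγ : γ₁ ≤ γ₂) :
    0 ≤ 4 * (γ₂ * 3 ^ γ₂) ∧ 0 < (4:ℝ) ^ γ₂ / (γ₁ * min 1 ((3:ℝ) ^ (γ₁ - 1))) ∧
    0 < 2 * (2:ℝ) ^ γ₂ ∧ 0 < 8 * (2:ℝ) ^ γ₂ / (1 - (3:ℝ) ^ (-γ₁)) := by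
  have hγ₂ : 0 < γ₂ := lt_of_lt_of_le hγ₁ hγ
  refine ⟨?_, ?_, ?_, ?_⟩
  · positivity
  · exact div_pos (Real.rpow_pos_of_pos (by norm_num) _) (c0_pos hγ₁)
  · positivity
  · apply div_pos (by positivity)
    linarith [theta_lt_one hγ₁]

lemma one_le_CI {γ₁ γ₂ : ℝ} (hγ₁ : 0 < γ₁) (hγ : γ₁ ≤ γ₂) : 1 ≤ CI γ₁ γ₂ := by
  obtain ⟨h1, h2, h3, h4⟩ := CI_pieces hγ₁ hγ
  unfold CI; linarith

set_option maxHeartbeats 2000000 in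
lemma I_scalar (h : IsEllipticNFun ρ ρ' ρ'' γ₁ γ₂) {a b d : ℝ} (hb : 0 ≤ b) (hba : b ≤ a)
    (ha : 0 < a) (hd1 : a - b ≤ d) (hd2 : d ≤ a + b) :
    ((ρ' a - ρ' b) * (a - b) + (ρ' a / a + ρ' b / b) * (d ^ 2 - (a - b) ^ 2) / 2
      ≤ CI γ₁ γ₂ * (ρ' (a + b) / (a + b) * d ^ 2)) ∧
    (ρ' (a + b) / (a + b) * d ^ 2
      ≤ CI γ₁ γ₂ * ((ρ' a - ρ' b) * (a - b) + (ρ' a / a + ρ' b / b) * (d ^ 2 - (a - b) ^ 2) / 2)) := by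
  have hγ₂ : 0 < γ₂ := lt_of_lt_of_le h.gamma_pos h.gamma_le
  obtain ⟨hp1, hp2, hp3, hp4⟩ := CI_pieces h.gamma_pos h.gamma_le
  have hCI0 : (0:ℝ) ≤ CI γ₁ γ₂ := le_trans zero_le_one (one_le_CI h.gamma_pos h.gamma_le)
  have hab : 0 < a + b := by linarith
  have hd0 : 0 ≤ d := le_trans (by linarith) hd1
  have hpa0 : 0 ≤ ρ' a := rho'_nonneg h ha.le
  have hpb0 : 0 ≤ ρ' b := rho'_nonneg h hb
  have hmono : ρ' b ≤ ρ' a := rho'_mono h hb hba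
  have hVa0 : 0 ≤ ρ' a / a := div_nonneg hpa0 ha.le
  have hVb0 : 0 ≤ ρ' b / b := div_nonneg hpb0 hb
  have hVab0 : 0 ≤ ρ' (a + b) / (a + b) := div_nonneg (rho'_nonneg h hab.le) hab.le
  have hT1 : 0 ≤ (ρ' a - ρ' b) * (a - b) := mul_nonneg (by linarith) (by linarith)
  have hsq : (a - b) ^ 2 ≤ d ^ 2 := by
    linarith [mul_self_le_mul_self (by linarith : (0:ℝ) ≤ a - b) hd1,
      sq (a-b) ▸ (rfl : (a-b)^2 = (a-b)^2), sq_abs (a-b)]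
  have hY : 0 ≤ d ^ 2 - (a - b) ^ 2 := by linarith
  have hT2 : 0 ≤ (ρ' a / a + ρ' b / b) * (d ^ 2 - (a - b) ^ 2) / 2 :=
    div_nonneg (mul_nonneg (by linarith) hY) (by norm_num)
  have hG0 : 0 ≤ ρ' (a + b) / (a + b) * d ^ 2 := mul_nonneg hVab0 (sq_nonneg d)
  have hX' : 0 ≤ ρ' (a + b) / (a + b) * (a - b) ^ 2 := mul_nonneg hVab0 (sq_nonneg _)
  have hY' : 0 ≤ ρ' (a + b) / (a + b) * (d ^ 2 - (a - b) ^ 2) := mul_nonneg hVab0 hY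
  have h2p : (0:ℝ) ≤ (2:ℝ) ^ γ₂ := Real.rpow_nonneg (by norm_num) _
  have hVa2 := V_le h (s := a) (t := a + b) (K := 2) ha (by linarith) (by linarith) one_le_two
  rcases le_total a (3 * b) with h3 | h3
  · -- near case : a ≤ 3 b
    have hb0 : 0 < b := by linarith
    have hVb4 := V_le h (s := b) (t := a + b) (K := 4) hb0 (by linarith) (by linarith)
      (by norm_num)
    have du := diff_upper h hb0 hba h3
    have dl := diff_lower h hb0 hba h3
    have hC00 : (0:ℝ) ≤ γ₂ * 3 ^ γ₂ := by positivity
    have hc00 : 0 < γ₁ * min 1 ((3:ℝ) ^ (γ₁ - 1)) := c0_pos h.gamma_pos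
    have h4p : (0:ℝ) ≤ (4:ℝ) ^ γ₂ := Real.rpow_nonneg (by norm_num) _
    constructor
    · -- upper bound
      have m1 := mul_le_mul_of_nonneg_right du (by linarith : (0:ℝ) ≤ a - b)
      have m2 := mul_le_mul_of_nonneg_right hVb4.2 (sq_nonneg (a - b))
      have m3 := mul_le_mul_of_nonneg_left m2 hC00
      have e12 : (ρ' a - ρ' b) * (a - b)
          ≤ 4 * (γ₂ * 3 ^ γ₂) * (ρ' (a + b) / (a + b) * (a - b) ^ 2) := by linarith [m1, m3]
      have hsum : ρ' a / a + ρ' b / b ≤ 6 * (ρ' (a + b) / (a + b)) := by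
        linarith [hVa2.2, hVb4.2]
      have m4 := mul_le_mul_of_nonneg_right hsum hY
      have e3 : (ρ' a / a + ρ' b / b) * (d ^ 2 - (a - b) ^ 2) / 2
          ≤ 3 * (ρ' (a + b) / (a + b) * (d ^ 2 - (a - b) ^ 2)) := by linarith
      have m5 : 0 ≤ (γ₂ * 3 ^ γ₂) * (ρ' (a + b) / (a + b) * (d ^ 2 - (a - b) ^ 2)) :=
        mul_nonneg hC00 hY'
      have step : (ρ' a - ρ' b) * (a - b) + (ρ' a / a + ρ' b / b) * (d ^ 2 - (a - b) ^ 2) / 2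
          ≤ (4 * (γ₂ * 3 ^ γ₂) + 3) * (ρ' (a + b) / (a + b) * d ^ 2) := by
        linarith [e12, e3, m5, hX']
      have hle : 4 * (γ₂ * 3 ^ γ₂) + 3 ≤ CI γ₁ γ₂ := by unfold CI; linarith
      linarith [step, mul_le_mul_of_nonneg_right hle hG0]
    · -- lower bound
      have m1 := mul_le_mul_of_nonneg_right hVb4.1 (sq_nonneg (a - b))
      have m2 := mul_le_mul_of_nonneg_right dl (by linarith : (0:ℝ) ≤ a - b)
      have key1 : (γ₁ * min 1 ((3:ℝ) ^ (γ₁ - 1))) * (ρ' (a + b) / (a + b) * (a - b) ^ 2)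
          ≤ (4:ℝ) ^ γ₂ * ((ρ' a - ρ' b) * (a - b)) := by
        linarith [mul_le_mul_of_nonneg_left m1 hc00.le, mul_le_mul_of_nonneg_left m2 h4p]
      have e1 : ρ' (a + b) / (a + b) * (a - b) ^ 2
          ≤ ((4:ℝ) ^ γ₂ / (γ₁ * min 1 ((3:ℝ) ^ (γ₁ - 1)))) * ((ρ' a - ρ' b) * (a - b)) := by
        have hre : (4:ℝ) ^ γ₂ / (γ₁ * min 1 ((3:ℝ) ^ (γ₁ - 1))) * ((ρ' a - ρ' b) * (a - b)) =
            (4:ℝ) ^ γ₂ * ((ρ' a - ρ' b) * (a - b)) / (γ₁ * min 1 ((3:ℝ) ^ (γ₁ - 1))) := by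
          ring
        rw [hre, le_div_iff₀ hc00]
        linarith [key1]
      have f1 := mul_le_mul_of_nonneg_right hVa2.1 hY
      have f2 : 0 ≤ (2:ℝ) ^ γ₂ * (ρ' b / b) * (d ^ 2 - (a - b) ^ 2) :=
        mul_nonneg (mul_nonneg h2p hVb0) hY
      have e2 : ρ' (a + b) / (a + b) * (d ^ 2 - (a - b) ^ 2)
          ≤ (2 * (2:ℝ) ^ γ₂) * ((ρ' a / a + ρ' b / b) * (d ^ 2 - (a - b) ^ 2) / 2) := by
        linarith [f1, f2]
      have hle1 : (4:ℝ) ^ γ₂ / (γ₁ * min 1 ((3:ℝ) ^ (γ₁ - 1))) ≤ CI γ₁ γ₂ := by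
        unfold CI; linarith
      have hle2 : 2 * (2:ℝ) ^ γ₂ ≤ CI γ₁ γ₂ := by unfold CI; linarith
      have g1 := le_trans e1 (mul_le_mul_of_nonneg_right hle1 hT1)
      have g2 := le_trans e2 (mul_le_mul_of_nonneg_right hle2 hT2)
      linarith [g1, g2]
  · -- far case : 3 b ≤ a
    have hda : (2:ℝ)/3 * a ≤ d := by linarith
    have hd43 : d ≤ (4:ℝ)/3 * a := by linarith
    have hθ1 : (3:ℝ) ^ (-γ₁) < 1 := theta_lt_one h.gamma_pos
    have hθ0 : (0:ℝ) < (3:ℝ) ^ (-γ₁) := Real.rpow_pos_of_pos (by norm_num) _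
    have fb : ρ' b ≤ (3:ℝ) ^ (-γ₁) * ρ' a := far_bound h hb ha h3
    have fva : ρ' a / a * a ^ 2 = ρ' a * a := by field_simp
    constructor
    · -- upper
      have e1 : (ρ' a - ρ' b) * (a - b) ≤ ρ' a * a :=
        mul_le_mul (by linarith) (by linarith) (by linarith) hpa0
      have e2 : d ^ 2 - (a - b) ^ 2 ≤ 4 * (a * b) := by
        linarith [mul_self_le_mul_self hd0 hd2]
      have f1 : ρ' a / a * (a * b) = ρ' a * b := by field_simp
      have f2 : ρ' b / b * (a * b) = ρ' b * a := by
        rcases eq_or_lt_of_le hb with hb0 | hb0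
        · rw [← hb0]; simp [rho'_zero h]
        · field_simp
      have g1 := mul_le_mul_of_nonneg_left e2 (by linarith : (0:ℝ) ≤ ρ' a / a + ρ' b / b)
      have f5 : ρ' a * b ≤ ρ' a * (a/3) := mul_le_mul_of_nonneg_left (by linarith) hpa0
      have f6 : ρ' b * a ≤ ((3:ℝ) ^ (-γ₁) * ρ' a) * a := mul_le_mul_of_nonneg_right fb ha.le
      have f7 : ((3:ℝ) ^ (-γ₁) * ρ' a) * a ≤ ρ' a * a := by
        linarith [mul_nonneg (mul_nonneg (by linarith : (0:ℝ) ≤ 1 - (3:ℝ) ^ (-γ₁)) hpa0) ha.le]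
      have e3 : (ρ' a / a + ρ' b / b) * (d ^ 2 - (a - b) ^ 2) / 2 ≤ (8:ℝ)/3 * (ρ' a * a) := by
        linarith [g1, f1, f2, f5, f6, f7]
      have m := mul_le_mul_of_nonneg_right hVa2.2 (sq_nonneg a)
      have f3 : a ^ 2 ≤ 9/4 * d ^ 2 := by
        linarith [mul_self_le_mul_self (by linarith : (0:ℝ) ≤ 2/3 * a) hda]
      have m2 := mul_le_mul_of_nonneg_left f3 hVab0
      have e4 : ρ' a * a ≤ 9/2 * (ρ' (a + b) / (a + b) * d ^ 2) := by
        linarith [fva, m, m2]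
      have hle : (33:ℝ)/2 ≤ CI γ₁ γ₂ := by unfold CI; linarith
      linarith [e1, e3, e4, mul_le_mul_of_nonneg_right hle hG0]
    · -- lower
      have f1 := mul_le_mul_of_nonneg_right hVa2.1 (sq_nonneg d)
      have fd : d ^ 2 ≤ 16/9 * a ^ 2 := by
        linarith [mul_self_le_mul_self hd0 hd43]
      have f2 := mul_le_mul_of_nonneg_left fd hVa0
      have f2' := mul_le_mul_of_nonneg_left f2 h2p
      have f4 : (2:ℝ) ^ γ₂ * (ρ' a / a * a ^ 2) = (2:ℝ) ^ γ₂ * (ρ' a * a) := by rw [fva]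
      have e1 : ρ' (a + b) / (a + b) * d ^ 2 ≤ 16/9 * (2:ℝ) ^ γ₂ * (ρ' a * a) := by
        linarith [f1, f2', f4]
      have e2 : ((1 - (3:ℝ) ^ (-γ₁)) * ρ' a) * ((2:ℝ)/3 * a) ≤ (ρ' a - ρ' b) * (a - b) :=
        mul_le_mul (by linarith) (by linarith) (by linarith) (by linarith)
      have k1 : 8 * (2:ℝ) ^ γ₂ / (1 - (3:ℝ) ^ (-γ₁)) ≤ CI γ₁ γ₂ := by unfold CI; linarith
      have k2 : 8 * (2:ℝ) ^ γ₂ ≤ CI γ₁ γ₂ * (1 - (3:ℝ) ^ (-γ₁)) := by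
        rw [div_le_iff₀ (by linarith : (0:ℝ) < 1 - (3:ℝ) ^ (-γ₁))] at k1
        linarith
      have hle : (16:ℝ)/9 * (2:ℝ) ^ γ₂ ≤ CI γ₁ γ₂ * (1 - (3:ℝ) ^ (-γ₁)) * (2/3) := by
        linarith [k2, h2p]
      have m := mul_le_mul_of_nonneg_right hle (mul_nonneg hpa0 ha.le)
      have m2 := mul_le_mul_of_nonneg_left e2 hCI0
      linarith [e1, m, m2, mul_nonneg hCI0 hT2]

def CS (γ₁ γ₂ : ℝ) : ℝ :=
  (3 * (γ₂ * 3 ^ γ₂) + 1) ^ 2 + 3 + 12 * (4:ℝ) ^ γ₂ * 3 ^ γ₂ + Real.sqrt ((8:ℝ) ^ γ₂) +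
    45 / 2 + (16:ℝ)/9 * (2:ℝ) ^ γ₂ / (1 - Real.sqrt ((3:ℝ) ^ (-γ₁ - 1))) ^ 2

lemma sqrt3_lt_one {γ₁ : ℝ} (hγ₁ : 0 < γ₁) : Real.sqrt ((3:ℝ) ^ (-γ₁ - 1)) < 1 := by
  have h1 : (3:ℝ) ^ (-γ₁ - 1) < 1 :=
    Real.rpow_lt_one_of_one_lt_of_neg (by norm_num) (by linarith)
  calc Real.sqrt ((3:ℝ) ^ (-γ₁ - 1)) < Real.sqrt 1 :=
      (Real.sqrt_lt_sqrt (Real.rpow_nonneg (by norm_num) _) h1)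
    _ = 1 := Real.sqrt_one
  
lemma CS_pieces {γ₁ γ₂ : ℝ} (hγ₁ : 0 < γ₁) (hγ : γ₁ ≤ γ₂) :
    0 ≤ (3 * (γ₂ * 3 ^ γ₂) + 1) ^ 2 ∧ 0 ≤ 12 * (4:ℝ) ^ γ₂ * 3 ^ γ₂ ∧
    0 ≤ Real.sqrt ((8:ℝ) ^ γ₂) ∧
    0 < (16:ℝ)/9 * (2:ℝ) ^ γ₂ / (1 - Real.sqrt ((3:ℝ) ^ (-γ₁ - 1))) ^ 2 := by
  refine ⟨sq_nonneg _, by positivity, Real.sqrt_nonneg _, ?_⟩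
  apply div_pos (by positivity)
  have := sqrt3_lt_one hγ₁
  exact pow_pos (by linarith) 2

lemma one_le_CS {γ₁ γ₂ : ℝ} (hγ₁ : 0 < γ₁) (hγ : γ₁ ≤ γ₂) : 1 ≤ CS γ₁ γ₂ := by
  obtain ⟨h1, h2, h3, h4⟩ := CS_pieces hγ₁ hγ
  unfold CS; linarith

set_option maxHeartbeats 2000000 in
lemma S_scalar (h : IsEllipticNFun ρ ρ' ρ'' γ₁ γ₂) {a b d : ℝ} (hb : 0 ≤ b) (hba : b ≤ a)
    (ha : 0 < a) (hd1 : a - b ≤ d) (hd2 : d ≤ a + b) :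
    (ρ' a * a + ρ' b * b -
        Real.sqrt (ρ' a / a) * Real.sqrt (ρ' b / b) * (a ^ 2 + b ^ 2 - d ^ 2)
      ≤ CS γ₁ γ₂ * (ρ' (a + b) / (a + b) * d ^ 2)) ∧
    (ρ' (a + b) / (a + b) * d ^ 2
      ≤ CS γ₁ γ₂ * (ρ' a * a + ρ' b * b -
        Real.sqrt (ρ' a / a) * Real.sqrt (ρ' b / b) * (a ^ 2 + b ^ 2 - d ^ 2))) := by
  have hγ₂ : 0 < γ₂ := lt_of_lt_of_le h.gamma_pos h.gamma_le
  obtain ⟨hq1, hq2, hq3, hq4⟩ := CS_pieces h.gamma_pos h.gamma_le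
  have hCS0 : (0:ℝ) ≤ CS γ₁ γ₂ := le_trans zero_le_one (one_le_CS h.gamma_pos h.gamma_le)
  have hab : 0 < a + b := by linarith
  have hd0 : 0 ≤ d := le_trans (by linarith) hd1
  have hpa0 : 0 ≤ ρ' a := rho'_nonneg h ha.le
  have hpb0 : 0 ≤ ρ' b := rho'_nonneg h hb
  have hmono : ρ' b ≤ ρ' a := rho'_mono h hb hba
  have hVa0 : 0 ≤ ρ' a / a := div_nonneg hpa0 ha.le
  have hVb0 : 0 ≤ ρ' b / b := div_nonneg hpb0 hb
  have hVab0 : 0 ≤ ρ' (a + b) / (a + b) := div_nonneg (rho'_nonneg h hab.le) hab.le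
  have hsq : (a - b) ^ 2 ≤ d ^ 2 := by
    linarith [mul_self_le_mul_self (by linarith : (0:ℝ) ≤ a - b) hd1]
  have hYd : 0 ≤ d ^ 2 - (a - b) ^ 2 := by linarith
  have hG0 : 0 ≤ ρ' (a + b) / (a + b) * d ^ 2 := mul_nonneg hVab0 (sq_nonneg d)
  have hX' : 0 ≤ ρ' (a + b) / (a + b) * (a - b) ^ 2 := mul_nonneg hVab0 (sq_nonneg _)
  have hY' : 0 ≤ ρ' (a + b) / (a + b) * (d ^ 2 - (a - b) ^ 2) := mul_nonneg hVab0 hYd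
  have h2p : (0:ℝ) ≤ (2:ℝ) ^ γ₂ := Real.rpow_nonneg (by norm_num) _
  have h4p : (0:ℝ) ≤ (4:ℝ) ^ γ₂ := Real.rpow_nonneg (by norm_num) _
  have h3p : (0:ℝ) ≤ (3:ℝ) ^ γ₂ := Real.rpow_nonneg (by norm_num) _
  have hVa2 := V_le h (s := a) (t := a + b) (K := 2) ha (by linarith) (by linarith) one_le_two
  have hA0 : 0 ≤ ρ' a * a := mul_nonneg hpa0 ha.le
  have hB0 : 0 ≤ ρ' b * b := mul_nonneg hpb0 hb
  have hBA : ρ' b * b ≤ ρ' a * a := mul_le_mul hmono hba hb hpa0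
  set X := Real.sqrt (ρ' a * a) with hXdef
  set Y := Real.sqrt (ρ' b * b) with hYdef
  set W := Real.sqrt (ρ' a / a) * Real.sqrt (ρ' b / b) with hWdef
  have hX0 : 0 ≤ X := Real.sqrt_nonneg _
  have hY0 : 0 ≤ Y := Real.sqrt_nonneg _
  have hW0 : 0 ≤ W := mul_nonneg (Real.sqrt_nonneg _) (Real.sqrt_nonneg _)
  have hX2 : X ^ 2 = ρ' a * a := Real.sq_sqrt hA0
  have hY2 : Y ^ 2 = ρ' b * b := Real.sq_sqrt hB0
  have hYX : Y ≤ X := Real.sqrt_le_sqrt hBA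
  have hXa : X = Real.sqrt (ρ' a / a) * a := by
    rw [hXdef, show ρ' a * a = ρ' a / a * a ^ 2 from by field_simp,
      Real.sqrt_mul hVa0, Real.sqrt_sq ha.le]
  have hYb : Y = Real.sqrt (ρ' b / b) * b := by
    rcases eq_or_lt_of_le hb with hb0 | hb0
    · rw [hYdef, ← hb0]; simp
    · rw [hYdef, show ρ' b * b = ρ' b / b * b ^ 2 from by field_simp,
        Real.sqrt_mul hVb0, Real.sqrt_sq hb0.le]
  have hXY : X * Y = W * (a * b) := by rw [hXa, hYb, hWdef]; ring
  have hSS : ρ' a * a + ρ' b * b - W * (a ^ 2 + b ^ 2 - d ^ 2)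
      = (X - Y) ^ 2 + W * (d ^ 2 - (a - b) ^ 2) := by
    linear_combination (-1 : ℝ) * hX2 - hY2 + 2 * hXY
  have hS1 : 0 ≤ (X - Y) ^ 2 := sq_nonneg _
  have hS2' : 0 ≤ W * (d ^ 2 - (a - b) ^ 2) := mul_nonneg hW0 hYd
  have hAM : 2 * W ≤ ρ' a / a + ρ' b / b := by
    have h' : (Real.sqrt (ρ' a / a) - Real.sqrt (ρ' b / b)) ^ 2
        = ρ' a / a + ρ' b / b - 2 * W := by
      rw [hWdef]
      linear_combination Real.sq_sqrt hVa0 + Real.sq_sqrt hVb0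
    linarith [sq_nonneg (Real.sqrt (ρ' a / a) - Real.sqrt (ρ' b / b))]
  rw [hSS]
  rcases le_total a (3 * b) with h3 | h3
  · -- near case
    have hb0 : 0 < b := by linarith
    have hVb4 := V_le h (s := b) (t := a + b) (K := 4) hb0 (by linarith) (by linarith)
      (by norm_num)
    have du := diff_upper h hb0 hba h3
    have hC00 : (0:ℝ) ≤ γ₂ * 3 ^ γ₂ := by positivity
    have hBpos : 0 < ρ' b * b := mul_pos (rho'_pos h hb0) hb0
    have hVbb : ρ' b / b * b = ρ' b := by field_simp
    -- numerator bounds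
    have nl : ρ' b * (a - b) ≤ ρ' a * a - ρ' b * b := by
      have := mul_nonneg (sub_nonneg.2 hmono) ha.le
      linarith [this]
    have nu : ρ' a * a - ρ' b * b ≤ (3 * (γ₂ * 3 ^ γ₂) + 1) * (ρ' b * (a - b)) := by
      have m1 := mul_le_mul_of_nonneg_right du ha.le
      have m2 : (γ₂ * 3 ^ γ₂) * (ρ' b / b * (a - b)) * a
          ≤ (γ₂ * 3 ^ γ₂) * (ρ' b / b * (a - b)) * (3 * b) := by
        apply mul_le_mul_of_nonneg_left h3
        exact mul_nonneg hC00 (mul_nonneg hVb0 (by linarith))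
      have m3 : (γ₂ * 3 ^ γ₂) * (ρ' b / b * (a - b)) * (3 * b)
          = 3 * (γ₂ * 3 ^ γ₂) * (ρ' b * (a - b)) := by field_simp
      linarith [m1, m2, m3]
    -- W bounds
    have hsum : ρ' a / a + ρ' b / b ≤ 6 * (ρ' (a + b) / (a + b)) := by
      linarith [hVa2.2, hVb4.2]
    have hW3 : W ≤ 3 * (ρ' (a + b) / (a + b)) := by linarith
    have hW2 : W ^ 2 = (ρ' a / a) * (ρ' b / b) := by
      rw [hWdef, mul_pow, Real.sq_sqrt hVa0, Real.sq_sqrt hVb0]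
    have h8 : (8:ℝ) ^ γ₂ = (2:ℝ) ^ γ₂ * (4:ℝ) ^ γ₂ := by
      rw [← Real.mul_rpow (by norm_num) (by norm_num)]; norm_num
    have hq : (ρ' (a + b) / (a + b)) ^ 2 ≤ (8:ℝ) ^ γ₂ * W ^ 2 := by
      have := mul_le_mul hVa2.1 hVb4.1 hVab0 (mul_nonneg h2p hVa0)
      rw [hW2, h8]; linarith [this]
    have hW8 : ρ' (a + b) / (a + b) ≤ Real.sqrt ((8:ℝ) ^ γ₂) * W := by
      have hs := Real.sqrt_le_sqrt hq
      rwa [Real.sqrt_sq hVab0, Real.sqrt_mul (Real.rpow_nonneg (by norm_num) _),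
        Real.sqrt_sq hW0] at hs
    constructor
    · -- upper
      have quart : (0:ℝ) ≤ (X - Y) ^ 3 * (X + 3 * Y) :=
        mul_nonneg (pow_nonneg (by linarith) 3) (by linarith)
      have q2up : 4 * ((X - Y) ^ 2 * Y ^ 2) ≤ (X ^ 2 - Y ^ 2) ^ 2 := by linarith [quart]
      have hab0 : (0:ℝ) ≤ a - b := by linarith
      have hsqb : (X ^ 2 - Y ^ 2) ^ 2 ≤ ((3 * (γ₂ * 3 ^ γ₂) + 1) * (ρ' b * (a - b))) ^ 2 := by
        rw [hX2, hY2]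
        have hnn : (0:ℝ) ≤ ρ' b * (a - b) := mul_nonneg hpb0 hab0
        apply pow_le_pow_left₀ (by linarith) nu
      have hid2 : ((3 * (γ₂ * 3 ^ γ₂) + 1) * (ρ' b * (a - b))) ^ 2
          = (3 * (γ₂ * 3 ^ γ₂) + 1) ^ 2 * ((ρ' b * b) * (ρ' b / b * (a - b) ^ 2)) := by
        field_simp
      have c1 : (ρ' b * b) * (4 * (X - Y) ^ 2)
          ≤ (ρ' b * b) * ((3 * (γ₂ * 3 ^ γ₂) + 1) ^ 2 * (ρ' b / b * (a - b) ^ 2)) := by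
        have q2up' : 4 * ((X - Y) ^ 2 * (ρ' b * b)) ≤ (X ^ 2 - Y ^ 2) ^ 2 := by
          rw [← hY2]; linarith [quart]
        linarith [q2up', hsqb, hid2]
      have c2 : 4 * (X - Y) ^ 2
          ≤ (3 * (γ₂ * 3 ^ γ₂) + 1) ^ 2 * (ρ' b / b * (a - b) ^ 2) :=
        (mul_le_mul_iff_of_pos_left hBpos).1 c1
      have m2 := mul_le_mul_of_nonneg_right hVb4.2 (sq_nonneg (a - b))
      have m2' := mul_le_mul_of_nonneg_left m2 (sq_nonneg (3 * (γ₂ * 3 ^ γ₂) + 1))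
      have eS1 : (X - Y) ^ 2
          ≤ (3 * (γ₂ * 3 ^ γ₂) + 1) ^ 2 * (ρ' (a + b) / (a + b) * (a - b) ^ 2) := by
        linarith [c2, m2']
      have eS2 : W * (d ^ 2 - (a - b) ^ 2)
          ≤ 3 * (ρ' (a + b) / (a + b) * (d ^ 2 - (a - b) ^ 2)) := by
        have := mul_le_mul_of_nonneg_right hW3 hYd
        linarith
      have step : (X - Y) ^ 2 + W * (d ^ 2 - (a - b) ^ 2)
          ≤ ((3 * (γ₂ * 3 ^ γ₂) + 1) ^ 2 + 3) * (ρ' (a + b) / (a + b) * d ^ 2) := by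
        linarith [eS1, eS2, mul_nonneg (sq_nonneg (3 * (γ₂ * 3 ^ γ₂) + 1)) hY', hX']
      have hle : (3 * (γ₂ * 3 ^ γ₂) + 1) ^ 2 + 3 ≤ CS γ₁ γ₂ := by unfold CS; linarith
      linarith [step, mul_le_mul_of_nonneg_right hle hG0]
    · -- lower
      have quart2 : (0:ℝ) ≤ (X - Y) ^ 3 * (3 * X + Y) :=
        mul_nonneg (pow_nonneg (by linarith) 3) (by linarith)
      have q2lo : (X ^ 2 - Y ^ 2) ^ 2 ≤ 4 * (X ^ 2 * (X - Y) ^ 2) := by linarith [quart2]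
      have hsqb2 : (ρ' b * (a - b)) ^ 2 ≤ (X ^ 2 - Y ^ 2) ^ 2 := by
        rw [hX2, hY2]
        apply pow_le_pow_left₀ (mul_nonneg hpb0 (by linarith)) nl
      have hAB : ρ' a * a ≤ 3 * (3:ℝ) ^ γ₂ * (ρ' b * b) := by
        have r1 := (rpow_div_ratio h hb0 hba).2
        have r2 : ((a:ℝ)/b) ^ γ₂ ≤ (3:ℝ) ^ γ₂ :=
          Real.rpow_le_rpow (by positivity) ((div_le_iff₀ hb0).2 (by linarith)) hγ₂.le
        have r3 : ρ' a ≤ ρ' b * (3:ℝ) ^ γ₂ := by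
          have := mul_le_mul_of_nonneg_left r2 hpb0
          linarith [r1]
        have r4 := mul_le_mul_of_nonneg_right r3 ha.le
        have r5 : (ρ' b * (3:ℝ) ^ γ₂) * a ≤ (ρ' b * (3:ℝ) ^ γ₂) * (3 * b) :=
          mul_le_mul_of_nonneg_left h3 (mul_nonneg hpb0 h3p)
        linarith [r4, r5]
      have hid3 : (ρ' b * (a - b)) ^ 2 = (ρ' b * b) * (ρ' b / b * (a - b) ^ 2) := by
        field_simp
      have c1 : (ρ' b * b) * (ρ' b / b * (a - b) ^ 2)
          ≤ (ρ' b * b) * (12 * (3:ℝ) ^ γ₂ * (X - Y) ^ 2) := by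
        rw [← hid3]
        have m4 := mul_le_mul_of_nonneg_right hAB (sq_nonneg (X - Y))
        have q2lo' : (X ^ 2 - Y ^ 2) ^ 2 ≤ 4 * ((ρ' a * a) * (X - Y) ^ 2) := by
          rw [← hX2]; linarith [quart2]
        linarith [hsqb2, q2lo', m4]
      have c2 : ρ' b / b * (a - b) ^ 2 ≤ 12 * (3:ℝ) ^ γ₂ * (X - Y) ^ 2 :=
        (mul_le_mul_iff_of_pos_left hBpos).1 c1
      have m1 := mul_le_mul_of_nonneg_right hVb4.1 (sq_nonneg (a - b))
      have eX' : ρ' (a + b) / (a + b) * (a - b) ^ 2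
          ≤ (4:ℝ) ^ γ₂ * (12 * (3:ℝ) ^ γ₂ * (X - Y) ^ 2) := by
        have := mul_le_mul_of_nonneg_left c2 h4p
        linarith [m1]
      have eY' : ρ' (a + b) / (a + b) * (d ^ 2 - (a - b) ^ 2)
          ≤ Real.sqrt ((8:ℝ) ^ γ₂) * (W * (d ^ 2 - (a - b) ^ 2)) := by
        have := mul_le_mul_of_nonneg_right hW8 hYd
        linarith
      have hle1 : 12 * (4:ℝ) ^ γ₂ * 3 ^ γ₂ ≤ CS γ₁ γ₂ := by unfold CS; linarith
      have hle2 : Real.sqrt ((8:ℝ) ^ γ₂) ≤ CS γ₁ γ₂ := by unfold CS; linarith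
      have g1 : ρ' (a + b) / (a + b) * (a - b) ^ 2 ≤ CS γ₁ γ₂ * (X - Y) ^ 2 := by
        have := mul_le_mul_of_nonneg_right hle1 hS1
        linarith [eX']
      have g2 : ρ' (a + b) / (a + b) * (d ^ 2 - (a - b) ^ 2)
          ≤ CS γ₁ γ₂ * (W * (d ^ 2 - (a - b) ^ 2)) := by
        have := mul_le_mul_of_nonneg_right hle2 hS2'
        linarith [eY']
      linarith [g1, g2]
  · -- far case
    have hda : (2:ℝ)/3 * a ≤ d := by linarith
    have hd43 : d ≤ (4:ℝ)/3 * a := by linarith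
    have fb : ρ' b ≤ (3:ℝ) ^ (-γ₁) * ρ' a := far_bound h hb ha h3
    have h33 : (3:ℝ) ^ (-γ₁ - 1) = (3:ℝ) ^ (-γ₁) / 3 := by
      rw [Real.rpow_sub (by norm_num), Real.rpow_one]
    have hB3 : ρ' b * b ≤ (3:ℝ) ^ (-γ₁ - 1) * (ρ' a * a) := by
      have hθ0 : (0:ℝ) ≤ (3:ℝ) ^ (-γ₁) := (Real.rpow_pos_of_pos (by norm_num) _).le
      have := mul_le_mul fb (by linarith : b ≤ a / 3) hb (mul_nonneg hθ0 hpa0)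
      rw [h33]; linarith [this]
    have fva : ρ' a / a * a ^ 2 = ρ' a * a := by field_simp
    have e4 : ρ' a * a ≤ 9/2 * (ρ' (a + b) / (a + b) * d ^ 2) := by
      have m := mul_le_mul_of_nonneg_right hVa2.2 (sq_nonneg a)
      have f3 : a ^ 2 ≤ 9/4 * d ^ 2 := by
        linarith [mul_self_le_mul_self (by linarith : (0:ℝ) ≤ 2/3 * a) hda]
      have m2 := mul_le_mul_of_nonneg_left f3 hVab0
      linarith [fva, m, m2]
    constructor
    · -- upper
      have eS1 : (X - Y) ^ 2 ≤ ρ' a * a := by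
        rw [← hX2]
        have h2XY : (0:ℝ) ≤ 2 * X - Y := by linarith
        linarith [mul_nonneg hY0 h2XY]
      have e2 : d ^ 2 - (a - b) ^ 2 ≤ 4 * (a * b) := by
        linarith [mul_self_le_mul_self hd0 hd2]
      have eS2 : W * (d ^ 2 - (a - b) ^ 2) ≤ 4 * (ρ' a * a) := by
        have m1 := mul_le_mul_of_nonneg_left e2 hW0
        have m2 : X * Y ≤ X * X := mul_le_mul_of_nonneg_left hYX hX0
        have hXX : X * X = ρ' a * a := by rw [← hX2]; ring
        linarith [m1, hXY, m2, hXX]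
      have hle : (45:ℝ)/2 ≤ CS γ₁ γ₂ := by unfold CS; linarith
      have step : (X - Y) ^ 2 + W * (d ^ 2 - (a - b) ^ 2)
          ≤ 45/2 * (ρ' (a + b) / (a + b) * d ^ 2) := by linarith [eS1, eS2, e4]
      linarith [step, mul_le_mul_of_nonneg_right hle hG0]
    · -- lower
      have hs3 : Real.sqrt ((3:ℝ) ^ (-γ₁ - 1)) < 1 := sqrt3_lt_one h.gamma_pos
      have hs30 : 0 ≤ Real.sqrt ((3:ℝ) ^ (-γ₁ - 1)) := Real.sqrt_nonneg _
      have hYsX : Y ≤ Real.sqrt ((3:ℝ) ^ (-γ₁ - 1)) * X := by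
        calc Y ≤ Real.sqrt ((3:ℝ) ^ (-γ₁ - 1) * (ρ' a * a)) := Real.sqrt_le_sqrt hB3
          _ = Real.sqrt ((3:ℝ) ^ (-γ₁ - 1)) * X := by
            rw [hXdef, Real.sqrt_mul (Real.rpow_nonneg (by norm_num) _)]
      have eS1 : (1 - Real.sqrt ((3:ℝ) ^ (-γ₁ - 1))) ^ 2 * (ρ' a * a) ≤ (X - Y) ^ 2 := by
        have h1 : 0 ≤ (1 - Real.sqrt ((3:ℝ) ^ (-γ₁ - 1))) * X :=
          mul_nonneg (by linarith) hX0
        have h2 : (1 - Real.sqrt ((3:ℝ) ^ (-γ₁ - 1))) * X ≤ X - Y := by linarith [hYsX]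
        have h3' := pow_le_pow_left₀ h1 h2 2
        rw [← hX2]
        linarith [h3']
      have e1 : ρ' (a + b) / (a + b) * d ^ 2 ≤ 16/9 * (2:ℝ) ^ γ₂ * (ρ' a * a) := by
        have f1 := mul_le_mul_of_nonneg_right hVa2.1 (sq_nonneg d)
        have fd : d ^ 2 ≤ 16/9 * a ^ 2 := by
          linarith [mul_self_le_mul_self hd0 hd43]
        have f2 := mul_le_mul_of_nonneg_left fd hVa0
        have f2' := mul_le_mul_of_nonneg_left f2 h2p
        have f4 : (2:ℝ) ^ γ₂ * (ρ' a / a * a ^ 2) = (2:ℝ) ^ γ₂ * (ρ' a * a) := by rw [fva]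
        linarith [f1, f2', f4]
      have k1 : (16:ℝ)/9 * (2:ℝ) ^ γ₂ / (1 - Real.sqrt ((3:ℝ) ^ (-γ₁ - 1))) ^ 2
          ≤ CS γ₁ γ₂ := by unfold CS; linarith
      have k2 : (16:ℝ)/9 * (2:ℝ) ^ γ₂
          ≤ CS γ₁ γ₂ * (1 - Real.sqrt ((3:ℝ) ^ (-γ₁ - 1))) ^ 2 := by
        have hpos2 : (0:ℝ) < (1 - Real.sqrt ((3:ℝ) ^ (-γ₁ - 1))) ^ 2 :=
          pow_pos (by linarith [sqrt3_lt_one h.gamma_pos]) 2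
        rw [div_le_iff₀ hpos2] at k1
        linarith
      have m1 := mul_le_mul_of_nonneg_right k2 hA0
      have m2 := mul_le_mul_of_nonneg_left eS1 hCS0
      linarith [e1, m1, m2, mul_nonneg hCS0 hS2']

lemma Cmp_mono {c c' x y : ℝ} (hc : Cmp c x y) (hcc : c ≤ c') (hx : 0 ≤ x) (hy : 0 ≤ y) :
    Cmp c' x y := by
  obtain ⟨h1, h2⟩ := hc
  exact ⟨le_trans h1 (mul_le_mul_of_nonneg_right hcc hy),
    le_trans h2 (mul_le_mul_of_nonneg_right hcc hx)⟩

lemma Cmp_nonneg {c x y : ℝ} (hc : Cmp c x y) (hc0 : 0 < c) (hy : 0 ≤ y) : 0 ≤ x := by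
  obtain ⟨_, h2⟩ := hc
  nlinarith

lemma Cmp_trans {c₁ c₂ x y z : ℝ} (h1 : Cmp c₁ x z) (h2 : Cmp c₂ y z)
    (hc1 : 0 ≤ c₁) (hc2 : 0 ≤ c₂) : Cmp (c₁ * c₂) x y := by
  obtain ⟨a1, a2⟩ := h1
  obtain ⟨b1, b2⟩ := h2
  constructor
  · calc x ≤ c₁ * z := a1
      _ ≤ c₁ * (c₂ * y) := mul_le_mul_of_nonneg_left b2 hc1
      _ = c₁ * c₂ * y := by ring
  · calc y ≤ c₂ * z := b1
      _ ≤ c₂ * (c₁ * x) := mul_le_mul_of_nonneg_left a2 hc2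
      _ = c₁ * c₂ * x := by ring

lemma main_reduced (h : IsEllipticNFun ρ ρ' ρ'' γ₁ γ₂) {a b d : ℝ} (hb : 0 ≤ b) (hba : b ≤ a)
    (ha : 0 < a) (hd1 : a - b ≤ d) (hd2 : d ≤ a + b) :
    Cmp (CI γ₁ γ₂)
      (ρ' a / a * a ^ 2 + ρ' b / b * b ^ 2 -
        (ρ' a / a + ρ' b / b) * ((a ^ 2 + b ^ 2 - d ^ 2) / 2))
      (ρ' (a + b) / (a + b) * d ^ 2) ∧
    Cmp (CS γ₁ γ₂)
      (ρ' a / a * a ^ 2 + ρ' b / b * b ^ 2 -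
        2 * (Real.sqrt (ρ' a / a) * Real.sqrt (ρ' b / b)) * ((a ^ 2 + b ^ 2 - d ^ 2) / 2))
      (ρ' (a + b) / (a + b) * d ^ 2) := by
  have hVaa : ρ' a / a * a = ρ' a := by field_simp
  have hVbb : ρ' b / b * b = ρ' b := by
    rcases eq_or_lt_of_le hb with hb0 | hb0
    · rw [← hb0]; simp [rho'_zero h]
    · field_simp
  have hIeq : ρ' a / a * a ^ 2 + ρ' b / b * b ^ 2 -
        (ρ' a / a + ρ' b / b) * ((a ^ 2 + b ^ 2 - d ^ 2) / 2)
      = (ρ' a - ρ' b) * (a - b) + (ρ' a / a + ρ' b / b) * (d ^ 2 - (a - b) ^ 2) / 2 := by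
    linear_combination (a - b) * hVaa - (a - b) * hVbb
  have hSeq : ρ' a / a * a ^ 2 + ρ' b / b * b ^ 2 -
        2 * (Real.sqrt (ρ' a / a) * Real.sqrt (ρ' b / b)) * ((a ^ 2 + b ^ 2 - d ^ 2) / 2)
      = ρ' a * a + ρ' b * b -
        Real.sqrt (ρ' a / a) * Real.sqrt (ρ' b / b) * (a ^ 2 + b ^ 2 - d ^ 2) := by
    linear_combination a * hVaa + b * hVbb
  constructor
  · rw [Cmp, hIeq]
    exact I_scalar h hb hba ha hd1 hd2
  · rw [Cmp, hSeq]
    exact S_scalar h hb hba ha hd1 hd2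

lemma main_sym (h : IsEllipticNFun ρ ρ' ρ'' γ₁ γ₂) {a b d : ℝ} (ha : 0 ≤ a) (hb : 0 ≤ b)
    (hab : 0 < a + b) (hd1 : a - b ≤ d) (hd1' : b - a ≤ d) (hd2 : d ≤ a + b) :
    Cmp (CI γ₁ γ₂)
      (ρ' a / a * a ^ 2 + ρ' b / b * b ^ 2 -
        (ρ' a / a + ρ' b / b) * ((a ^ 2 + b ^ 2 - d ^ 2) / 2))
      (ρ' (a + b) / (a + b) * d ^ 2) ∧
    Cmp (CS γ₁ γ₂)
      (ρ' a / a * a ^ 2 + ρ' b / b * b ^ 2 -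
        2 * (Real.sqrt (ρ' a / a) * Real.sqrt (ρ' b / b)) * ((a ^ 2 + b ^ 2 - d ^ 2) / 2))
      (ρ' (a + b) / (a + b) * d ^ 2) := by
  rcases le_total b a with hba | hba
  · exact main_reduced h hb hba (by linarith) hd1 hd2
  · obtain ⟨c1, c2⟩ := main_reduced h ha hba (by linarith) hd1' (by linarith)
    have e1 : ρ' b / b * b ^ 2 + ρ' a / a * a ^ 2 -
        (ρ' b / b + ρ' a / a) * ((b ^ 2 + a ^ 2 - d ^ 2) / 2)
        = ρ' a / a * a ^ 2 + ρ' b / b * b ^ 2 -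
        (ρ' a / a + ρ' b / b) * ((a ^ 2 + b ^ 2 - d ^ 2) / 2) := by ring
    have e2 : ρ' b / b * b ^ 2 + ρ' a / a * a ^ 2 -
        2 * (Real.sqrt (ρ' b / b) * Real.sqrt (ρ' a / a)) * ((b ^ 2 + a ^ 2 - d ^ 2) / 2)
        = ρ' a / a * a ^ 2 + ρ' b / b * b ^ 2 -
        2 * (Real.sqrt (ρ' a / a) * Real.sqrt (ρ' b / b)) * ((a ^ 2 + b ^ 2 - d ^ 2) / 2) := by
      ring
    have e3 : b + a = a + b := by ring
    rw [e1, e3] at c1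
    rw [e2, e3] at c2
    exact ⟨c1, c2⟩

lemma shift_cmp (h : IsEllipticNFun ρ ρ' ρ'' γ₁ γ₂) {a b d : ℝ} (ha : 0 ≤ a) (hb : 0 ≤ b)
    (hab : 0 < a + b) (hd0 : 0 ≤ d) (hbd : b ≤ a + d) (hd2 : d ≤ a + b) :
    Cmp ((2 + (2:ℝ) ^ γ₂) * (4 * (2:ℝ) ^ γ₂ + 1)) (shift ρ' a d)
      (ρ' (a + b) / (a + b) * d ^ 2) := by
  have h2p : (0:ℝ) ≤ (2:ℝ) ^ γ₂ := Real.rpow_nonneg (by norm_num) _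
  rcases eq_or_lt_of_le hd0 with hd | hd
  · rw [← hd]
    constructor
    · simp [shift]
    · simp [shift]
  have hadp : 0 < a + d := by linarith
  have hup := shift_upper h ha hd0
  have hlo := shift_lower h ha hd0
  have hsh0 : 0 ≤ shift ρ' a d := by
    have h4 : 0 ≤ (2:ℝ) ^ γ₂ * 4 * shift ρ' a d :=
      le_trans (mul_nonneg (div_nonneg (rho'_nonneg h hadp.le) hadp.le) (sq_nonneg d)) hlo
    by_contra hneg
    push_neg at hneg
    nlinarith [mul_pos (by positivity : (0:ℝ) < (2:ℝ) ^ γ₂ * 4) (neg_pos.2 hneg)]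
  have hG0 : 0 ≤ ρ' (a + b) / (a + b) * d ^ 2 :=
    mul_nonneg (div_nonneg (rho'_nonneg h hab.le) hab.le) (sq_nonneg d)
  have key : ρ' (a + d) / (a + d) ≤ (2 + (2:ℝ) ^ γ₂) * (ρ' (a + b) / (a + b)) ∧
      ρ' (a + b) / (a + b) ≤ (2 + (2:ℝ) ^ γ₂) * (ρ' (a + d) / (a + d)) := by
    rcases le_total (a + d) (a + b) with hc | hc
    · have hV := V_le h (s := a + d) (t := a + b) (K := 2) hadp hc (by linarith) one_le_two
      have h1 : 0 ≤ ρ' (a + d) / (a + d) := div_nonneg (rho'_nonneg h hadp.le) hadp.le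
      constructor
      · linarith [hV.2, mul_nonneg h2p (div_nonneg (rho'_nonneg h hab.le) hab.le)]
      · nlinarith [hV.1, h1]
    · have hV := V_le h (s := a + b) (t := a + d) (K := 2) hab hc (by linarith) one_le_two
      have h1 : 0 ≤ ρ' (a + b) / (a + b) := div_nonneg (rho'_nonneg h hab.le) hab.le
      constructor
      · nlinarith [hV.1, h1]
      · linarith [hV.2, mul_nonneg h2p (div_nonneg (rho'_nonneg h hadp.le) hadp.le)]
  constructor
  · calc shift ρ' a d ≤ ρ' (a + d) / (a + d) * d ^ 2 := hup
      _ ≤ ((2 + (2:ℝ) ^ γ₂) * (ρ' (a + b) / (a + b))) * d ^ 2 :=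
          mul_le_mul_of_nonneg_right key.1 (sq_nonneg d)
      _ ≤ (2 + (2:ℝ) ^ γ₂) * (4 * (2:ℝ) ^ γ₂ + 1) * (ρ' (a + b) / (a + b) * d ^ 2) := by
          nlinarith [hG0, h2p, mul_nonneg h2p hG0]
  · have s1 : ρ' (a + b) / (a + b) * d ^ 2
        ≤ ((2 + (2:ℝ) ^ γ₂) * (ρ' (a + d) / (a + d))) * d ^ 2 :=
      mul_le_mul_of_nonneg_right key.2 (sq_nonneg d)
    have s2 : (2 + (2:ℝ) ^ γ₂) * (ρ' (a + d) / (a + d) * d ^ 2)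
        ≤ (2 + (2:ℝ) ^ γ₂) * ((2:ℝ) ^ γ₂ * 4 * shift ρ' a d) :=
      mul_le_mul_of_nonneg_left hlo (by linarith)
    have s3 : (2 + (2:ℝ) ^ γ₂) * ((2:ℝ) ^ γ₂ * 4 * shift ρ' a d)
        ≤ (2 + (2:ℝ) ^ γ₂) * (4 * (2:ℝ) ^ γ₂ + 1) * shift ρ' a d := by
      nlinarith [hsh0, h2p, mul_nonneg h2p hsh0]
    linarith

lemma cmp_rho2 (h : IsEllipticNFun ρ ρ' ρ'' γ₁ γ₂) {c x t D : ℝ} (ht : 0 < t) (hD : 0 ≤ D)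
    (hx : Cmp c x (ρ' t / t * D)) (hc : 0 < c) :
    Cmp (c * (γ₂ + 1 / γ₁)) x (ρ'' t * D) := by
  obtain ⟨hE1, hE2⟩ := h.elliptic t ht
  have hγ₂ : 0 < γ₂ := lt_of_lt_of_le h.gamma_pos h.gamma_le
  have hp0 : 0 ≤ ρ' t := rho'_nonneg h ht.le
  have hV0 : 0 ≤ ρ' t / t := div_nonneg hp0 ht.le
  have hr0 : 0 ≤ ρ'' t := by nlinarith [h.gamma_pos]
  have hG0 : 0 ≤ ρ' t / t * D := mul_nonneg hV0 hD
  have hx0 : 0 ≤ x := Cmp_nonneg hx hc hG0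
  have h1 : ρ'' t ≤ γ₂ * (ρ' t / t) := by
    rw [show γ₂ * (ρ' t / t) = γ₂ * ρ' t / t from by ring, le_div_iff₀ ht]
    linarith
  have h2 : ρ' t / t ≤ 1 / γ₁ * ρ'' t := by
    have hVγ : γ₁ * (ρ' t / t) ≤ ρ'' t := by
      rw [show γ₁ * (ρ' t / t) = γ₁ * ρ' t / t from by ring, div_le_iff₀ ht]
      linarith
    rw [show (1:ℝ) / γ₁ * ρ'' t = ρ'' t / γ₁ from by ring, le_div_iff₀ h.gamma_pos]
    linarith
  have hub : ρ'' t * D ≤ γ₂ * (ρ' t / t * D) := by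
    have := mul_le_mul_of_nonneg_right h1 hD
    linarith
  constructor
  · calc x ≤ c * (ρ' t / t * D) := hx.1
      _ ≤ c * (1 / γ₁ * ρ'' t * D) :=
          mul_le_mul_of_nonneg_left (mul_le_mul_of_nonneg_right h2 hD) hc.le
      _ = c * (1 / γ₁) * (ρ'' t * D) := by ring
      _ ≤ c * (γ₂ + 1 / γ₁) * (ρ'' t * D) := by
          apply mul_le_mul_of_nonneg_right _ (mul_nonneg hr0 hD)
          have : 0 ≤ c * γ₂ := mul_nonneg hc.le hγ₂.le
          nlinarith
  · calc ρ'' t * D ≤ γ₂ * (ρ' t / t * D) := hub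
      _ ≤ γ₂ * (c * x) := mul_le_mul_of_nonneg_left hx.2 hγ₂.le
      _ = γ₂ * c * x := by ring
      _ ≤ c * (γ₂ + 1 / γ₁) * x := by
          apply mul_le_mul_of_nonneg_right _ hx0
          have : 0 ≤ c * (1 / γ₁) := mul_nonneg hc.le (one_div_nonneg.2 h.gamma_pos.le)
          linarith

lemma inner_expand {N n : ℕ} (ρ' : ℝ → ℝ) (P Q : EuclideanSpace ℝ (Fin N × Fin n)) :
    ⟪Arho N n ρ' P - Arho N n ρ' Q, P - Q⟫ =
      ρ' ‖P‖ / ‖P‖ * ‖P‖ ^ 2 + ρ' ‖Q‖ / ‖Q‖ * ‖Q‖ ^ 2 -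
        (ρ' ‖P‖ / ‖P‖ + ρ' ‖Q‖ / ‖Q‖) * ⟪P, Q⟫ := by
  unfold Arho
  rw [inner_sub_left, inner_sub_right, inner_sub_right, real_inner_smul_left,
    real_inner_smul_left, real_inner_smul_left, real_inner_smul_left,
    real_inner_self_eq_norm_sq, real_inner_self_eq_norm_sq, real_inner_comm Q P]
  ring

lemma F_expand {N n : ℕ} (ρ' : ℝ → ℝ) (P Q : EuclideanSpace ℝ (Fin N × Fin n))
    (h0a : 0 ≤ ρ' ‖P‖ / ‖P‖) (h0b : 0 ≤ ρ' ‖Q‖ / ‖Q‖) :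
    ‖Frho N n ρ' P - Frho N n ρ' Q‖ ^ 2 =
      ρ' ‖P‖ / ‖P‖ * ‖P‖ ^ 2 + ρ' ‖Q‖ / ‖Q‖ * ‖Q‖ ^ 2 -
        2 * (Real.sqrt (ρ' ‖P‖ / ‖P‖) * Real.sqrt (ρ' ‖Q‖ / ‖Q‖)) * ⟪P, Q⟫ := by
  rw [norm_sub_sq_real]
  unfold Frho
  rw [norm_smul, norm_smul, real_inner_smul_left, real_inner_smul_right,
    Real.norm_eq_abs, Real.norm_eq_abs, abs_of_nonneg (Real.sqrt_nonneg _),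
    abs_of_nonneg (Real.sqrt_nonneg _), mul_pow, mul_pow, Real.sq_sqrt h0a,
    Real.sq_sqrt h0b]
  ring

end Basic

/-- For an elliptic N-function `ρ` there is `c ≥ 1`, depending only on the characteristics,
such that `(A^ρ(P) - A^ρ(Q)) : (P - Q)`, `|F^ρ(P) - F^ρ(Q)|²` and `ρ_{|P|}(|P - Q|)` are
pairwise comparable with constant `c`, and, whenever `|P| + |Q| > 0`, each is comparable
with constant `c` to `ρ''(|P| + |Q|) |P - Q|²`. -/
theorem hammer (γ₁ γ₂ : ℝ) (hγ₁ : 0 < γ₁) (hγ : γ₁ ≤ γ₂) :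
    ∃ c : ℝ, 1 ≤ c ∧
      ∀ ρ ρ' ρ'' : ℝ → ℝ, IsEllipticNFun ρ ρ' ρ'' γ₁ γ₂ →
        ∀ (N n : ℕ) (P Q : EuclideanSpace ℝ (Fin N × Fin n)),
          Cmp c ⟪Arho N n ρ' P - Arho N n ρ' Q, P - Q⟫
              (‖Frho N n ρ' P - Frho N n ρ' Q‖ ^ 2) ∧
          Cmp c ⟪Arho N n ρ' P - Arho N n ρ' Q, P - Q⟫
              (shift ρ' ‖P‖ ‖P - Q‖) ∧
          Cmp c (‖Frho N n ρ' P - Frho N n ρ' Q‖ ^ 2) (shift ρ' ‖P‖ ‖P - Q‖) ∧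
          (0 < ‖P‖ + ‖Q‖ →
            Cmp c ⟪Arho N n ρ' P - Arho N n ρ' Q, P - Q⟫
                (ρ'' (‖P‖ + ‖Q‖) * ‖P - Q‖ ^ 2) ∧
            Cmp c (‖Frho N n ρ' P - Frho N n ρ' Q‖ ^ 2)
                (ρ'' (‖P‖ + ‖Q‖) * ‖P - Q‖ ^ 2) ∧
            Cmp c (shift ρ' ‖P‖ ‖P - Q‖) (ρ'' (‖P‖ + ‖Q‖) * ‖P - Q‖ ^ 2)) := by
  have hγ₂ : 0 < γ₂ := lt_of_lt_of_le hγ₁ hγ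
  have h2p : (0:ℝ) ≤ (2:ℝ) ^ γ₂ := Real.rpow_nonneg (by norm_num) _
  set B := CI γ₁ γ₂ + CS γ₁ γ₂ + (2 + (2:ℝ) ^ γ₂) * (4 * (2:ℝ) ^ γ₂ + 1) + (γ₂ + 1 / γ₁)
    with hBdef
  have hCsh0 : (0:ℝ) ≤ (2 + (2:ℝ) ^ γ₂) * (4 * (2:ℝ) ^ γ₂ + 1) := by positivity
  have hCshpos : (0:ℝ) < (2 + (2:ℝ) ^ γ₂) * (4 * (2:ℝ) ^ γ₂ + 1) := by positivity
  have hγγ : (0:ℝ) < γ₂ + 1 / γ₁ := by positivity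
  have hCI1 := one_le_CI hγ₁ hγ
  have hCS1 := one_le_CS hγ₁ hγ
  have hB1 : 1 ≤ B := by rw [hBdef]; linarith
  have hB0 : 0 ≤ B := by linarith
  have hCIB : CI γ₁ γ₂ ≤ B := by rw [hBdef]; linarith
  have hCSB : CS γ₁ γ₂ ≤ B := by rw [hBdef]; linarith
  have hCshB : (2 + (2:ℝ) ^ γ₂) * (4 * (2:ℝ) ^ γ₂ + 1) ≤ B := by rw [hBdef]; linarith
  have hγγB : γ₂ + 1 / γ₁ ≤ B := by rw [hBdef]; linarith
  refine ⟨B * B, one_le_mul_of_one_le_of_one_le hB1 hB1, fun ρ ρ' ρ'' h N n P Q => ?_⟩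
  rcases eq_or_lt_of_le (add_nonneg (norm_nonneg P) (norm_nonneg Q)) with hz | hab
  · -- P = Q = 0
    have hP : P = 0 := norm_eq_zero.1 (by have := norm_nonneg P; have := norm_nonneg Q; linarith)
    have hQ : Q = 0 := norm_eq_zero.1 (by have := norm_nonneg P; have := norm_nonneg Q; linarith)
    subst hP; subst hQ
    refine ⟨?_, ?_, ?_, fun habs => ?_⟩
    · constructor <;> simp [Arho, Frho, Cmp]
    · constructor <;> simp [Arho, Frho, Cmp, shift]
    · constructor <;> simp [Arho, Frho, Cmp, shift]
    · simp at habs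
  · -- main case
    have ha0 : (0:ℝ) ≤ ‖P‖ := norm_nonneg P
    have hb0 : (0:ℝ) ≤ ‖Q‖ := norm_nonneg Q
    have t1 : ‖P‖ - ‖Q‖ ≤ ‖P - Q‖ := norm_sub_norm_le P Q
    have t1' : ‖Q‖ - ‖P‖ ≤ ‖P - Q‖ := by
      have := norm_sub_norm_le Q P
      rwa [norm_sub_rev] at this
    have t2 : ‖P - Q‖ ≤ ‖P‖ + ‖Q‖ := norm_sub_le P Q
    have hp : ⟪P, Q⟫ = (‖P‖ ^ 2 + ‖Q‖ ^ 2 - ‖P - Q‖ ^ 2) / 2 := by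
      have := norm_sub_sq_real P Q
      linarith
    have hVa0 : 0 ≤ ρ' ‖P‖ / ‖P‖ := div_nonneg (rho'_nonneg h ha0) ha0
    have hVb0 : 0 ≤ ρ' ‖Q‖ / ‖Q‖ := div_nonneg (rho'_nonneg h hb0) hb0
    have hIval : ⟪Arho N n ρ' P - Arho N n ρ' Q, P - Q⟫ =
        ρ' ‖P‖ / ‖P‖ * ‖P‖ ^ 2 + ρ' ‖Q‖ / ‖Q‖ * ‖Q‖ ^ 2 -
          (ρ' ‖P‖ / ‖P‖ + ρ' ‖Q‖ / ‖Q‖) * ((‖P‖ ^ 2 + ‖Q‖ ^ 2 - ‖P - Q‖ ^ 2) / 2) := by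
      rw [inner_expand, hp]
    have hFval : ‖Frho N n ρ' P - Frho N n ρ' Q‖ ^ 2 =
        ρ' ‖P‖ / ‖P‖ * ‖P‖ ^ 2 + ρ' ‖Q‖ / ‖Q‖ * ‖Q‖ ^ 2 -
          2 * (Real.sqrt (ρ' ‖P‖ / ‖P‖) * Real.sqrt (ρ' ‖Q‖ / ‖Q‖)) *
            ((‖P‖ ^ 2 + ‖Q‖ ^ 2 - ‖P - Q‖ ^ 2) / 2) := by
      rw [F_expand ρ' P Q hVa0 hVb0, hp]
    obtain ⟨cmpI, cmpS⟩ := main_sym h ha0 hb0 hab t1 t1' t2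
    rw [← hIval] at cmpI
    rw [← hFval] at cmpS
    have cmpSh := shift_cmp h ha0 hb0 hab (norm_nonneg _) (by linarith) t2
    have hG0 : 0 ≤ ρ' (‖P‖ + ‖Q‖) / (‖P‖ + ‖Q‖) * ‖P - Q‖ ^ 2 :=
      mul_nonneg (div_nonneg (rho'_nonneg h hab.le) hab.le) (sq_nonneg _)
    have hCIpos : 0 < CI γ₁ γ₂ := lt_of_lt_of_le one_pos hCI1
    have hCSpos : 0 < CS γ₁ γ₂ := lt_of_lt_of_le one_pos hCS1
    have hI0 : 0 ≤ ⟪Arho N n ρ' P - Arho N n ρ' Q, P - Q⟫ := Cmp_nonneg cmpI hCIpos hG0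
    have hF0 : 0 ≤ ‖Frho N n ρ' P - Frho N n ρ' Q‖ ^ 2 := sq_nonneg _
    have hsh0 : 0 ≤ shift ρ' ‖P‖ ‖P - Q‖ := Cmp_nonneg cmpSh hCshpos hG0
    have cmpI' := Cmp_mono cmpI hCIB hI0 hG0
    have cmpS' := Cmp_mono cmpS hCSB hF0 hG0
    have cmpSh' := Cmp_mono cmpSh hCshB hsh0 hG0
    have hr0 : 0 ≤ ρ'' (‖P‖ + ‖Q‖) := by
      have hE1 := (h.elliptic (‖P‖ + ‖Q‖) hab).1
      nlinarith [rho'_nonneg h hab.le, hγ₁]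
    have hrD0 : 0 ≤ ρ'' (‖P‖ + ‖Q‖) * ‖P - Q‖ ^ 2 := mul_nonneg hr0 (sq_nonneg _)
    have hBB : B * (γ₂ + 1 / γ₁) ≤ B * B := mul_le_mul_of_nonneg_left hγγB hB0
    have hBpos : 0 < B := lt_of_lt_of_le one_pos hB1
    refine ⟨Cmp_trans cmpI' cmpS' hB0 hB0, Cmp_trans cmpI' cmpSh' hB0 hB0,
      Cmp_trans cmpS' cmpSh' hB0 hB0, fun _ => ?_⟩
    exact ⟨Cmp_mono (cmp_rho2 h hab (sq_nonneg ‖P - Q‖) cmpI' hBpos) hBB hI0 hrD0,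
      Cmp_mono (cmp_rho2 h hab (sq_nonneg ‖P - Q‖) cmpS' hBpos) hBB hF0 hrD0,
      Cmp_mono (cmp_rho2 h hab (sq_nonneg ‖P - Q‖) cmpSh' hBpos) hBB hsh0 hrD0⟩
end
end
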